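/- arXiv:2308.13255 — 6 statements merged into one kernel-verified Lean document; each statement's English description precedes it below -/
import Mathlib

section
/- For all r ≥ 2, r²/2 < R̂_r(P_4) ≤ (r+1)(2r+1), where P_4 is the graph path on 4 vertices. -/
open Finset

/-- A `k`-uniform hypergraph, given by its (finite) edge set; vertices are natural numbers. -/
def IsUniform (k : ℕ) (G : Finset (Finset ℕ)) : Prop :=
  ∀ e ∈ G, e.card = k

/-- The vertex set of a hypergraph. -/
def hVerts (G : Finset (Finset ℕ)) : Finset ℕ := G.biUnion id

/-- `G` contains a copy of `H`, i.e. a subgraph isomorphic to `H`. -/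
def IsCopy (H G : Finset (Finset ℕ)) : Prop :=
  ∃ f : ℕ → ℕ, Set.InjOn f ↑(hVerts H) ∧ ∀ e ∈ H, e.image f ∈ G

/-- `G →_r H`: every `r`-coloring of the edges of `G` yields a monochromatic copy of `H`. -/
def Arrows (r : ℕ) (G H : Finset (Finset ℕ)) : Prop :=
  ∀ χ : Finset ℕ → Fin r, ∃ c : Fin r, IsCopy H (G.filter fun e => χ e = c)

/-- The `r`-color size-Ramsey number of `H`: the minimum number of edges of a
`k`-uniform hypergraph `G` with `G →_r H`. -/
noncomputable def sizeRamsey (k r : ℕ) (H : Finset (Finset ℕ)) : ℕ :=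
  sInf {m | ∃ G : Finset (Finset ℕ), IsUniform k G ∧ Arrows r G H ∧ G.card = m}

/-- The `r`-color Ramsey number of `H`: the minimum number of vertices of a
`k`-uniform hypergraph `G` with `G →_r H`. -/
noncomputable def vertexRamsey (k r : ℕ) (H : Finset (Finset ℕ)) : ℕ :=
  sInf {m | ∃ G : Finset (Finset ℕ), IsUniform k G ∧ Arrows r G H ∧ (hVerts G).card = m}

/-- The `(k,ℓ)`-path with `m` edges: edge `i` (for `0 ≤ i < m`) is
`{i(k-ℓ), i(k-ℓ)+1, …, i(k-ℓ)+k-1}`. -/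
def pathWithEdges (k l m : ℕ) : Finset (Finset ℕ) :=
  (Finset.range m).image fun i => (Finset.range k).image fun j => i * (k - l) + j

/-- The `(k,ℓ)`-path on `n` vertices, `P_n^{(k,ℓ)}`; it has `(n-ℓ)/(k-ℓ)` edges. -/
def hPath (k l n : ℕ) : Finset (Finset ℕ) :=
  pathWithEdges k l ((n - l) / (k - l))


namespace SR
abbrev Graph := Finset (Finset ℕ)
def star (E : Graph) (v : ℕ) : Graph := E.filter (fun e => v ∈ e)
def deg (E : Graph) (v : ℕ) : ℕ := (star E v).card
def nbrs (E : Graph) (v : ℕ) : Finset ℕ := (star E v).biUnion (fun e => e.erase v)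
def Adj (E : Graph) (u v : ℕ) : Prop := u ≠ v ∧ ({u,v} : Finset ℕ) ∈ E
def Dominating (E : Graph) (D : Finset ℕ) : Prop :=
  ∀ x ∈ hVerts E, x ∈ D ∨ ∃ u ∈ D, Adj E u x
/-- the other endpoint of an edge -/
def oth (w : ℕ) (e : Finset ℕ) : ℕ := (e.erase w).sum id

lemma eq_pair {e : Finset ℕ} {v w : ℕ} (h : e.card = 2) (hv : v ∈ e) (hw : w ∈ e)
    (hvw : v ≠ w) : e = {v, w} := by
  apply (Finset.eq_of_subset_of_card_le _ _).symm
  · intro x hx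
    simp only [mem_insert, mem_singleton] at hx
    rcases hx with rfl | rfl <;> assumption
  · rw [h, card_insert_of_notMem (by simp [hvw]), card_singleton]

lemma mem_verts {E : Graph} {v : ℕ} : v ∈ hVerts E ↔ ∃ e ∈ E, v ∈ e := by
  simp [hVerts]

lemma edge_subset_verts {E : Graph} {e : Finset ℕ} (he : e ∈ E) : e ⊆ hVerts E :=
  fun x hx => mem_verts.2 ⟨e, he, hx⟩

lemma mem_nbrs {E : Graph} {v w : ℕ} : w ∈ nbrs E v ↔ w ≠ v ∧ ∃ e ∈ E, v ∈ e ∧ w ∈ e := by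
  simp only [nbrs, mem_biUnion, star, mem_filter, mem_erase]
  constructor
  · rintro ⟨e, ⟨he, hv⟩, hw, hwe⟩; exact ⟨hw, e, he, hv, hwe⟩
  · rintro ⟨hw, e, he, hv, hwe⟩; exact ⟨e, ⟨he, hv⟩, hw, hwe⟩

lemma mem_nbrs_iff_edge {E : Graph} (h2 : IsUniform 2 E) {v w : ℕ} :
    w ∈ nbrs E v ↔ w ≠ v ∧ ({v, w} : Finset ℕ) ∈ E := by
  rw [mem_nbrs]
  constructor
  · rintro ⟨hw, e, he, hv, hwe⟩
    exact ⟨hw, eq_pair (h2 e he) hv hwe (Ne.symm hw) ▸ he⟩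
  · rintro ⟨hw, he⟩
    exact ⟨hw, {v, w}, he, by simp, by simp⟩

lemma nbrs_symm {E : Graph} {v w : ℕ} (h : w ∈ nbrs E v) : v ∈ nbrs E w := by
  rw [mem_nbrs] at h ⊢
  obtain ⟨hne, e, he, hv, hw⟩ := h
  exact ⟨Ne.symm hne, e, he, hw, hv⟩

lemma nbrs_subset_verts {E : Graph} {v : ℕ} : nbrs E v ⊆ hVerts E := by
  intro w hw
  obtain ⟨_, e, he, _, hwe⟩ := mem_nbrs.1 hw
  exact mem_verts.2 ⟨e, he, hwe⟩

lemma not_mem_nbrs_self {E : Graph} {v : ℕ} : v ∉ nbrs E v := by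
  intro h; exact (mem_nbrs.1 h).1 rfl

lemma card_nbrs {E : Graph} (h2 : IsUniform 2 E) (v : ℕ) : (nbrs E v).card = deg E v := by
  have hc : ∀ e ∈ star E v, (e.erase v).card = 1 := by
    intro e he
    simp only [star, mem_filter] at he
    rw [card_erase_of_mem he.2, h2 e he.1]
  rw [nbrs, card_biUnion, deg]
  · rw [Finset.sum_congr rfl hc, Finset.sum_const, smul_eq_mul, mul_one]
  · intro e he f hf hef
    rw [Function.onFun, Finset.disjoint_left]
    intro x hxe hxf
    simp only [mem_erase] at hxe hxf
    simp only [star, Finset.mem_coe, mem_filter] at he hf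
    have h1 : e = {v, x} := eq_pair (h2 e he.1) he.2 hxe.2 (Ne.symm hxe.1)
    have h2' : f = {v, x} := eq_pair (h2 f hf.1) hf.2 hxf.2 (Ne.symm hxf.1)
    exact hef (h1.trans h2'.symm)

lemma oth_spec {e : Finset ℕ} {w : ℕ} (h : e.card = 2) (hw : w ∈ e) :
    oth w e ≠ w ∧ oth w e ∈ e ∧ e = {w, oth w e} := by
  obtain ⟨a, b, hab, rfl⟩ := Finset.card_eq_two.1 h
  simp only [mem_insert, mem_singleton] at hw
  rcases hw with rfl | rfl
  · have : oth w {w, b} = b := by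
      rw [oth, Finset.erase_insert (by simpa using hab)]
      simp
    rw [this]
    exact ⟨Ne.symm hab, by simp, rfl⟩
  · have : oth w {a, w} = a := by
      rw [oth]
      have : ({a, w} : Finset ℕ).erase w = {a} := by
        ext x; simp only [mem_erase, mem_insert, mem_singleton]
        constructor
        · rintro ⟨hx, rfl | rfl⟩; rfl; exact absurd rfl hx
        · rintro rfl; exact ⟨hab, Or.inl rfl⟩
      rw [this]; simp
    rw [this]
    refine ⟨hab, by simp, ?_⟩
    rw [Finset.pair_comm]

lemma count_sum (S : Finset ℕ) (E : Graph) :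
    ∑ w ∈ S, (E.filter (fun e => w ∈ e)).card = ∑ e ∈ E, (e ∩ S).card := by
  have h1 : ∀ w, (E.filter (fun e => w ∈ e)).card = ∑ e ∈ E, if w ∈ e then 1 else 0 := by
    intro w; rw [Finset.card_filter]
  have h2 : ∀ e : Finset ℕ, (e ∩ S).card = ∑ w ∈ S, if w ∈ e then 1 else 0 := by
    intro e
    have : e ∩ S = S.filter (fun w => w ∈ e) := by ext x; simp [and_comm]
    rw [this, Finset.card_filter]
  simp_rw [h1, h2]
  exact Finset.sum_comm

lemma deg_pos {E : Graph} {v : ℕ} (hv : v ∈ hVerts E) : 1 ≤ deg E v := by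
  obtain ⟨e, he, hve⟩ := mem_verts.1 hv
  rw [deg, Nat.succ_le_iff, Finset.card_pos]
  exact ⟨e, by simp [star, mem_filter, he, hve]⟩

/-- the "star" dominating set of all vertices except neighbours of `v` -/
lemma star_dom {E : Graph} (h2 : IsUniform 2 E) {v : ℕ} (hv : v ∈ hVerts E) :
    ∃ D, D ⊆ hVerts E ∧ Dominating E D ∧ deg E v + D.card = (hVerts E).card := by
  refine ⟨hVerts E \ nbrs E v, Finset.sdiff_subset, ?_, ?_⟩
  · intro x hx
    by_cases hxn : x ∈ nbrs E v
    · refine Or.inr ⟨v, ?_, ?_⟩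
      · rw [mem_sdiff]; exact ⟨hv, not_mem_nbrs_self⟩
      · exact ⟨Ne.symm (mem_nbrs.1 hxn).1, ((mem_nbrs_iff_edge h2).1 hxn).2⟩
    · exact Or.inl (by rw [mem_sdiff]; exact ⟨hx, hxn⟩)
  · rw [Finset.card_sdiff_of_subset nbrs_subset_verts, card_nbrs h2]
    have := Finset.card_le_card (nbrs_subset_verts (E := E) (v := v))
    rw [card_nbrs h2] at this
    omega

end SR

namespace SR

lemma verts_empty : hVerts (∅ : Graph) = ∅ := by simp [hVerts]

lemma prod_mono (a b : ℕ) (h : a ≤ b) : a * (a + 2) ≤ b * (b + 2) := by nlinarith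

lemma arith_main (m ein ecr er δ o s₁ sA : ℕ)
    (hsplit : m = (δ + 2) + (ein + (ecr + er)))
    (h1 : 2 * ein ≤ (δ + 2) * δ) (h2 : ecr ≤ (δ + 2) * o) (h3 : 2 * er ≤ s₁ * (s₁ + 2))
    (hco : o ≤ s₁ + 1) (hsa : δ + 2 + s₁ ≤ sA) :
    2 * m ≤ sA * (sA + 2) := by
  nlinarith [prod_mono (δ + 2 + s₁) sA hsa]

lemma arith_main2 (m ein ecr er δ t s₁ : ℕ)
    (hsplit : m = (δ + 2) + (ein + (ecr + er)))
    (h1 : 2 * ein ≤ (δ + 2) * δ) (h2 : ecr ≤ (δ + 2) * (s₁ + 2 + t))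
    (h3 : 2 * er ≤ s₁ * (s₁ + 2)) :
    2 * m ≤ (δ + 1 + (s₁ + 2 + t)) * (δ + 1 + (s₁ + 2 + t) + 2) := by nlinarith

theorem vizing_dom (fuel : ℕ) : ∀ E : Graph, IsUniform 2 E → E.card ≤ fuel →
    ∃ D s, D ⊆ hVerts E ∧ Dominating E D ∧ s + D.card = (hVerts E).card ∧
      2 * E.card ≤ s * (s + 2) := by
  induction fuel with
  | zero =>
    intro E _ hc
    have hE : E = ∅ := Finset.card_eq_zero.1 (Nat.le_zero.1 hc)
    subst hE
    exact ⟨∅, 0, by simp, by intro x hx; simp [verts_empty] at hx, by simp [verts_empty], by simp⟩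
  | succ fuel ih =>
    intro E h2 hc
    by_cases hE : E = ∅
    · subst hE
      exact ⟨∅, 0, by simp, by intro x hx; simp [verts_empty] at hx, by simp [verts_empty],
        by simp⟩
    -- setup
    by_cases hiso : ∃ a b : ℕ, Adj E a b ∧ deg E a = 1 ∧ deg E b = 1
    · -- Case 1: isolated edge
      obtain ⟨a, b, hab, hda, hdb⟩ := hiso
      set E' : Graph := E.erase {a, b} with hE'
      have hsub : E' ⊆ E := Finset.erase_subset _ _
      have h2' : IsUniform 2 E' := fun e he => h2 e (hsub he)
      have hmem : ({a,b} : Finset ℕ) ∈ E := hab.2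
      have hane : a ≠ b := hab.1
      have hav : a ∈ hVerts E := mem_verts.2 ⟨_, hmem, by simp⟩
      have hbv : b ∈ hVerts E := mem_verts.2 ⟨_, hmem, by simp⟩
      have hda' : (star E a).card = 1 := hda
      have hdb' : (star E b).card = 1 := hdb
      have hnotin : ∀ f ∈ E', a ∉ f ∧ b ∉ f := by
        intro f hf
        rw [hE', Finset.mem_erase] at hf
        constructor
        · intro haf
          have h1 : f ∈ star E a := by simp [star, mem_filter, hf.2, haf]
          have h2m : ({a,b} : Finset ℕ) ∈ star E a := by simp [star, mem_filter, hmem]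
          have : 1 < (star E a).card :=
            Finset.one_lt_card.2 ⟨f, h1, {a,b}, h2m, hf.1⟩
          omega
        · intro hbf
          have h1 : f ∈ star E b := by simp [star, mem_filter, hf.2, hbf]
          have h2m : ({a,b} : Finset ℕ) ∈ star E b := by simp [star, mem_filter, hmem]
          have : 1 < (star E b).card :=
            Finset.one_lt_card.2 ⟨f, h1, {a,b}, h2m, hf.1⟩
          omega
      have hverts' : hVerts E' = hVerts E \ {a, b} := by
        ext x
        rw [mem_sdiff, mem_verts, mem_verts]
        constructor
        · rintro ⟨e, he, hxe⟩
          obtain ⟨hna, hnb⟩ := hnotin e he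
          refine ⟨⟨e, hsub he, hxe⟩, ?_⟩
          simp only [mem_insert, mem_singleton]
          rintro (rfl | rfl) <;> [exact hna hxe; exact hnb hxe]
        · rintro ⟨⟨e, he, hxe⟩, hxab⟩
          simp only [mem_insert, mem_singleton] at hxab
          push_neg at hxab
          refine ⟨e, ?_, hxe⟩
          rw [hE', Finset.mem_erase]
          refine ⟨?_, he⟩
          rintro rfl
          simp only [mem_insert, mem_singleton] at hxe
          rcases hxe with rfl | rfl
          · exact hxab.1 rfl
          · exact hxab.2 rfl
      have hcard' : E'.card = E.card - 1 := Finset.card_erase_of_mem hmem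
      have hcle : E'.card ≤ fuel := by
        have := Finset.card_pos.2 ⟨_, hmem⟩
        omega
      obtain ⟨D₁, s₁, hD₁v, hdom₁, hs₁, hineq₁⟩ := ih E' h2' hcle
      have haD₁ : a ∉ D₁ := by
        intro h
        have := hD₁v h
        rw [hverts', mem_sdiff] at this
        simp at this
      refine ⟨insert a D₁, s₁ + 1, ?_, ?_, ?_, ?_⟩
      · intro x hx
        rcases Finset.mem_insert.1 hx with rfl | hx
        · exact hav
        · have hx' := hD₁v hx
          rw [hverts', mem_sdiff] at hx'
          exact hx'.1
      · intro x hx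
        by_cases hxa : x = a
        · exact Or.inl (by simp [hxa])
        by_cases hxb : x = b
        · exact Or.inr ⟨a, by simp, by rw [hxb]; exact hab⟩
        · have hx' : x ∈ hVerts E' := by
            rw [hverts', mem_sdiff]
            exact ⟨hx, by simp [hxa, hxb]⟩
          rcases hdom₁ x hx' with h | ⟨u, hu, hadj⟩
          · exact Or.inl (Finset.mem_insert_of_mem h)
          · exact Or.inr ⟨u, Finset.mem_insert_of_mem hu, hadj.1, hsub hadj.2⟩
      · rw [Finset.card_insert_of_notMem haD₁]
        have hab_sub : ({a, b} : Finset ℕ) ⊆ hVerts E := by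
          intro x hx
          simp only [mem_insert, mem_singleton] at hx
          rcases hx with rfl | rfl <;> assumption
        have hcards : (hVerts E').card = (hVerts E).card - 2 := by
          rw [hverts', Finset.card_sdiff_of_subset hab_sub,
            Finset.card_insert_of_notMem (by simp [hane]), card_singleton]
        have h2le : 2 ≤ (hVerts E).card := by
          have := Finset.card_le_card hab_sub
          rw [Finset.card_insert_of_notMem (by simp [hane]), card_singleton] at this
          exact this
        omega
      · have hm : E.card = E'.card + 1 := by
          have := Finset.card_pos.2 (⟨_, hmem⟩ : E.Nonempty)
          omega
        rw [hm]
        nlinarith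
    -- not case 1
    push_neg at hiso
    have hvne : (hVerts E).Nonempty := by
      obtain ⟨e, he⟩ := Finset.nonempty_iff_ne_empty.2 hE
      have : e.Nonempty := Finset.card_pos.1 (by rw [h2 e he]; omega)
      obtain ⟨x, hx⟩ := this
      exact ⟨x, mem_verts.2 ⟨e, he, hx⟩⟩
    by_cases htw : ∃ u w : ℕ, Adj E u w ∧ insert u (nbrs E u) = insert w (nbrs E w)
    · -- Case 2: adjacent twins
      obtain ⟨u, w, hadj, hcn⟩ := htw
      have huw : u ≠ w := hadj.1
      have hwnu : w ∈ nbrs E u := (mem_nbrs_iff_edge h2).2 ⟨Ne.symm huw, hadj.2⟩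
      have hunw : u ∈ nbrs E w := nbrs_symm hwnu
      have hwv : w ∈ hVerts E := nbrs_subset_verts hwnu
      have huv : u ∈ hVerts E := nbrs_subset_verts hunw
      have hdegeq : deg E u = deg E w := by
        have h1 : (insert u (nbrs E u)).card = deg E u + 1 := by
          rw [Finset.card_insert_of_notMem not_mem_nbrs_self, card_nbrs h2]
        have h2c : (insert w (nbrs E w)).card = deg E w + 1 := by
          rw [Finset.card_insert_of_notMem not_mem_nbrs_self, card_nbrs h2]
        rw [hcn] at h1
        omega
      have hdw2 : 2 ≤ deg E w := by
        by_contra h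
        have h1 : deg E w = 1 := by have := deg_pos hwv; omega
        exact hiso u w hadj (hdegeq.trans h1) h1
      set E' : Graph := E.filter (fun e => w ∉ e) with hE'
      have hsub : E' ⊆ E := Finset.filter_subset _ _
      have h2' : IsUniform 2 E' := fun e he => h2 e (hsub he)
      have hcard' : E'.card + deg E w = E.card := by
        rw [hE', deg, star]
        rw [Finset.filter_not]
        have := Finset.card_filter_le E (fun e => w ∈ e)
        have hsub2 : E.filter (fun e => w ∈ e) ⊆ E := Finset.filter_subset _ _
        rw [Finset.card_sdiff_of_subset hsub2]
        omega
      have hkey : ∀ x ∈ insert u (nbrs E u), x ≠ w → ∃ e ∈ E', x ∈ e := by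
        intro x hx hxw
        rcases Finset.mem_insert.1 hx with rfl | hx
        · have hstar2 : 1 < (star E x).card := by
            have : deg E x = deg E w := hdegeq
            rw [deg] at this
            omega
          obtain ⟨f, hf, hfne⟩ := Finset.exists_mem_ne hstar2 {x, w}
          simp only [star, mem_filter] at hf
          refine ⟨f, ?_, hf.2⟩
          rw [hE', mem_filter]
          refine ⟨hf.1, fun hwf => hfne ?_⟩
          exact eq_pair (h2 f hf.1) hf.2 hwf hxw
        · have hx' := (mem_nbrs_iff_edge h2).1 hx
          refine ⟨{u, x}, ?_, by simp⟩
          rw [hE', mem_filter]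
          refine ⟨hx'.2, ?_⟩
          simp only [mem_insert, mem_singleton]
          rintro (rfl | rfl)
          · exact huw rfl
          · exact hxw rfl
      have hverts' : hVerts E' = hVerts E \ {w} := by
        ext x
        rw [mem_sdiff, mem_verts, mem_verts]
        constructor
        · rintro ⟨e, he, hxe⟩
          have hwe : w ∉ e := (Finset.mem_filter.1 he).2
          refine ⟨⟨e, hsub he, hxe⟩, ?_⟩
          simp only [mem_singleton]
          rintro rfl; exact hwe hxe
        · rintro ⟨⟨e, he, hxe⟩, hxw⟩
          simp only [mem_singleton] at hxw
          by_cases hwe : w ∈ e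
          · have hxnw : x ∈ nbrs E w := mem_nbrs.2 ⟨hxw, e, he, hwe, hxe⟩
            have : x ∈ insert u (nbrs E u) := by
              rw [hcn]; exact Finset.mem_insert_of_mem hxnw
            exact hkey x this hxw
          · exact ⟨e, by rw [hE', mem_filter]; exact ⟨he, hwe⟩, hxe⟩
      have huv' : u ∈ hVerts E' := by
        obtain ⟨e, he, hue⟩ := hkey u (Finset.mem_insert_self _ _) huw
        exact mem_verts.2 ⟨e, he, hue⟩
      have hdwle : deg E w ≤ E.card := by
        have : star E w ⊆ E := Finset.filter_subset _ _
        exact Finset.card_le_card this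
      have hcle : E'.card ≤ fuel := by omega
      obtain ⟨D₁, s₁, hD₁v, hdom₁, hs₁, hineq₁⟩ := ih E' h2' hcle
      have hwD₁ : w ∉ D₁ := by
        intro h
        have := hD₁v h
        rw [hverts', mem_sdiff] at this
        simp at this
      have hn' : (hVerts E').card + 1 = (hVerts E).card := by
        rw [hverts', Finset.card_sdiff_of_subset (by simpa using hwv)]
        have : (1 : ℕ) ≤ (hVerts E).card := Finset.card_pos.2 ⟨w, hwv⟩
        simp only [card_singleton]
        omega
      by_cases hcomp : deg E w ≤ s₁ + 1
      · -- use D₁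
        refine ⟨D₁, s₁ + 1, ?_, ?_, ?_, ?_⟩
        · intro x hx
          have := hD₁v hx
          rw [hverts', mem_sdiff] at this
          exact this.1
        · intro x hx
          by_cases hxw : x = w
          · rcases hdom₁ u huv' with h | ⟨d, hd, hadjd⟩
            · exact Or.inr ⟨u, h, hxw ▸ hadj⟩
            · refine Or.inr ⟨d, hd, hxw ▸ ?_⟩
              have hdny : d ∈ nbrs E u := by
                rw [mem_nbrs_iff_edge h2]
                exact ⟨hadjd.1, by rw [Finset.pair_comm]; exact hsub hadjd.2⟩
              have hdw : d ∈ insert w (nbrs E w) := by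
                rw [← hcn]; exact Finset.mem_insert_of_mem hdny
              have hdnew : d ≠ w := by
                intro h; apply hwD₁; rwa [h] at hd
              have hdnw : d ∈ nbrs E w := by
                rcases Finset.mem_insert.1 hdw with h | h
                · exact absurd h hdnew
                · exact h
              exact ⟨hdnew, ((mem_nbrs_iff_edge h2).1 (nbrs_symm hdnw)).2⟩
          · have hx' : x ∈ hVerts E' := by
              rw [hverts', mem_sdiff]
              exact ⟨hx, by simp [hxw]⟩
            rcases hdom₁ x hx' with h | ⟨d, hd, hadjd⟩
            · exact Or.inl h
            · exact Or.inr ⟨d, hd, hadjd.1, hsub hadjd.2⟩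
        · omega
        · have : E.card = E'.card + deg E w := by omega
          rw [this]
          nlinarith
      · -- big twin degree: use the star dominating set of a max-degree vertex
        obtain ⟨vm, hvm, hmax⟩ := Finset.exists_max_image (hVerts E) (deg E) hvne
        obtain ⟨D, hDv, hDdom, hDs⟩ := star_dom h2 hvm
        refine ⟨D, deg E vm, hDv, hDdom, hDs, ?_⟩
        have hwm : deg E w ≤ deg E vm := hmax w hwv
        obtain ⟨δ, hδ⟩ : ∃ δ, deg E vm = δ + 2 := ⟨deg E vm - 2, by omega⟩
        have hs₁δ : s₁ ≤ δ := by omega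
        have hmono := prod_mono s₁ δ hs₁δ
        have : E.card = E'.card + deg E w := by omega
        rw [this, hδ]
        nlinarith
    · -- Case 3: main case
      push_neg at htw
      obtain ⟨v, hvv, hmax⟩ := Finset.exists_max_image (hVerts E) (deg E) hvne
      set Δ := deg E v with hΔdef
      have hΔ1 : 1 ≤ Δ := deg_pos hvv
      have hΔ2 : 2 ≤ Δ := by
        by_contra hcon
        have hΔe : Δ = 1 := by omega
        obtain ⟨e, he, hve⟩ := mem_verts.1 hvv
        have hv_star : e ∈ star E v := by simp [star, mem_filter, he, hve]
        set b := oth v e with hb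
        obtain ⟨hbne, hbe, hepair⟩ := oth_spec (h2 e he) hve
        have hadjvb : Adj E v b := ⟨Ne.symm hbne, hepair ▸ he⟩
        have hbv : b ∈ hVerts E := mem_verts.2 ⟨e, he, hbe⟩
        have hdb : deg E b = 1 := by
          have := hmax b hbv
          have := deg_pos hbv
          omega
        exact hiso v b hadjvb hΔe hdb
      set N := nbrs E v with hN
      have hNcard : N.card = Δ := card_nbrs h2 v
      have hvN : v ∉ N := not_mem_nbrs_self
      have hNv : N ⊆ hVerts E := nbrs_subset_verts
      have hNadj : ∀ x ∈ N, Adj E v x := by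
        intro x hx
        have := (mem_nbrs_iff_edge h2).1 hx
        exact ⟨Ne.symm this.1, this.2⟩
      set Ein : Graph := E.filter (fun e => v ∉ e ∧ e ⊆ N) with hEin
      set Ecr : Graph := E.filter (fun e => v ∉ e ∧ ¬ e ⊆ N ∧ ∃ w ∈ N, w ∈ e) with hEcr
      set ER : Graph := E.filter (fun e => v ∉ e ∧ ∀ w ∈ N, w ∉ e) with hER
      -- edge count split
      have hunion : E = star E v ∪ (Ein ∪ (Ecr ∪ ER)) := by
        ext e
        simp only [star, hEin, hEcr, hER, mem_union, mem_filter]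
        constructor
        · intro he
          by_cases hv : v ∈ e
          · exact Or.inl ⟨he, hv⟩
          by_cases hs : e ⊆ N
          · exact Or.inr (Or.inl ⟨he, hv, hs⟩)
          by_cases hex : ∃ w ∈ N, w ∈ e
          · exact Or.inr (Or.inr (Or.inl ⟨he, hv, hs, hex⟩))
          · push_neg at hex
            exact Or.inr (Or.inr (Or.inr ⟨he, hv, hex⟩))
        · rintro (⟨he, -⟩ | (⟨he, -⟩ | (⟨he, -⟩ | ⟨he, -⟩))) <;> exact he
      have hsplit : E.card = Δ + (Ein.card + (Ecr.card + ER.card)) := by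
        have d3 : Disjoint Ecr ER := by
          rw [Finset.disjoint_left]
          intro e he he'
          simp only [hEcr, mem_filter] at he
          simp only [hER, mem_filter] at he'
          obtain ⟨w, hwN, hwe⟩ := he.2.2.2
          exact he'.2.2 w hwN hwe
        have d2 : Disjoint Ein (Ecr ∪ ER) := by
          rw [Finset.disjoint_left]
          intro e he he'
          simp only [hEin, mem_filter] at he
          have hcd : e.card = 2 := h2 e he.1
          have hne : e.Nonempty := Finset.card_pos.1 (by omega)
          obtain ⟨x, hx⟩ := hne
          rcases Finset.mem_union.1 he' with h | h
          · simp only [hEcr, mem_filter] at h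
            exact h.2.2.1 he.2.2
          · simp only [hER, mem_filter] at h
            exact h.2.2 x (he.2.2 hx) hx
        have d1 : Disjoint (star E v) (Ein ∪ (Ecr ∪ ER)) := by
          rw [Finset.disjoint_left]
          intro e he he'
          simp only [star, mem_filter] at he
          rcases Finset.mem_union.1 he' with h | h
          · simp only [hEin, mem_filter] at h
            exact h.2.1 he.2
          rcases Finset.mem_union.1 h with h' | h'
          · simp only [hEcr, mem_filter] at h'
            exact h'.2.1 he.2
          · simp only [hER, mem_filter] at h'
            exact h'.2.1 he.2
        conv_lhs => rw [hunion]
        rw [Finset.card_union_of_disjoint d1, Finset.card_union_of_disjoint d2,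
          Finset.card_union_of_disjoint d3, hΔdef, deg]
      have hEinsub : Ein ⊆ E := by rw [hEin]; exact Finset.filter_subset _ _
      have hEin2 : 2 * Ein.card ≤ Δ * (Δ - 2) := by
        have hsum : ∑ w ∈ N, (Ein.filter (fun e => w ∈ e)).card = 2 * Ein.card := by
          rw [count_sum]
          have hall : ∀ e ∈ Ein, (e ∩ N).card = 2 := by
            intro e he
            have he' := he
            simp only [hEin, mem_filter] at he'
            rw [Finset.inter_eq_left.2 he'.2.2, h2 e he'.1]
          rw [Finset.sum_congr rfl hall, Finset.sum_const, smul_eq_mul, mul_comm]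
        have hper : ∀ w ∈ N, (Ein.filter (fun e => w ∈ e)).card ≤ Δ - 2 := by
          intro w hwN
          have hinj : (Ein.filter (fun e => w ∈ e)).card ≤ (N ∩ nbrs E w).card := by
            apply Finset.card_le_card_of_injOn (fun e => oth w e)
            · intro e he
              simp only [Finset.mem_coe, mem_filter] at he
              obtain ⟨heEin, hwe⟩ := he
              have heE : e ∈ E := hEinsub heEin
              have he' := heEin
              simp only [hEin, mem_filter] at he'
              obtain ⟨hne, hin, hpair⟩ := oth_spec (h2 e heE) hwe
              rw [Finset.mem_coe, Finset.mem_inter]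
              exact ⟨he'.2.2 hin, mem_nbrs.2 ⟨hne, e, heE, hwe, hin⟩⟩
            · intro e he f hf hef
              simp only [Finset.mem_coe, mem_filter] at he hf
              obtain ⟨-, -, hpe⟩ := oth_spec (h2 e (hEinsub he.1)) he.2
              obtain ⟨-, -, hpf⟩ := oth_spec (h2 f (hEinsub hf.1)) hf.2
              have hef' : oth w e = oth w f := hef
              rw [hpe, hpf, hef']
          have hcap : (N ∩ nbrs E w).card ≤ Δ - 2 := by
            by_contra hcon
            push_neg at hcon
            have hfoo : N ∩ nbrs E w ⊆ N.erase w := by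
              intro x hx
              rw [Finset.mem_inter] at hx
              rw [Finset.mem_erase]
              exact ⟨fun h => not_mem_nbrs_self (h ▸ hx.2), hx.1⟩
            have hcerase : (N.erase w).card = Δ - 1 := by
              rw [Finset.card_erase_of_mem hwN, hNcard]
            have hle2 : (N.erase w).card ≤ (N ∩ nbrs E w).card := by omega
            have heq : N ∩ nbrs E w = N.erase w :=
              Finset.eq_of_subset_of_card_le hfoo hle2
            have hvw : v ∈ nbrs E w := nbrs_symm hwN
            have hwverts : w ∈ hVerts E := hNv hwN
            have hsub2 : insert v (N.erase w) ⊆ nbrs E w := by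
              intro x hx
              rcases Finset.mem_insert.1 hx with rfl | hx
              · exact hvw
              · rw [← heq] at hx
                exact (Finset.mem_inter.1 hx).2
            have hcard2 : (insert v (N.erase w)).card = Δ := by
              rw [Finset.card_insert_of_notMem (fun h => hvN (Finset.mem_of_mem_erase h)),
                hcerase]
              omega
            have hdegw : (nbrs E w).card ≤ Δ := by
              rw [card_nbrs h2]
              exact hmax w hwverts
            have heq2 : insert v (N.erase w) = nbrs E w :=
              Finset.eq_of_subset_of_card_le hsub2 (by omega)
            apply htw v w (hNadj w hwN)
            rw [← heq2]
            rw [Finset.insert_comm, Finset.insert_erase hwN]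
          omega
        calc 2 * Ein.card = ∑ w ∈ N, (Ein.filter (fun e => w ∈ e)).card := hsum.symm
          _ ≤ N.card • (Δ - 2) := Finset.sum_le_card_nsmul _ _ _ hper
          _ = Δ * (Δ - 2) := by rw [smul_eq_mul, hNcard]
      have hEcrsub : Ecr ⊆ E := by rw [hEcr]; exact Finset.filter_subset _ _
      have hNne : N.Nonempty := Finset.card_pos.1 (by omega)
      obtain ⟨wst, hwstN, hwstmax⟩ := Finset.exists_max_image N
        (fun w => (Ecr.filter (fun e => w ∈ e)).card) hNne
      set o := (Ecr.filter (fun e => wst ∈ e)).card with ho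
      have hEcrcard : Ecr.card ≤ Δ * o := by
        have hsum : ∑ w ∈ N, (Ecr.filter (fun e => w ∈ e)).card = Ecr.card := by
          rw [count_sum]
          have hall : ∀ e ∈ Ecr, (e ∩ N).card = 1 := by
            intro e he
            have he' := he
            simp only [hEcr, mem_filter] at he'
            obtain ⟨heE, hv, hns, w, hwN, hwe⟩ := he'
            have h1 : 1 ≤ (e ∩ N).card :=
              Finset.card_pos.2 ⟨w, Finset.mem_inter.2 ⟨hwe, hwN⟩⟩
            have h2' : (e ∩ N).card ≤ 2 := by
              calc (e ∩ N).card ≤ e.card := Finset.card_le_card Finset.inter_subset_left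
                _ = 2 := h2 e heE
            have h3 : (e ∩ N).card ≠ 2 := by
              intro hcon
              apply hns
              have heq : e ∩ N = e := Finset.eq_of_subset_of_card_le
                Finset.inter_subset_left (by rw [hcon, h2 e heE])
              intro x hx
              rw [← heq] at hx
              exact (Finset.mem_inter.1 hx).2
            omega
          rw [Finset.sum_congr rfl hall, Finset.sum_const, smul_eq_mul, mul_one]
        calc Ecr.card = ∑ w ∈ N, (Ecr.filter (fun e => w ∈ e)).card := hsum.symm
          _ ≤ N.card • o := Finset.sum_le_card_nsmul _ _ _ (fun w hw => hwstmax w hw)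
          _ = Δ * o := by rw [smul_eq_mul, hNcard]
      -- the rest graph
      have hERsub : ER ⊆ E := by rw [hER]; exact Finset.filter_subset _ _
      have h2R : IsUniform 2 ER := fun e he => h2 e (hERsub he)
      have hERcard : ER.card ≤ fuel := by omega
      obtain ⟨D₁, s₁, hD₁v, hdom₁, hs₁, hineq₁⟩ := ih ER h2R hERcard
      set V₁ := hVerts ER with hV₁
      have hV₁E : V₁ ⊆ hVerts E := by
        intro x hx
        obtain ⟨e, he, hxe⟩ := mem_verts.1 hx
        exact mem_verts.2 ⟨e, hERsub he, hxe⟩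
      have hV₁B : ∀ x ∈ V₁, x ≠ v ∧ x ∉ N := by
        intro x hx
        obtain ⟨e, he, hxe⟩ := mem_verts.1 hx
        have he' := he
        simp only [hER, mem_filter] at he'
        exact ⟨fun h => he'.2.1 (h ▸ hxe), fun h => he'.2.2 x h hxe⟩
      set B := insert v N with hB
      have hBcard : B.card = Δ + 1 := by
        rw [hB, Finset.card_insert_of_notMem hvN, hNcard]
      have hBv : B ⊆ hVerts E := by
        intro x hx
        rcases Finset.mem_insert.1 hx with rfl | hx
        · exact hvv
        · exact hNv hx
      set R' := hVerts E \ B with hR'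
      have hV₁R' : V₁ ⊆ R' := by
        intro x hx
        rw [hR', mem_sdiff]
        refine ⟨hV₁E hx, ?_⟩
        obtain ⟨ha, hb⟩ := hV₁B x hx
        rw [hB]
        simp only [mem_insert]
        rintro (rfl | h)
        exacts [ha rfl, hb h]
      set R₀ := R' \ V₁ with hR₀
      have hncount : (hVerts E).card = (Δ + 1) + R₀.card + V₁.card := by
        have h1 : R'.card + B.card = (hVerts E).card := by
          rw [hR', Finset.card_sdiff_of_subset hBv]
          have := Finset.card_le_card hBv; omega
        have hx2 : R₀.card + V₁.card = R'.card := by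
          rw [hR₀, Finset.card_sdiff_of_subset hV₁R']
          have := Finset.card_le_card hV₁R'; omega
        omega
      have hR₀pick : ∀ x, x ∈ R₀ → ∃ w, w ∈ N ∧ Adj E w x := by
        intro x hx
        rw [hR₀, mem_sdiff, hR', mem_sdiff] at hx
        obtain ⟨⟨hxv, hxB⟩, hxV₁⟩ := hx
        obtain ⟨e, he, hxe⟩ := mem_verts.1 hxv
        have heER : e ∉ ER := fun h => hxV₁ (mem_verts.2 ⟨e, h, hxe⟩)
        have hxnv : x ≠ v := by
          rintro rfl
          exact hxB (by rw [hB]; exact Finset.mem_insert_self _ _)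
        have hxnN : x ∉ N := fun h => hxB (by rw [hB]; exact Finset.mem_insert_of_mem h)
        by_cases hve : v ∈ e
        · exact absurd (mem_nbrs.2 ⟨hxnv, e, he, hve, hxe⟩) hxnN
        · have hex : ∃ w ∈ N, w ∈ e := by
            by_contra hcon
            push_neg at hcon
            exact heER (by rw [hER, mem_filter]; exact ⟨he, hve, hcon⟩)
          obtain ⟨w, hwN, hwe⟩ := hex
          have hwx : w ≠ x := fun h => hxnN (h ▸ hwN)
          exact ⟨w, hwN, hwx, (eq_pair (h2 e he) hwe hxe hwx) ▸ he⟩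
      have hR₀pick' : ∀ x : {y // y ∈ R₀}, ∃ w, w ∈ N ∧ Adj E w x.1 :=
        fun x => hR₀pick x.1 x.2
      choose pk hkN hkAdj using hR₀pick'
      set C₀ := R₀.attach.image pk with hC₀
      have hC₀N : C₀ ⊆ N := by
        intro y hy
        rw [hC₀, mem_image] at hy
        obtain ⟨x, -, rfl⟩ := hy
        exact hkN x
      have hC₀card : C₀.card ≤ R₀.card := by
        calc C₀.card ≤ R₀.attach.card := Finset.card_image_le
          _ = R₀.card := Finset.card_attach
      set DA := insert v (C₀ ∪ D₁) with hDA
      have hDAv : DA ⊆ hVerts E := by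
        intro x hx
        rcases Finset.mem_insert.1 hx with rfl | hx
        · exact hvv
        rcases Finset.mem_union.1 hx with h | h
        · exact hNv (hC₀N h)
        · exact hV₁E (hD₁v h)
      have hDAdom : Dominating E DA := by
        intro x hx
        by_cases hxv : x = v
        · exact Or.inl (by rw [hxv, hDA]; exact Finset.mem_insert_self _ _)
        by_cases hxN : x ∈ N
        · exact Or.inr ⟨v, by rw [hDA]; exact Finset.mem_insert_self _ _, hNadj x hxN⟩
        by_cases hxV : x ∈ V₁
        · rcases hdom₁ x hxV with h | ⟨u, hu, ha⟩
          · exact Or.inl (by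
              rw [hDA]
              exact Finset.mem_insert_of_mem (Finset.mem_union_right _ h))
          · exact Or.inr ⟨u, by
              rw [hDA]
              exact Finset.mem_insert_of_mem (Finset.mem_union_right _ hu),
              ha.1, hERsub ha.2⟩
        · have hxR₀ : x ∈ R₀ := by
            rw [hR₀, mem_sdiff, hR', mem_sdiff, hB]
            refine ⟨⟨hx, ?_⟩, hxV⟩
            simp only [mem_insert]
            rintro (rfl | h)
            exacts [hxv rfl, hxN h]
          refine Or.inr ⟨pk ⟨x, hxR₀⟩, ?_, hkAdj ⟨x, hxR₀⟩⟩
          rw [hDA]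
          refine Finset.mem_insert_of_mem (Finset.mem_union_left _ ?_)
          rw [hC₀]
          exact Finset.mem_image_of_mem pk (Finset.mem_attach _ _)
      have hDAcard : DA.card ≤ 1 + R₀.card + D₁.card := by
        have h1 : DA.card ≤ (C₀ ∪ D₁).card + 1 := Finset.card_insert_le _ _
        have h2' := Finset.card_union_le C₀ D₁
        omega
      -- D_B
      have hvnwst : v ∈ nbrs E wst := nbrs_symm hwstN
      have hwstv : wst ≠ v := fun h => hvN (h ▸ hwstN)
      have hwstverts : wst ∈ hVerts E := hNv hwstN
      have himg : (Ecr.filter (fun e => wst ∈ e)).image (oth wst)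
          = (nbrs E wst \ N).erase v := by
        ext x
        constructor
        · intro hx
          rw [mem_image] at hx
          obtain ⟨e, he, rfl⟩ := hx
          rw [mem_filter] at he
          obtain ⟨heEcr, hwste⟩ := he
          have he' := heEcr
          simp only [hEcr, mem_filter] at he'
          obtain ⟨heE, hvne', hns, -⟩ := he'
          obtain ⟨hne, hin, hpair⟩ := oth_spec (h2 e heE) hwste
          rw [mem_erase, mem_sdiff]
          refine ⟨fun h => hvne' (h ▸ hin), mem_nbrs.2 ⟨hne, e, heE, hwste, hin⟩,
            fun h => hns ?_⟩
          rw [hpair]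
          intro y hy
          rcases Finset.mem_insert.1 hy with rfl | hy
          · exact hwstN
          · rw [Finset.mem_singleton.1 hy]; exact h
        · intro hx
          rw [mem_erase, mem_sdiff] at hx
          obtain ⟨hxv, hxnb, hxN⟩ := hx
          have hedge : ({wst, x} : Finset ℕ) ∈ E := ((mem_nbrs_iff_edge h2).1 hxnb).2
          have hxw : x ≠ wst := (mem_nbrs.1 hxnb).1
          rw [mem_image]
          refine ⟨{wst, x}, ?_, ?_⟩
          · rw [mem_filter]
            constructor
            · rw [hEcr, mem_filter]
              refine ⟨hedge, ?_, ?_, ⟨wst, hwstN, by simp⟩⟩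
              · simp only [mem_insert, mem_singleton]
                rintro (rfl | rfl)
                exacts [hwstv rfl, hxv rfl]
              · intro hcon
                exact hxN (hcon (by simp))
            · simp
          · obtain ⟨hne, hin, hpair⟩ := oth_spec (h2 _ hedge)
              (by simp : wst ∈ ({wst, x} : Finset ℕ))
            simp only [mem_insert, mem_singleton] at hin
            rcases hin with h | h
            · exact absurd h hne
            · exact h
      have hinj2 : Set.InjOn (oth wst) (Ecr.filter (fun e => wst ∈ e)) := by
        intro e he f hf hef
        simp only [Finset.mem_coe, mem_filter] at he hf
        obtain ⟨-, -, hpe⟩ := oth_spec (h2 e (hEcrsub he.1)) he.2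
        obtain ⟨-, -, hpf⟩ := oth_spec (h2 f (hEcrsub hf.1)) hf.2
        rw [hpe, hpf, hef]
      have hcross : ((nbrs E wst \ N).erase v).card = o := by
        rw [← himg, Finset.card_image_of_injOn hinj2, ho]
      have hvsd : v ∈ nbrs E wst \ N := mem_sdiff.2 ⟨hvnwst, hvN⟩
      have hsdcard : (nbrs E wst \ N).card = o + 1 := by
        have h1 := Finset.card_erase_of_mem hvsd
        have hpos : 1 ≤ (nbrs E wst \ N).card := Finset.card_pos.2 ⟨v, hvsd⟩
        omega
      have hUcard : (N ∪ nbrs E wst).card = Δ + (o + 1) := by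
        rw [← Finset.union_sdiff_self_eq_union,
          Finset.card_union_of_disjoint Finset.disjoint_sdiff, hNcard, hsdcard]
      have hUsub : N ∪ nbrs E wst ⊆ hVerts E := Finset.union_subset hNv nbrs_subset_verts
      set T := hVerts E \ (N ∪ nbrs E wst) with hT
      have hTcard : T.card + (Δ + (o + 1)) = (hVerts E).card := by
        rw [hT, Finset.card_sdiff_of_subset hUsub, ← hUcard]
        have := Finset.card_le_card hUsub
        omega
      set DB := insert v (insert wst T) with hDB
      have hvT : v ∉ T := by
        rw [hT, mem_sdiff]
        push_neg
        intro _
        exact Finset.mem_union_right _ hvnwst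
      have hwstT : wst ∉ T := by
        rw [hT, mem_sdiff]
        push_neg
        intro _
        exact Finset.mem_union_left _ hwstN
      have hDBcard : DB.card = T.card + 2 := by
        rw [hDB, Finset.card_insert_of_notMem, Finset.card_insert_of_notMem hwstT]
        simp only [mem_insert]
        push_neg
        exact ⟨Ne.symm hwstv, hvT⟩
      have hDBv : DB ⊆ hVerts E := by
        intro x hx
        rcases Finset.mem_insert.1 hx with rfl | hx
        · exact hvv
        rcases Finset.mem_insert.1 hx with rfl | hx
        · exact hwstverts
        · rw [hT, mem_sdiff] at hx
          exact hx.1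
      have hDBdom : Dominating E DB := by
        intro x hx
        by_cases hxN : x ∈ N
        · exact Or.inr ⟨v, by rw [hDB]; exact Finset.mem_insert_self _ _, hNadj x hxN⟩
        by_cases hxw : x ∈ nbrs E wst
        · refine Or.inr ⟨wst, by
            rw [hDB]
            exact Finset.mem_insert_of_mem (Finset.mem_insert_self _ _), ?_⟩
          exact ⟨Ne.symm (mem_nbrs.1 hxw).1, ((mem_nbrs_iff_edge h2).1 hxw).2⟩
        · refine Or.inl ?_
          rw [hDB]
          refine Finset.mem_insert_of_mem (Finset.mem_insert_of_mem ?_)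
          rw [hT, mem_sdiff]
          refine ⟨hx, ?_⟩
          intro hcon
          rcases Finset.mem_union.1 hcon with h | h
          exacts [hxN h, hxw h]
      -- final arithmetic
      obtain ⟨δ, hδ⟩ : ∃ δ, Δ = δ + 2 := ⟨Δ - 2, by omega⟩
      have hEin2' : 2 * Ein.card ≤ (δ + 2) * δ := by
        rw [hδ] at hEin2
        simpa using hEin2
      have hsplit' : E.card = (δ + 2) + (Ein.card + (Ecr.card + ER.card)) := by omega
      have hEcr' : Ecr.card ≤ (δ + 2) * o := by rw [← hδ]; exact hEcrcard
      by_cases hco : o ≤ s₁ + 1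
      · have hDAn : DA.card ≤ (hVerts E).card := Finset.card_le_card hDAv
        refine ⟨DA, (hVerts E).card - DA.card, hDAv, hDAdom, by omega, ?_⟩
        have h1 : δ + 2 + s₁ ≤ (hVerts E).card - DA.card := by omega
        exact arith_main _ _ _ _ _ _ _ _ hsplit' hEin2' hEcr' hineq₁ hco h1
      · push_neg at hco
        have hDBn : DB.card ≤ (hVerts E).card := Finset.card_le_card hDBv
        refine ⟨DB, (hVerts E).card - DB.card, hDBv, hDBdom, by omega, ?_⟩
        obtain ⟨t, ht⟩ : ∃ t, o = s₁ + 2 + t := ⟨o - (s₁ + 2), by omega⟩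
        have hsb : (hVerts E).card - DB.card = δ + 1 + (s₁ + 2 + t) := by omega
        rw [hsb]
        rw [ht] at hEcr'
        exact arith_main2 _ _ _ _ _ _ _ hsplit' hEin2' hEcr' hineq₁

lemma hverts_hpath : hVerts (hPath 2 1 4) = ({0,1,2,3} : Finset ℕ) := by decide

lemma copy_iff (F : Graph) : IsCopy (hPath 2 1 4) F ↔
    ∃ a b c d : ℕ, a ≠ b ∧ a ≠ c ∧ a ≠ d ∧ b ≠ c ∧ b ≠ d ∧ c ≠ d ∧
      ({a,b} : Finset ℕ) ∈ F ∧ ({b,c} : Finset ℕ) ∈ F ∧ ({c,d} : Finset ℕ) ∈ F := by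
  constructor
  · rintro ⟨f, hinj, hmem⟩
    rw [hverts_hpath] at hinj
    refine ⟨f 0, f 1, f 2, f 3, ?_, ?_, ?_, ?_, ?_, ?_, ?_, ?_, ?_⟩
    · exact fun h => absurd (hinj (by simp) (by simp) h) (by norm_num)
    · exact fun h => absurd (hinj (by simp) (by simp) h) (by norm_num)
    · exact fun h => absurd (hinj (by simp) (by simp) h) (by norm_num)
    · exact fun h => absurd (hinj (by simp) (by simp) h) (by norm_num)
    · exact fun h => absurd (hinj (by simp) (by simp) h) (by norm_num)
    · exact fun h => absurd (hinj (by simp) (by simp) h) (by norm_num)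
    · have := hmem {0,1} (by decide); simpa using this
    · have := hmem {1,2} (by decide); simpa using this
    · have := hmem {2,3} (by decide); simpa using this
  · rintro ⟨a, b, c, d, hab, hac, had, hbc, hbd, hcd, h1, h2, h3⟩
    refine ⟨fun n => if n = 0 then a else if n = 1 then b else if n = 2 then c else d, ?_, ?_⟩
    · rw [hverts_hpath]
      intro x hx y hy hxy
      simp only [coe_insert, Set.mem_insert_iff, coe_singleton, Set.mem_singleton_iff] at hx hy
      rcases hx with rfl | rfl | rfl | rfl <;> rcases hy with rfl | rfl | rfl | rfl <;>
        simp_all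
    · intro e he
      have hp : hPath 2 1 4 = ({({0,1}:Finset ℕ), {1,2}, {2,3}} : Finset (Finset ℕ)) := by
        decide
      rw [hp] at he
      simp only [mem_insert, mem_singleton] at he
      rcases he with rfl | rfl | rfl
      · simpa using h1
      · simpa using h2
      · simpa using h3

lemma pair_cases {a b x u : ℕ} (h : ({a, b} : Finset ℕ) = {x, u}) (hne : a ≠ b) :
    (a = x ∧ b = u) ∨ (a = u ∧ b = x) := by
  have ham : a ∈ ({x, u} : Finset ℕ) := by rw [← h]; simp
  have hbm : b ∈ ({x, u} : Finset ℕ) := by rw [← h]; simp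
  simp only [Finset.mem_insert, Finset.mem_singleton] at ham hbm
  rcases ham with rfl | rfl
  · rcases hbm with rfl | rfl
    · exact absurd rfl hne
    · exact Or.inl ⟨rfl, rfl⟩
  · rcases hbm with rfl | rfl
    · exact Or.inr ⟨rfl, rfl⟩
    · exact absurd rfl hne

lemma star_forest {E : Graph} {D : Finset ℕ} (hD : D ⊆ hVerts E)
    (hdom : Dominating E D) :
    ∃ F, F ⊆ E ∧ F.card + D.card = (hVerts E).card ∧ ¬ IsCopy (hPath 2 1 4) F := by
  classical
  set S := hVerts E \ D with hS
  have hex : ∀ x, x ∈ S → ∃ u, u ∈ D ∧ Adj E u x := by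
    intro x hx
    rw [hS, mem_sdiff] at hx
    rcases hdom x hx.1 with h | ⟨u, hu, ha⟩
    · exact absurd h hx.2
    · exact ⟨u, hu, ha⟩
  choose p hpD hpAdj using hex
  set F : Graph := S.attach.image (fun (x : {y // y ∈ S}) => ({x.1, p x.1 x.2} : Finset ℕ))
    with hF
  have hmemS : ∀ x (hx : x ∈ S), x ∉ D := by
    intro x hx; rw [hS, mem_sdiff] at hx; exact hx.2
  have hedge : ∀ e ∈ F, ∃ x, ∃ hx : x ∈ S, e = {x, p x hx} := by
    intro e he
    rw [hF, mem_image] at he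
    obtain ⟨x, _, hxe⟩ := he
    exact ⟨x.1, x.2, hxe.symm⟩
  refine ⟨F, ?_, ?_, ?_⟩
  · intro e he
    obtain ⟨x, hx, rfl⟩ := hedge e he
    have := (hpAdj x hx).2
    rwa [Finset.pair_comm]
  · have hinj : Set.InjOn (fun (x : {y // y ∈ S}) => ({x.1, p x.1 x.2} : Finset ℕ))
        S.attach := by
      intro x _ y _ hxy
      simp only at hxy
      have hx1 : (x : ℕ) ∈ ({(y : ℕ), p y.1 y.2} : Finset ℕ) := by
        rw [← hxy]; simp
      simp only [mem_insert, mem_singleton] at hx1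
      rcases hx1 with h | h
      · exact Subtype.ext h
      · exact absurd (h ▸ hpD y.1 y.2) (hmemS x.1 x.2)
    rw [hF, Finset.card_image_of_injOn hinj, card_attach, hS]
    rw [Finset.card_sdiff_of_subset hD]
    have := Finset.card_le_card hD
    omega
  · rw [copy_iff]
    rintro ⟨a, b, c, d, hab, hac, had, hbc, hbd, hcd, h1, h2, h3⟩
    obtain ⟨x, hx, hxe⟩ := hedge _ h2
    rcases pair_cases hxe hbc with ⟨hbx, hcp⟩ | ⟨hbp, hcx⟩
    · -- b = x ∉ D, c = p x hx ∈ D; look at edge {a,b}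
      obtain ⟨y, hy, hye⟩ := hedge _ h1
      rcases pair_cases hye hab with ⟨hay, hbp'⟩ | ⟨hap, hby⟩
      · -- b = p y hy ∈ D but b = x ∉ D
        exact (hmemS x hx) (hbx ▸ hbp' ▸ hpD y hy)
      · -- b = y, a = p y hy; but b = x, so p y hy = p x hx = c, i.e. a = c
        have hyx : y = x := hby.symm.trans hbx
        subst hyx
        exact hac (hap.trans hcp.symm)
    · -- c = x ∉ D, b = p x hx ∈ D; look at edge {c,d}
      obtain ⟨z, hz, hze⟩ := hedge _ h3
      rcases pair_cases hze hcd with ⟨hcz, hdp⟩ | ⟨hcp', hdz⟩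
      · -- c = z, d = p z hz = p x hx = b
        have hzx : z = x := hcz.symm.trans hcx
        subst hzx
        exact hbd (hbp.trans hdp.symm)
      · -- c = p z hz ∈ D but c = x ∉ D
        exact (hmemS x hx) (hcx ▸ hcp' ▸ hpD z hz)


lemma not_copy_empty : ¬ IsCopy (hPath 2 1 4) (∅ : Graph) := by
  rw [copy_iff]
  rintro ⟨a, b, c, d, -, -, -, -, -, -, h1, -, -⟩
  exact absurd h1 (Finset.notMem_empty _)

lemma copy_mono {F G : Graph} (h : F ⊆ G) (hc : IsCopy (hPath 2 1 4) F) :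
    IsCopy (hPath 2 1 4) G := by
  rw [copy_iff] at hc ⊢
  obtain ⟨a, b, c, d, h1, h2, h3, h4, h5, h6, e1, e2, e3⟩ := hc
  exact ⟨a, b, c, d, h1, h2, h3, h4, h5, h6, h e1, h e2, h e3⟩

lemma arith_color (m s r : ℕ) (h1 : 2 * m ≤ s * (s + 2)) (h2 : r ^ 2 < 2 * m)
    (h3 : 2 * m ≤ (r + 1) ^ 2) (hs : s ≤ m) : 2 * (m - s) ≤ r ^ 2 := by
  by_contra h
  push_neg at h
  have h4 : 2 * s + r ^ 2 + 1 ≤ 2 * m := by omega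
  have h5 : r ^ 2 + 1 ≤ s * s := by nlinarith
  have h6 : s ≤ r := by nlinarith
  have h7 : s * s ≤ r * r := Nat.mul_le_mul h6 h6
  have : r ^ 2 = r * r := sq r
  omega

theorem color_exists : ∀ r : ℕ, ∀ E : Graph, IsUniform 2 E → 2 * E.card ≤ r ^ 2 →
    ∃ χ : Finset ℕ → ℕ, (∀ e ∈ E, χ e < r) ∧
      ∀ c < r, ¬ IsCopy (hPath 2 1 4) (E.filter (fun e => χ e = c)) := by
  intro r
  induction r with
  | zero =>
    intro E h2 hm
    have h0 : 2 * E.card ≤ 0 := by simpa using hm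
    have hE : E = ∅ := Finset.card_eq_zero.1 (by omega)
    exact ⟨fun _ => 0, by simp [hE], fun c hc => absurd hc (by omega)⟩
  | succ r ih =>
    intro E h2 hm
    by_cases hsm : 2 * E.card ≤ r ^ 2
    · obtain ⟨χ, hbd, hχ⟩ := ih E h2 hsm
      refine ⟨χ, fun e he => lt_trans (hbd e he) (by omega), ?_⟩
      intro c hc
      by_cases hcr : c < r
      · exact hχ c hcr
      · have hcr' : c = r := by omega
        have : E.filter (fun e => χ e = c) = ∅ := by
          rw [Finset.filter_eq_empty_iff]
          intro e he
          have := hbd e he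
          omega
        rw [this]
        exact not_copy_empty
    · push_neg at hsm
      obtain ⟨D, s, hDv, hdom, hsD, hineq⟩ := vizing_dom E.card E h2 le_rfl
      obtain ⟨F, hFE, hFcard, hFnc⟩ := star_forest hDv hdom
      have hFs : F.card = s := by omega
      have hFle : F.card ≤ E.card := Finset.card_le_card hFE
      set E' := E \ F with hE'
      have hE'card : E'.card = E.card - F.card := Finset.card_sdiff_of_subset hFE
      have hE'le : 2 * E'.card ≤ r ^ 2 := by
        rw [hE'card, hFs]
        refine arith_color E.card s r (by omega) hsm hm ?_
        omega
      have h2' : IsUniform 2 E' := fun e he => h2 e (Finset.sdiff_subset he)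
      obtain ⟨χ', hbd', hχ'⟩ := ih E' h2' hE'le
      classical
      refine ⟨fun e => if e ∈ F then r else χ' e, ?_, ?_⟩
      · intro e he
        by_cases hf : e ∈ F
        · simp [hf]
        · simp only [hf, if_neg, if_false]
          have : e ∈ E' := Finset.mem_sdiff.2 ⟨he, hf⟩
          have := hbd' e this
          omega
      · intro c hc
        by_cases hcr : c = r
        · rw [hcr]
          have heq : E.filter (fun e => (if e ∈ F then r else χ' e) = r) = F := by
            ext e
            rw [Finset.mem_filter]
            constructor
            · rintro ⟨he, hif⟩
              by_cases hf : e ∈ F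
              · exact hf
              · exfalso
                rw [if_neg hf] at hif
                have : e ∈ E' := Finset.mem_sdiff.2 ⟨he, hf⟩
                have := hbd' e this
                omega
            · intro hf
              exact ⟨hFE hf, by rw [if_pos hf]⟩
          rw [heq]
          exact hFnc
        · have hcr' : c < r := by omega
          have heq : E.filter (fun e => (if e ∈ F then r else χ' e) = c)
              = E'.filter (fun e => χ' e = c) := by
            ext e
            rw [Finset.mem_filter, Finset.mem_filter, hE', Finset.mem_sdiff]
            constructor
            · rintro ⟨he, hif⟩
              by_cases hf : e ∈ F
              · rw [if_pos hf] at hif; omega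
              · rw [if_neg hf] at hif
                exact ⟨⟨he, hf⟩, hif⟩
            · rintro ⟨⟨he, hf⟩, hc'⟩
              exact ⟨he, by rw [if_neg hf]; exact hc'⟩
          rw [heq]
          exact hχ' c hcr'


lemma copy_of_path {E : Graph} {a b c d : ℕ} (hab : a ≠ b) (hac : a ≠ c) (had : a ≠ d)
    (hbc : b ≠ c) (hbd : b ≠ d) (hcd : c ≠ d) (h1 : ({a,b} : Finset ℕ) ∈ E)
    (h2 : ({b,c} : Finset ℕ) ∈ E) (h3 : ({c,d} : Finset ℕ) ∈ E) :
    IsCopy (hPath 2 1 4) E :=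
  (copy_iff E).2 ⟨a, b, c, d, hab, hac, had, hbc, hbd, hcd, h1, h2, h3⟩

theorem p4_of_many : ∀ (n : ℕ) (V : Finset ℕ) (E : Graph), IsUniform 2 E → hVerts E ⊆ V →
    V.card ≤ n → V.card < E.card → IsCopy (hPath 2 1 4) E := by
  intro n
  induction n with
  | zero =>
    intro V E h2 hVE hVn hVc
    exfalso
    have hV : V = ∅ := Finset.card_eq_zero.1 (by omega)
    obtain ⟨e, he⟩ := Finset.card_pos.1 (by omega : 0 < E.card)
    obtain ⟨x, hx⟩ := Finset.card_pos.1 (by rw [h2 e he]; omega : 0 < e.card)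
    have : x ∈ V := hVE (mem_verts.2 ⟨e, he, hx⟩)
    simp [hV] at this
  | succ n ih =>
    intro V E h2 hVE hVn hVc
    by_cases hlow : ∃ v ∈ V, deg E v ≤ 1
    · obtain ⟨v, hvV, hvdeg⟩ := hlow
      set E' := E.filter (fun e => v ∉ e) with hE'
      have hsubE' : E' ⊆ E := Finset.filter_subset _ _
      have h2' : IsUniform 2 E' := fun e he => h2 e (hsubE' he)
      have hcardE' : E'.card + deg E v = E.card := by
        rw [hE', Finset.filter_not, Finset.card_sdiff_of_subset (Finset.filter_subset _ _)]
        have h := Finset.card_filter_le E (fun e => v ∈ e)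
        rw [deg, star]
        omega
      have hVE' : hVerts E' ⊆ V.erase v := by
        intro x hx
        obtain ⟨e, he, hxe⟩ := mem_verts.1 hx
        rw [Finset.mem_erase]
        have hve : v ∉ e := (Finset.mem_filter.1 he).2
        exact ⟨fun h => hve (h ▸ hxe), hVE (mem_verts.2 ⟨e, hsubE' he, hxe⟩)⟩
      have hVe : (V.erase v).card = V.card - 1 := Finset.card_erase_of_mem hvV
      have hVpos : 1 ≤ V.card := Finset.card_pos.2 ⟨v, hvV⟩
      exact copy_mono hsubE' (ih (V.erase v) E' h2' hVE' (by omega) (by omega))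
    · push_neg at hlow
      -- all degrees ≥ 2; find a vertex of degree ≥ 3
      have hhs : ∑ w ∈ V, (E.filter (fun e => w ∈ e)).card = 2 * E.card := by
        rw [count_sum]
        have hall : ∀ e ∈ E, (e ∩ V).card = 2 := by
          intro e he
          rw [Finset.inter_eq_left.2 (fun x hx => hVE (edge_subset_verts he hx)), h2 e he]
        rw [Finset.sum_congr rfl hall, Finset.sum_const, smul_eq_mul, mul_comm]
      have hbig : ∃ v ∈ V, 3 ≤ deg E v := by
        by_contra hcon
        push_neg at hcon
        have : ∑ w ∈ V, (E.filter (fun e => w ∈ e)).card ≤ V.card • 2 :=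
          Finset.sum_le_card_nsmul _ _ _ (fun w hw => by
            have := hcon w hw
            rw [deg, star] at this
            omega)
        rw [smul_eq_mul] at this
        omega
      obtain ⟨v, hvV, hv3⟩ := hbig
      have hn3 : 2 < (nbrs E v).card := by rw [card_nbrs h2]; omega
      obtain ⟨a, b, c, ha, hb, hc, hab, hac, hbc⟩ := Finset.two_lt_card_iff.1 hn3
      have hav : a ∈ hVerts E := nbrs_subset_verts ha
      have hda : 2 ≤ deg E a := hlow a (hVE hav)
      have hna2 : 1 < (nbrs E a).card := by rw [card_nbrs h2]; omega
      have hva : v ∈ nbrs E a := nbrs_symm ha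
      obtain ⟨x, hx, hxv⟩ := Finset.exists_mem_ne hna2 v
      -- edges
      have hEva : ({v, a} : Finset ℕ) ∈ E := ((mem_nbrs_iff_edge h2).1 ha).2
      have hEvb : ({v, b} : Finset ℕ) ∈ E := ((mem_nbrs_iff_edge h2).1 hb).2
      have hEvc : ({v, c} : Finset ℕ) ∈ E := ((mem_nbrs_iff_edge h2).1 hc).2
      have hEax : ({a, x} : Finset ℕ) ∈ E := ((mem_nbrs_iff_edge h2).1 hx).2
      have hanv : a ≠ v := (mem_nbrs.1 ha).1
      have hbnv : b ≠ v := (mem_nbrs.1 hb).1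
      have hcnv : c ≠ v := (mem_nbrs.1 hc).1
      have hxna : x ≠ a := (mem_nbrs.1 hx).1
      by_cases hxb : x = b
      · -- path c v a b
        refine copy_of_path hcnv hac.symm ?_ hanv.symm (Ne.symm hbnv) hab
          (by rw [Finset.pair_comm]; exact hEvc) hEva (hxb ▸ hEax)
        · rw [hxb] at hxna; exact hbc.symm
      · by_cases hxc : x = c
        · -- path b v a c
          refine copy_of_path hbnv hab.symm ?_ hanv.symm (Ne.symm hcnv) hac
            (by rw [Finset.pair_comm]; exact hEvb) hEva (hxc ▸ hEax)
          · rw [hxc] at hxna; exact hbc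
        · -- path b v a x
          refine copy_of_path hbnv hab.symm ?_ hanv.symm (Ne.symm hxv) (Ne.symm hxna)
            (by rw [Finset.pair_comm]; exact hEvb) hEva hEax
          · intro h; exact hxb (h.symm)

def KK (n : ℕ) : Graph := Finset.powersetCard 2 (Finset.range n)

lemma KK_unif (n : ℕ) : IsUniform 2 (KK n) := fun e he => (Finset.mem_powersetCard.1 he).2

lemma KK_verts (n : ℕ) : hVerts (KK n) ⊆ Finset.range n := by
  intro x hx
  obtain ⟨e, he, hxe⟩ := mem_verts.1 hx
  exact (Finset.mem_powersetCard.1 he).1 hxe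

lemma KK_card (r : ℕ) : (KK (2 * r + 2)).card = (r + 1) * (2 * r + 1) := by
  rw [KK, Finset.card_powersetCard, Finset.card_range, Nat.choose_two_right]
  have h0 : 2 * r + 2 - 1 = 2 * r + 1 := by omega
  rw [h0]
  have h1 : (2 * r + 2) * (2 * r + 1) = 2 * ((r + 1) * (2 * r + 1)) := by ring
  rw [h1]
  omega

lemma K_arrows (r : ℕ) (hr : 1 ≤ r) : Arrows r (KK (2 * r + 2)) (hPath 2 1 4) := by
  intro χ
  have htot : (KK (2 * r + 2)).card
      = ∑ c ∈ (Finset.univ : Finset (Fin r)), ((KK (2 * r + 2)).filter (fun e => χ e = c)).card :=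
    Finset.card_eq_sum_card_fiberwise (fun x _ => Finset.mem_univ (χ x))
  have hbig : ∃ c : Fin r, 2 * r + 2 < ((KK (2 * r + 2)).filter (fun e => χ e = c)).card := by
    by_contra hcon
    push_neg at hcon
    have hsum : ∑ c ∈ (Finset.univ : Finset (Fin r)),
        ((KK (2 * r + 2)).filter (fun e => χ e = c)).card ≤ r * (2 * r + 2) := by
      have := Finset.sum_le_card_nsmul (Finset.univ : Finset (Fin r))
        (fun c => ((KK (2 * r + 2)).filter (fun e => χ e = c)).card) (2 * r + 2)
        (fun c _ => hcon c)
      simpa [Finset.card_univ, smul_eq_mul] using this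
    rw [KK_card] at htot
    nlinarith
  obtain ⟨c, hc⟩ := hbig
  refine ⟨c, p4_of_many (2 * r + 2) (Finset.range (2 * r + 2)) _ ?_ ?_ (by simp) (by simpa)⟩
  · exact fun e he => KK_unif _ e (Finset.filter_subset _ _ he)
  · intro x hx
    obtain ⟨e, he, hxe⟩ := mem_verts.1 hx
    exact KK_verts _ (mem_verts.2 ⟨e, Finset.filter_subset _ _ he, hxe⟩)

end SR


theorem stmt3 (r : ℕ) (hr : 2 ≤ r) :
    (r : ℝ) ^ 2 / 2 < sizeRamsey 2 r (hPath 2 1 4) ∧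
      sizeRamsey 2 r (hPath 2 1 4) ≤ (r + 1) * (2 * r + 1) := by
  classical
  have hmem : (r + 1) * (2 * r + 1) ∈
      {m | ∃ G : Finset (Finset ℕ), IsUniform 2 G ∧ Arrows r G (hPath 2 1 4) ∧ G.card = m} :=
    ⟨SR.KK (2 * r + 2), SR.KK_unif _, SR.K_arrows r (by omega), SR.KK_card r⟩
  have hub : sizeRamsey 2 r (hPath 2 1 4) ≤ (r + 1) * (2 * r + 1) := Nat.sInf_le hmem
  have hlb : ∀ m ∈ {m | ∃ G : Finset (Finset ℕ),
      IsUniform 2 G ∧ Arrows r G (hPath 2 1 4) ∧ G.card = m}, r ^ 2 < 2 * m := by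
    rintro m ⟨G, hunif, harr, rfl⟩
    by_contra hcon
    push_neg at hcon
    obtain ⟨χ, hbd, hχ⟩ := SR.color_exists r G hunif hcon
    have hrpos : 0 < r := by omega
    obtain ⟨c, hcopy⟩ := harr (fun e => if h : χ e < r then ⟨χ e, h⟩ else ⟨0, hrpos⟩)
    apply hχ c.val c.isLt
    have heq : (G.filter fun e => (if h : χ e < r then (⟨χ e, h⟩ : Fin r) else ⟨0, hrpos⟩) = c)
        = G.filter (fun e => χ e = c.val) := by
      apply Finset.filter_congr
      intro e he
      have hlt := hbd e he
      simp only [dif_pos hlt]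
      constructor
      · intro h
        exact congrArg Fin.val h
      · intro h
        exact Fin.ext h
    rw [heq] at hcopy
    exact hcopy
  have hSne : {m | ∃ G : Finset (Finset ℕ),
      IsUniform 2 G ∧ Arrows r G (hPath 2 1 4) ∧ G.card = m}.Nonempty := ⟨_, hmem⟩
  have hInf := Nat.sInf_mem hSne
  have hlow : r ^ 2 < 2 * sizeRamsey 2 r (hPath 2 1 4) := hlb _ hInf
  refine ⟨?_, hub⟩
  rw [div_lt_iff₀ (by norm_num : (0:ℝ) < 2)]
  have hlow' : r ^ 2 < sizeRamsey 2 r (hPath 2 1 4) * 2 := by omega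
  exact_mod_cast hlow'
end

section
/- For all r ≥ 2, k ≥ 2, 1 ≤ ℓ ≤ k-1 and all n of the form n = ℓ + m(k-ℓ) with m ≥ 1: R_r(P_n^{(k,ℓ)}) > (r-1)·⌈(n-ℓ)/((k-ℓ)·⌈k/(k-ℓ)⌉)⌉ + n − r ≥ (1 + (r-1)/((k-ℓ)·⌈k/(k-ℓ)⌉))·n − 2r + 1. In particular, when (k-ℓ) divides k, R_r(P_n^{(k,ℓ)}) > ((r-1+k)/k)·n − 2r + 1, and when 1 ≤ ℓ ≤ k/2, R_r(P_n^{(k,ℓ)}) > ((r-1+2(k-ℓ))/(2(k-ℓ)))·n − 2r + 1. -/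
open Finset

-- ## Auxiliary development


/-- `S` is homogeneous for coloring `χ` on `k`-subsets. -/
def Homog (r k : ℕ) (χ : Finset ℕ → Fin r) (S : Finset ℕ) : Prop :=
  ∃ c, ∀ t ⊆ S, t.card = k → χ t = c

lemma ramsey (k r : ℕ) (hr : 0 < r) :
    ∀ n, ∃ N, ∀ (χ : Finset ℕ → Fin r) (X : Finset ℕ), N ≤ X.card →
      ∃ S ⊆ X, S.card = n ∧ Homog r k χ S := by
  induction k with
  | zero =>
    intro n
    refine ⟨n, fun χ X hX => ?_⟩
    obtain ⟨S, hS, hcard⟩ := Finset.exists_subset_card_eq hX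
    exact ⟨S, hS, hcard, χ ∅, fun t _ ht => by rw [Finset.card_eq_zero.1 ht]⟩
  | succ k ih =>
    intro n
    -- F s : threshold for homogeneous sets of size s for k-subsets
    choose F hF using ih
    -- s j : size needed to extract a "pre-homogeneous" sequence of length j
    set s : ℕ → ℕ := fun j => Nat.rec 0 (fun _ prev => F prev + 1) j with hs
    have hs0 : s 0 = 0 := rfl
    have hssucc : ∀ j, s (j + 1) = F (s j) + 1 := fun j => rfl
    -- main extraction lemma
    have key : ∀ (χ : Finset ℕ → Fin r) (j : ℕ) (X : Finset ℕ), s j ≤ X.card →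
        ∃ A ⊆ X, A.card = j ∧ ∃ col : ℕ → Fin r,
          ∀ t ⊆ A, t.card = k + 1 → ∀ ht : t.Nonempty, χ t = col (t.min' ht) := by
      intro χ j
      induction j with
      | zero =>
        intro X _
        exact ⟨∅, empty_subset _, rfl, fun _ => ⟨0, hr⟩, fun t ht htc htne => by
          simp [Finset.subset_empty.1 ht] at htne⟩
      | succ j ihj =>
        intro X hX
        rw [hssucc] at hX
        have hXne : X.Nonempty := Finset.card_pos.1 (by omega)
        set a := X.min' hXne with ha
        have haX : a ∈ X := X.min'_mem hXne
        have hcard : F (s j) ≤ (X.erase a).card := by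
          rw [Finset.card_erase_of_mem haX]; omega
        obtain ⟨Y, hYsub, hYcard, c, hc⟩ := hF (s j) (fun t => χ (insert a t)) (X.erase a) hcard
        obtain ⟨A', hA'sub, hA'card, col', hcol'⟩ := ihj Y (le_of_eq hYcard.symm)
        have hA'X : A' ⊆ X.erase a := hA'sub.trans hYsub
        have haA' : a ∉ A' := fun h => (Finset.mem_erase.1 (hA'X h)).1 rfl
        have halt : ∀ b ∈ A', a < b := fun b hb => by
          have hbX := Finset.mem_erase.1 (hA'X hb)
          exact lt_of_le_of_ne (X.min'_le b hbX.2) (Ne.symm hbX.1)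
        refine ⟨insert a A', Finset.insert_subset haX (hA'X.trans (Finset.erase_subset _ _)),
          by rw [Finset.card_insert_of_notMem haA', hA'card], Function.update col' a c, ?_⟩
        intro t ht htc htne
        by_cases hat : a ∈ t
        · have hmin : t.min' htne = a := by
            refine le_antisymm (t.min'_le a hat) (Finset.le_min' _ _ _ fun b hb => ?_)
            rcases Finset.mem_insert.1 (ht hb) with rfl | hb'
            · exact le_rfl
            · exact (halt b hb').le
          have hte : t.erase a ⊆ Y := by
            intro x hx
            have hx' := Finset.mem_erase.1 hx
            rcases Finset.mem_insert.1 (ht hx'.2) with rfl | h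
            · exact absurd rfl hx'.1
            · exact hA'sub h
          have : χ (insert a (t.erase a)) = c :=
            hc _ hte (by rw [Finset.card_erase_of_mem hat, htc]; omega)
          rw [Finset.insert_erase hat] at this
          rw [hmin, this, Function.update_self]
        · have htA' : t ⊆ A' := fun x hx => by
            rcases Finset.mem_insert.1 (ht hx) with rfl | h
            · exact absurd hx hat
            · exact h
          have hne : t.min' htne ≠ a := fun h => hat (h ▸ t.min'_mem htne)
          rw [Function.update_of_ne hne]
          exact hcol' t htA' htc htne
    refine ⟨s (r * n + 1), fun χ X hX => ?_⟩
    obtain ⟨A, hAX, hAcard, col, hcol⟩ := key χ (r * n + 1) X hX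
    -- pigeonhole on col over A
    have : ∃ c : Fin r, n ≤ (A.filter fun x => col x = c).card := by
      by_contra hcon
      push_neg at hcon
      have hsum : A.card = ∑ c : Fin r, (A.filter fun x => col x = c).card :=
        Finset.card_eq_sum_card_fiberwise (fun x _ => Finset.mem_univ (col x))
      have : A.card ≤ ∑ _c : Fin r, n :=
        hsum.le.trans (Finset.sum_le_sum fun c _ => (hcon c).le.trans (by omega))
      simp only [Finset.sum_const, Finset.card_univ, Fintype.card_fin, smul_eq_mul] at this
      omega
    obtain ⟨c, hc⟩ := this
    obtain ⟨S, hSsub, hScard⟩ := Finset.exists_subset_card_eq hc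
    refine ⟨S, (hSsub.trans (Finset.filter_subset _ _)).trans hAX, hScard, c, ?_⟩
    intro t ht htc
    have htne : t.Nonempty := Finset.card_pos.1 (by omega)
    have := hcol t (ht.trans ((hSsub.trans (Finset.filter_subset _ _)))) htc htne
    rw [this]
    have : t.min' htne ∈ A.filter fun x => col x = c := hSsub (ht (t.min'_mem htne))
    exact (Finset.mem_filter.1 this).2

/-- The `i`-th edge of the path. -/
def pE (k l i : ℕ) : Finset ℕ := (Finset.range k).image fun j => i * (k - l) + j

lemma pE_card (k l i : ℕ) : (pE k l i).card = k := by
  rw [pE, Finset.card_image_of_injective _ (add_right_injective _), Finset.card_range]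

lemma mem_pE {k l i v : ℕ} : v ∈ pE k l i ↔ i * (k - l) ≤ v ∧ v < i * (k - l) + k := by
  simp only [pE, Finset.mem_image, Finset.mem_range]
  exact ⟨fun ⟨j, hj, e⟩ => by omega, fun h => ⟨v - i * (k - l), by omega, by omega⟩⟩

section Path
variable {k l m n : ℕ} (hl1 : 1 ≤ l) (hlk : l < k) (hm : 1 ≤ m) (hn : n = l + m * (k - l))

include hlk hn in
lemma path_div : (n - l) / (k - l) = m := by
  rw [hn, Nat.add_sub_cancel_left, Nat.mul_div_cancel _ (by omega)]

include hlk hn in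
lemma mem_hPath {e : Finset ℕ} : e ∈ hPath k l n ↔ ∃ i < m, e = pE k l i := by
  rw [hPath, path_div hlk hn, pathWithEdges]
  simp only [Finset.mem_image, Finset.mem_range, pE]
  exact ⟨fun ⟨i, hi, he⟩ => ⟨i, hi, he.symm⟩, fun ⟨i, hi, he⟩ => ⟨i, hi, he.symm⟩⟩

include hlk hm hn in
lemma pE_bound {i : ℕ} (hi : i < m) : i * (k - l) + k ≤ n := by
  have h1 : i * (k - l) ≤ (m - 1) * (k - l) := Nat.mul_le_mul_right _ (by omega)
  have h2 : m * (k - l) = (m - 1) * (k - l) + (k - l) := by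
    conv_lhs => rw [show m = (m - 1) + 1 by omega]
    rw [Nat.add_mul, one_mul]
  omega

include hlk hm hn in
lemma pE_sub_range {i : ℕ} (hi : i < m) : pE k l i ⊆ Finset.range n := by
  intro v hv
  rw [mem_pE] at hv
  rw [Finset.mem_range]
  have := pE_bound hlk hm hn hi
  omega

include hlk hm hn in
lemma path_cover {v : ℕ} (hv : v < n) : ∃ i < m, v ∈ pE k l i := by
  have hkl : 0 < k - l := by omega
  refine ⟨min (v / (k - l)) (m - 1), by omega, ?_⟩
  rw [mem_pE]
  have h1 := Nat.div_add_mod v (k - l)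
  have h2 := Nat.mod_lt v hkl
  have h3 : m * (k - l) = (m - 1) * (k - l) + (k - l) := by
    conv_lhs => rw [show m = (m - 1) + 1 by omega]
    rw [Nat.add_mul, one_mul]
  have hmc : v / (k - l) * (k - l) = (k - l) * (v / (k - l)) := Nat.mul_comm _ _
  rcases le_or_gt (v / (k - l)) (m - 1) with h | h
  · rw [min_eq_left h]
    omega
  · rw [min_eq_right h.le]
    have h4 : m * (k - l) ≤ (v / (k - l)) * (k - l) := Nat.mul_le_mul_right _ (by omega)
    omega

include hlk hm hn in
lemma hVerts_hPath : hVerts (hPath k l n) = Finset.range n := by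
  ext v
  simp only [hVerts, Finset.mem_biUnion, id_eq]
  constructor
  · rintro ⟨e, he, hv⟩
    obtain ⟨i, hi, rfl⟩ := (mem_hPath hlk hn).1 he
    exact pE_sub_range hlk hm hn hi hv
  · intro hv
    obtain ⟨i, hi, hvi⟩ := path_cover hlk hm hn (Finset.mem_range.1 hv)
    exact ⟨pE k l i, (mem_hPath hlk hn).2 ⟨i, hi, rfl⟩, hvi⟩

end Path

lemma exists_arrows {k l m n r : ℕ} (hlk : l < k) (hm : 1 ≤ m)
    (hn : n = l + m * (k - l)) (hr : 0 < r) :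
    ∃ G : Finset (Finset ℕ), IsUniform k G ∧ Arrows r G (hPath k l n) := by
  obtain ⟨N, hN⟩ := ramsey k r hr n
  refine ⟨Finset.powersetCard k (Finset.range N), fun e he => (Finset.mem_powersetCard.1 he).2, ?_⟩
  intro χ
  obtain ⟨S, hSsub, hScard, c, hc⟩ := hN χ (Finset.range N) (by rw [Finset.card_range])
  refine ⟨c, ?_⟩
  set g := S.orderEmbOfFin hScard with hg
  set f : ℕ → ℕ := fun x => if h : x < n then g ⟨x, h⟩ else 0 with hf
  have hfS : ∀ x, x < n → f x ∈ S := fun x hx => by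
    rw [hf]; simp only [dif_pos hx]; exact S.orderEmbOfFin_mem hScard _
  have hinj : ∀ x < n, ∀ y < n, f x = f y → x = y := by
    intro x hx y hy hxy
    rw [hf] at hxy
    simp only [dif_pos hx, dif_pos hy] at hxy
    exact Fin.mk.injEq .. ▸ (g.injective hxy)
  refine ⟨f, ?_, ?_⟩
  · rw [hVerts_hPath hlk hm hn]
    intro x hx y hy hxy
    simp only [Finset.coe_range, Set.mem_Iio] at hx hy
    exact hinj x hx y hy hxy
  · intro e he
    obtain ⟨i, hi, rfl⟩ := (mem_hPath hlk hn).1 he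
    have hsub : (pE k l i).image f ⊆ S := by
      intro y hy
      obtain ⟨x, hx, rfl⟩ := Finset.mem_image.1 hy
      exact hfS x (Finset.mem_range.1 (pE_sub_range hlk hm hn hi hx))
    have hcard : ((pE k l i).image f).card = k := by
      rw [Finset.card_image_of_injOn, pE_card]
      intro x hx y hy hxy
      exact hinj x (Finset.mem_range.1 (pE_sub_range hlk hm hn hi hx))
        y (Finset.mem_range.1 (pE_sub_range hlk hm hn hi hy)) hxy
    refine Finset.mem_filter.2 ⟨Finset.mem_powersetCard.2 ⟨hsub.trans hSsub, hcard⟩, ?_⟩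
    exact hc _ hsub hcard

lemma lower_bound {k l m n r : ℕ} (hk : 2 ≤ k) (hr : 2 ≤ r) (hlk : l < k)
    (hm : 1 ≤ m) (hn : n = l + m * (k - l)) (hl1 : 1 ≤ l)
    {G : Finset (Finset ℕ)} (hu : IsUniform k G) (ha : Arrows r G (hPath k l n)) :
    (r - 1) * ((n - l) ⌈/⌉ ((k - l) * (k ⌈/⌉ (k - l))) - 1) + (n - 1) < (hVerts G).card := by
  set V := hVerts G with hV
  set d := k ⌈/⌉ (k - l) with hdd
  set q := (n - l) ⌈/⌉ ((k - l) * d) with hqq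
  set p := q - 1 with hpp
  have hkl : 0 < k - l := by omega
  have hd : d = (k - 1) / (k - l) + 1 := by
    rw [hdd, Nat.ceilDiv_eq_add_pred_div, show k + (k - l) - 1 = (k - 1) + (k - l) by omega,
      Nat.add_div_right _ hkl]
  have hD : 0 < (k - l) * d := Nat.mul_pos hkl (by rw [hd]; exact Nat.succ_pos _)
  have hnl : n - l = m * (k - l) := by omega
  have hnl1 : 1 ≤ n - l := by rw [hnl]; exact Nat.mul_pos (by omega) hkl
  have hq1 : 1 ≤ q := by
    by_contra h
    have h0 : q ≤ 0 := by omega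
    rw [hqq, ceilDiv_le_iff_le_mul hD, Nat.mul_zero] at h0
    omega
  have hedge_sub : ∀ e ∈ G, e ⊆ V := fun e he x hx => Finset.mem_biUnion.2 ⟨e, he, hx⟩
  set idx : ℕ → ℕ := fun x => (V.filter (· < x)).card with hidx
  have idx_mono : ∀ x y, x ≤ y → idx x ≤ idx y := by
    intro x y hxy
    refine Finset.card_le_card fun z hz => ?_
    have := Finset.mem_filter.1 hz
    exact Finset.mem_filter.2 ⟨this.1, lt_of_lt_of_le this.2 hxy⟩
  have idx_strict : ∀ x ∈ V, ∀ y, x < y → idx x < idx y := by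
    intro x hxV y hxy
    have hins : insert x (V.filter (· < x)) ⊆ V.filter (· < y) := by
      intro z hz
      rcases Finset.mem_insert.1 hz with rfl | hz'
      · exact Finset.mem_filter.2 ⟨hxV, hxy⟩
      · have := Finset.mem_filter.1 hz'
        exact Finset.mem_filter.2 ⟨this.1, this.2.trans hxy⟩
    have hxni : x ∉ V.filter (· < x) := fun h => by simp at h
    have h2 := Finset.card_le_card hins
    rw [Finset.card_insert_of_notMem hxni] at h2
    exact h2
  have idx_injOn : ∀ x ∈ V, ∀ y ∈ V, idx x = idx y → x = y := by
    intro x hx y hy hxy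
    rcases lt_trichotomy x y with h | h | h
    · exact absurd hxy (idx_strict x hx y h).ne
    · exact h
    · exact absurd hxy.symm (idx_strict y hy x h).ne
  have idx_lt : ∀ x ∈ V, idx x < V.card := by
    intro x hx
    refine Finset.card_lt_card ((Finset.ssubset_iff_of_subset (Finset.filter_subset _ _)).2
      ⟨x, hx, fun h => by simp at h⟩)
  by_contra hcon
  push_neg at hcon
  -- the coloring
  set χ : Finset ℕ → Fin r := fun e =>
    if h : e.Nonempty then (⟨min (idx (e.min' h) / p) (r - 1), by omega⟩ : Fin r)
    else ⟨0, by omega⟩ with hχ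
  obtain ⟨c, f, hfinj, hfe⟩ := ha χ
  rw [hVerts_hPath hlk hm hn] at hfinj
  have hinj : ∀ x < n, ∀ y < n, f x = f y → x = y := by
    intro x hx y hy hxy
    exact hfinj (by simpa using hx) (by simpa using hy) hxy
  have hE : ∀ i < m, (pE k l i).image f ∈ G ∧ χ ((pE k l i).image f) = c := by
    intro i hi
    have := hfe _ ((mem_hPath hlk hn).2 ⟨i, hi, rfl⟩)
    exact Finset.mem_filter.1 this
  have hfV : ∀ v < n, f v ∈ V := by
    intro v hv
    obtain ⟨i, hi, hvi⟩ := path_cover hlk hm hn hv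
    exact hedge_sub _ (hE i hi).1 (Finset.mem_image_of_mem f hvi)
  have hnV : n ≤ V.card := by
    have := Finset.card_le_card_of_injOn f (fun v hv => hfV v (Finset.mem_range.1 hv))
      (fun x hx y hy => hinj x (by simpa using hx) y (by simpa using hy))
    simpa using this
  have hn1 : 1 ≤ n := by omega
  rcases eq_or_lt_of_le hq1 with hq | hq2
  · -- q = 1 : p = 0, |V| ≤ n - 1 < n
    have hp0 : p = 0 := by omega
    rw [hp0, Nat.mul_zero, Nat.zero_add] at hcon
    omega
  have hp : 0 < p := by omega
  -- extract minimum vertices of monochromatic edges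
  have key : ∀ i, i < m → ∃ a, a ∈ V ∧ (∀ v, v ∈ pE k l i → a ≤ f v) ∧
      (∃ v < n, v ∈ pE k l i ∧ f v = a) ∧ min (idx a / p) (r - 1) = (c : ℕ) := by
    intro i hi
    obtain ⟨hmem, hcol⟩ := hE i hi
    have hne : ((pE k l i).image f).Nonempty := by
      rw [← Finset.card_pos, Finset.card_image_of_injOn, pE_card]
      · omega
      · intro x hx y hy
        exact hinj x (Finset.mem_range.1 (pE_sub_range hlk hm hn hi hx))
          y (Finset.mem_range.1 (pE_sub_range hlk hm hn hi hy))
    set a := ((pE k l i).image f).min' hne with haa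
    have haim : a ∈ (pE k l i).image f := Finset.min'_mem _ _
    obtain ⟨v, hv, hva⟩ := Finset.mem_image.1 haim
    refine ⟨a, hedge_sub _ hmem haim, ?_, ⟨v, Finset.mem_range.1 (pE_sub_range hlk hm hn hi hv),
      hv, hva⟩, ?_⟩
    · exact fun w hw => Finset.min'_le _ _ (Finset.mem_image_of_mem f hw)
    · rw [hχ] at hcol
      simp only [dif_pos hne] at hcol
      exact congrArg Fin.val hcol
  choose a haV hale hasur hacol using key
  have hcle : (c : ℕ) ≤ r - 1 := by have := c.isLt; omega
  rcases lt_or_eq_of_le hcle with hcc | hcc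
  · -- color c < r - 1 : every edge meets a small set A
    set A := V.filter (fun x => (c : ℕ) * p ≤ idx x ∧ idx x < (c : ℕ) * p + p) with hA
    have hAcard : A.card ≤ p := by
      have := Finset.card_le_card_of_injOn
        (f := idx) (s := A) (t := Finset.Ico ((c : ℕ) * p) ((c : ℕ) * p + p))
        (fun x hx => by
          have := Finset.mem_filter.1 hx
          exact Finset.mem_Ico.2 ⟨this.2.1, this.2.2⟩)
        (fun x hx y hy h => idx_injOn x (Finset.mem_filter.1 (Finset.mem_coe.1 hx)).1
          y (Finset.mem_filter.1 (Finset.mem_coe.1 hy)).1 h)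
      simpa using this
    set g : ℕ → ℕ := fun i => if h : i < m then a i h else 0 with hg
    have himA : (Finset.range m).image g ⊆ A := by
      intro b hb
      obtain ⟨i, hi, rfl⟩ := Finset.mem_image.1 hb
      have hi' := Finset.mem_range.1 hi
      rw [hg]
      simp only [dif_pos hi']
      have hu2 : idx (a i hi') / p = (c : ℕ) := by
        have := hacol i hi'
        omega
      refine Finset.mem_filter.2 ⟨haV i hi', ?_, ?_⟩
      · exact (Nat.le_div_iff_mul_le hp).1 hu2.ge
      · have h3 : idx (a i hi') < ((c : ℕ) + 1) * p := (Nat.div_lt_iff_lt_mul hp).1 (by omega)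
        rw [Nat.succ_mul] at h3
        omega
    have hfib : ∀ b ∈ (Finset.range m).image g,
        ((Finset.range m).filter (fun i => g i = b)).card ≤ d := by
      intro b _
      set Fb := (Finset.range m).filter (fun i => g i = b) with hFb
      rcases Finset.eq_empty_or_nonempty Fb with he | hne
      · rw [he]; simp
      set i0 := Fb.min' hne with hi0
      have hi0m : i0 ∈ Fb := Finset.min'_mem _ _
      have hi0lt : i0 < m := Finset.mem_range.1 (Finset.mem_filter.1 hi0m).1
      obtain ⟨v0, hv0n, hv0e, hv0a⟩ := hasur i0 hi0lt
      have hgi0 : a i0 hi0lt = b := by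
        have := (Finset.mem_filter.1 hi0m).2
        rw [hg] at this; simpa [dif_pos hi0lt] using this
      have hsub : Fb ⊆ Finset.Icc i0 (i0 + (k - 1) / (k - l)) := by
        intro i hifb
        have him : i < m := Finset.mem_range.1 (Finset.mem_filter.1 hifb).1
        obtain ⟨vi, hvin, hvie, hvia⟩ := hasur i him
        have hgi : a i him = b := by
          have := (Finset.mem_filter.1 hifb).2
          rw [hg] at this; simpa [dif_pos him] using this
        have hveq : vi = v0 := hinj vi hvin v0 hv0n (by rw [hvia, hv0a, hgi, hgi0])
        have h1 := mem_pE.1 hvie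
        have h2 := mem_pE.1 hv0e
        have hile : i0 ≤ i := Finset.min'_le _ _ hifb
        have hsubmul : (i - i0) * (k - l) = i * (k - l) - i0 * (k - l) := Nat.sub_mul _ _ _
        have hmul : (i - i0) * (k - l) ≤ k - 1 := by
          have hmono : i0 * (k - l) ≤ i * (k - l) := Nat.mul_le_mul_right _ hile
          omega
        have : i - i0 ≤ (k - 1) / (k - l) := (Nat.le_div_iff_mul_le hkl).2 hmul
        exact Finset.mem_Icc.2 ⟨hile, by omega⟩
      have := Finset.card_le_card hsub
      rw [Nat.card_Icc] at this
      omega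
    have hcount : m ≤ d * ((Finset.range m).image g).card := by
      have := Finset.card_le_mul_card_image (f := g) (Finset.range m) d hfib
      simpa using this
    have hmd : m ≤ d * p :=
      hcount.trans (Nat.mul_le_mul_left d ((Finset.card_le_card himA).trans hAcard))
    have : q ≤ p := by
      rw [hqq, ceilDiv_le_iff_le_mul hD, hnl]
      calc m * (k - l) ≤ d * p * (k - l) := Nat.mul_le_mul_right _ hmd
        _ = (k - l) * d * p := by ring
    omega
  · -- color c = r - 1 : all vertices squeezed in top part
    have hidxall : ∀ v < n, (r - 1) * p ≤ idx (f v) := by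
      intro v hv
      obtain ⟨i, hi, hvi⟩ := path_cover hlk hm hn hv
      have h1 : r - 1 ≤ idx (a i hi) / p := by
        have := hacol i hi
        omega
      have h2 : (r - 1) * p ≤ idx (a i hi) := (Nat.le_div_iff_mul_le hp).1 h1
      exact h2.trans (idx_mono _ _ (hale i hi v hvi))
    set W := V.filter (fun x => (r - 1) * p ≤ idx x) with hW
    have hWcard : W.card ≤ V.card - (r - 1) * p := by
      have := Finset.card_le_card_of_injOn
        (f := idx) (s := W) (t := Finset.Ico ((r - 1) * p) V.card)
        (fun x hx => by
          have h := Finset.mem_filter.1 hx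
          exact Finset.mem_Ico.2 ⟨h.2, idx_lt x h.1⟩)
        (fun x hx y hy h => idx_injOn x (Finset.mem_filter.1 (Finset.mem_coe.1 hx)).1
          y (Finset.mem_filter.1 (Finset.mem_coe.1 hy)).1 h)
      simpa using this
    have hnW : n ≤ W.card := by
      have := Finset.card_le_card_of_injOn f
        (s := Finset.range n) (t := W)
        (fun v hv => Finset.mem_filter.2 ⟨hfV v (Finset.mem_range.1 hv),
          hidxall v (Finset.mem_range.1 hv)⟩)
        (fun x hx y hy => hinj x (by simpa using hx) y (by simpa using hy))
      simpa using this
    omega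

theorem stmt7 (k r l m n : ℕ) (hk : 2 ≤ k) (hr : 2 ≤ r) (hl1 : 1 ≤ l) (hl2 : l ≤ k - 1)
    (hm : 1 ≤ m) (hn : n = l + m * (k - l)) :
    ((vertexRamsey k r (hPath k l n) : ℝ) >
        ((r : ℝ) - 1) * (((n - l) ⌈/⌉ ((k - l) * (k ⌈/⌉ (k - l))) : ℕ) : ℝ) + n - r) ∧
    (((r : ℝ) - 1) * (((n - l) ⌈/⌉ ((k - l) * (k ⌈/⌉ (k - l))) : ℕ) : ℝ) + n - r ≥
        (1 + ((r : ℝ) - 1) / ((((k - l) * (k ⌈/⌉ (k - l))) : ℕ) : ℝ)) * n - 2 * r + 1) ∧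
    ((k - l) ∣ k →
      (vertexRamsey k r (hPath k l n) : ℝ) >
        (((r : ℝ) - 1 + k) / k) * n - 2 * r + 1) ∧
    (2 * l ≤ k →
      (vertexRamsey k r (hPath k l n) : ℝ) >
        (((r : ℝ) - 1 + 2 * ((k : ℝ) - l)) / (2 * ((k : ℝ) - l))) * n - 2 * r + 1) := by
  have hlk : l < k := by omega
  have hkl : 0 < k - l := by omega
  set d := k ⌈/⌉ (k - l) with hdd
  set D := (k - l) * d with hDD
  set q := (n - l) ⌈/⌉ D with hqq
  have hd : d = (k - 1) / (k - l) + 1 := by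
    rw [hdd, Nat.ceilDiv_eq_add_pred_div, show k + (k - l) - 1 = (k - 1) + (k - l) by omega,
      Nat.add_div_right _ hkl]
  have hD0 : 0 < D := Nat.mul_pos hkl (by rw [hd]; exact Nat.succ_pos _)
  have hnl : n - l = m * (k - l) := by omega
  have hnl1 : 1 ≤ n - l := by rw [hnl]; exact Nat.mul_pos (by omega) hkl
  have hln : l ≤ n := by omega
  have hn1 : 1 ≤ n := by omega
  have hq1 : 1 ≤ q := by
    by_contra h
    have h0 : q ≤ 0 := by omega
    rw [hqq, ceilDiv_le_iff_le_mul hD0, Nat.mul_zero] at h0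
    omega
  have hkD : k ≤ D := by
    have := le_smul_ceilDiv (α := ℕ) (β := ℕ) (b := k) hkl
    simpa [smul_eq_mul] using this
  have hqD : n - l ≤ D * q := by
    have := le_smul_ceilDiv (α := ℕ) (β := ℕ) (b := n - l) hD0
    simpa [smul_eq_mul] using this
  -- the Ramsey number is attained and bounded below
  have hRam : (r - 1) * (q - 1) + (n - 1) < vertexRamsey k r (hPath k l n) := by
    obtain ⟨G0, hu0, ha0⟩ := exists_arrows hlk hm hn (show 0 < r by omega)
    have hne : {M | ∃ G : Finset (Finset ℕ), IsUniform k G ∧ Arrows r G (hPath k l n) ∧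
        (hVerts G).card = M}.Nonempty := ⟨(hVerts G0).card, G0, hu0, ha0, rfl⟩
    obtain ⟨G, hu, ha, hcard⟩ := Nat.sInf_mem hne
    rw [vertexRamsey, ← hcard]
    exact lower_bound hk hr hlk hm hn hl1 hu ha
  -- casts
  have hcast : (((r - 1) * (q - 1) + (n - 1) : ℕ) : ℝ) = ((r : ℝ) - 1) * q + n - r := by
    push_cast [Nat.cast_sub (show 1 ≤ r by omega), Nat.cast_sub hq1, Nat.cast_sub hn1]
    ring
  have part1 : (vertexRamsey k r (hPath k l n) : ℝ) > ((r : ℝ) - 1) * q + n - r := by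
    rw [← hcast]
    exact_mod_cast hRam
  have hD0R : (0 : ℝ) < (D : ℝ) := by exact_mod_cast hD0
  have hlD : (l : ℝ) ≤ (D : ℝ) := by exact_mod_cast le_trans (show l ≤ k by omega) hkD
  have hqDR : (n : ℝ) - l ≤ (D : ℝ) * q := by
    have h := hqD
    have : ((n - l : ℕ) : ℝ) ≤ ((D * q : ℕ) : ℝ) := by exact_mod_cast h
    rw [Nat.cast_sub hln] at this
    push_cast at this
    exact this
  have hr0 : (0 : ℝ) ≤ (r : ℝ) - 1 := by
    have : (2 : ℝ) ≤ r := by exact_mod_cast hr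
    linarith
  have hnle : (n : ℝ) ≤ (D : ℝ) * q + D := by linarith
  have hstep : ((r : ℝ) - 1) * n ≤ (((r : ℝ) - 1) * q + ((r : ℝ) - 1)) * D := by
    nlinarith [mul_le_mul_of_nonneg_left hnle hr0]
  have hdiv : ((r : ℝ) - 1) * n / D ≤ ((r : ℝ) - 1) * q + ((r : ℝ) - 1) :=
    (div_le_iff₀ hD0R).2 hstep
  have e2 : (1 + ((r : ℝ) - 1) / D) * n = n + ((r : ℝ) - 1) * n / D := by ring
  have part2 : ((r : ℝ) - 1) * q + n - r ≥ (1 + ((r : ℝ) - 1) / D) * n - 2 * r + 1 := by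
    rw [e2]
    linarith
  have gen : ∀ K : ℝ, (D : ℝ) = K →
      (vertexRamsey k r (hPath k l n) : ℝ) > (((r : ℝ) - 1 + K) / K) * n - 2 * r + 1 := by
    intro K hK
    have hK0 : K ≠ 0 := by rw [← hK]; exact ne_of_gt hD0R
    have e3 : ((r : ℝ) - 1 + K) / K = ((r : ℝ) - 1) / K + 1 := by
      rw [add_div, div_self hK0]
    rw [e3, ← hK]
    have := part2
    linarith [part1, part2]
  refine ⟨part1, part2, ?_, ?_⟩
  · intro hdvd
    have hDk : D = k := by
      refine le_antisymm ?_ hkD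
      have h1 : d ≤ k / (k - l) := by
        rw [hdd, ceilDiv_le_iff_le_mul hkl, Nat.mul_div_cancel' hdvd]
      calc D = (k - l) * d := hDD
        _ ≤ (k - l) * (k / (k - l)) := Nat.mul_le_mul_left _ h1
        _ = k := Nat.mul_div_cancel' hdvd
    exact gen k (by exact_mod_cast hDk)
  · intro h2l
    have hdiv1 : (k - 1) / (k - l) = 1 := Nat.div_eq_of_lt_le (by omega) (by omega)
    have hDk : D = 2 * (k - l) := by
      rw [hDD, hd, hdiv1]; ring
    have hcast2 : (D : ℝ) = 2 * ((k : ℝ) - l) := by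
      rw [hDk]
      push_cast [Nat.cast_sub (le_of_lt hlk)]
      ring
    exact gen _ hcast2
end

section
/- For all r ≥ 2, k ≥ 2 and n ≥ k: R̂_r(P_n^{(k)}) ≤ C(⌊r(k+1)n/2⌋, k) ≤ (e·r·(k+1)·n/(2k))^k, where C(a,b) denotes the binomial coefficient and e is Euler's number. -/
open Finset

namespace AW10


/-- the transversal edge associated to a choice function -/
def toEdge (k : ℕ) (g : Fin k → ℕ) : Finset ℕ :=
  (Finset.univ : Finset (Fin k)).image fun i : Fin k => (i : ℕ) + k * g i

lemma toEdge_mem {k : ℕ} {g : Fin k → ℕ} {x : ℕ} :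
    x ∈ toEdge k g ↔ ∃ i : Fin k, (i : ℕ) + k * g i = x := by
  simp [toEdge]

lemma coord_inj {k : ℕ} (i j : Fin k) (a b : ℕ)
    (h : (i : ℕ) + k * a = (j : ℕ) + k * b) : i = j ∧ a = b := by
  have hi : ((i : ℕ) + k * a) % k = (i : ℕ) := by
    rw [Nat.add_mul_mod_self_left, Nat.mod_eq_of_lt i.isLt]
  have hj : ((j : ℕ) + k * b) % k = (j : ℕ) := by
    rw [Nat.add_mul_mod_self_left, Nat.mod_eq_of_lt j.isLt]
  have hij : (i : ℕ) = (j : ℕ) := by rw [← hi, ← hj, h]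
  have hij' : i = j := Fin.ext hij
  refine ⟨hij', ?_⟩
  have hk : 0 < k := Fin.pos i
  have h2 : k * a = k * b := by omega
  exact Nat.eq_of_mul_eq_mul_left hk h2

lemma toEdge_card {k : ℕ} (g : Fin k → ℕ) : (toEdge k g).card = k := by
  rw [toEdge, Finset.card_image_of_injective _ (fun i j h => (coord_inj i j (g i) (g j) h).1)]
  simp

lemma toEdge_inj {k : ℕ} : Function.Injective (toEdge k) := by
  intro g g' h
  funext i
  have : (i : ℕ) + k * g i ∈ toEdge k g' := by
    rw [← h, toEdge_mem]; exact ⟨i, rfl⟩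
  rw [toEdge_mem] at this
  obtain ⟨j, hj⟩ := this
  obtain ⟨rfl, hv⟩ := coord_inj j i (g' j) (g i) hj
  exact hv.symm

/-- the set of choice functions with values `< t` -/
def Ffun (k t : ℕ) : Finset (Fin k → ℕ) := Fintype.piFinset fun _ : Fin k => Finset.range t

lemma mem_Ffun {k t : ℕ} {g : Fin k → ℕ} : g ∈ Ffun k t ↔ ∀ i, g i < t := by
  simp [Ffun]

lemma card_Ffun {k t : ℕ} : (Ffun k t).card = t ^ k := by
  simp [Ffun, Fintype.card_piFinset]



/-- degree of a "slot": number of values `a < t` such that modifying `g` at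
coordinate `i` to `a` lands in `K`. -/
def dg (k t : ℕ) (K : Finset (Fin k → ℕ)) (i : Fin k) (g : Fin k → ℕ) : ℕ :=
  ((range t).filter (fun a => Function.update g i a ∈ K)).card

/-- the slots (normalized) of a family -/
def slots (k : ℕ) (H : Finset (Fin k → ℕ)) : Finset (Fin k × (Fin k → ℕ)) :=
  H.biUnion (fun g => (Finset.univ : Finset (Fin k)).image (fun i => (i, Function.update g i 0)))

lemma dg_update_zero (k t : ℕ) (K : Finset (Fin k → ℕ)) (i : Fin k) (g : Fin k → ℕ) :
    dg k t K i (Function.update g i 0) = dg k t K i g := by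
  unfold dg
  congr 1
  apply filter_congr
  intro a _
  rw [Function.update_idem]

lemma dg_pos (k t : ℕ) (K : Finset (Fin k → ℕ)) (i : Fin k) (g : Fin k → ℕ)
    (hg : g ∈ K) (hgt : g ∈ Ffun k t) : 1 ≤ dg k t K i g := by
  have : g i ∈ (range t).filter (fun a => Function.update g i a ∈ K) := by
    rw [mem_filter, mem_range]
    exact ⟨mem_Ffun.1 hgt i, by rwa [Function.update_eq_self]⟩
  have := card_pos.2 ⟨g i, this⟩
  exact this

/-- the "star" of a slot: elements of H agreeing with g₀ off i₀ -/
lemma card_star (k t : ℕ) (H : Finset (Fin k → ℕ)) (hH : H ⊆ Ffun k t)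
    (i₀ : Fin k) (g₀ : Fin k → ℕ) :
    (H.filter (fun g => Function.update g i₀ 0 = Function.update g₀ i₀ 0)).card
      = dg k t H i₀ g₀ := by
  apply Finset.card_bij (fun g _ => g i₀)
  · intro g hg
    rw [mem_filter] at hg
    rw [mem_filter, mem_range]
    constructor
    · exact mem_Ffun.1 (hH hg.1) i₀
    · have : Function.update g₀ i₀ (g i₀) = g := by
        funext x
        by_cases hx : x = i₀
        · subst hx; simp
        · rw [Function.update_of_ne hx]
          have := congrFun hg.2 x
          rw [Function.update_of_ne hx, Function.update_of_ne hx] at this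
          exact this.symm
      rw [this]
      exact hg.1
  · intro g hg g' hg' hval
    rw [mem_filter] at hg hg'
    funext x
    by_cases hx : x = i₀
    · subst hx; exact hval
    · have h1 := congrFun hg.2 x
      have h2 := congrFun hg'.2 x
      rw [Function.update_of_ne hx] at h1 h2
      rw [Function.update_of_ne hx] at h1 h2
      rw [h1, h2]
  · intro a ha
    rw [mem_filter, mem_range] at ha
    refine ⟨Function.update g₀ i₀ a, ?_, by simp⟩
    rw [mem_filter]
    exact ⟨ha.2, by rw [Function.update_idem]⟩

lemma slots_mono {k : ℕ} {H H' : Finset (Fin k → ℕ)} (h : H' ⊆ H) :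
    slots k H' ⊆ slots k H := by
  apply biUnion_subset_biUnion_of_subset_left _ h

/-- cleaning: extract a subfamily where every slot through a member has degree > θ,
losing at most θ per slot. -/
lemma clean (k t θ : ℕ) : ∀ (s : ℕ) (H : Finset (Fin k → ℕ)), H ⊆ Ffun k t →
    (slots k H).card ≤ s →
    ∃ K, K ⊆ H ∧ (∀ g ∈ K, ∀ i, θ + 1 ≤ dg k t K i g) ∧
      H.card ≤ K.card + θ * (slots k H).card := by
  intro s
  induction s with
  | zero =>
    intro H hH hs
    by_cases hk0 : k = 0
    · subst hk0
      exact ⟨H, Subset.refl _, fun g _ i => i.elim0, Nat.le_add_right _ _⟩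
    have hk : 0 < k := Nat.pos_of_ne_zero hk0
    -- slots empty → H empty
    have : H = ∅ := by
      by_contra hne
      obtain ⟨g, hg⟩ := nonempty_iff_ne_empty.2 hne
      have : ((⟨0, hk⟩ : Fin k), Function.update g ⟨0, hk⟩ 0) ∈ slots k H := by
        rw [slots, mem_biUnion]
        exact ⟨g, hg, mem_image.2 ⟨⟨0, hk⟩, mem_univ _, rfl⟩⟩
      have := card_pos.2 ⟨_, this⟩
      omega
    subst this
    exact ⟨∅, Subset.refl _, by simp, by simp⟩
  | succ s ih =>
    intro H hH hs
    by_cases good : ∀ g ∈ H, ∀ i, θ + 1 ≤ dg k t H i g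
    · exact ⟨H, Subset.refl _, good, Nat.le_add_right _ _⟩
    · push_neg at good
      obtain ⟨g₀, hg₀, i₀, hbad⟩ := good
      have hbad' : dg k t H i₀ g₀ ≤ θ := by omega
      set st := H.filter (fun g => Function.update g i₀ 0 = Function.update g₀ i₀ 0) with hst
      set H' := H \ st with hH'
      have hsub : H' ⊆ H := sdiff_subset
      have hslotmem : (i₀, Function.update g₀ i₀ 0) ∈ slots k H := by
        rw [slots, mem_biUnion]
        exact ⟨g₀, hg₀, mem_image.2 ⟨i₀, mem_univ _, rfl⟩⟩
      have hslotnot : (i₀, Function.update g₀ i₀ 0) ∉ slots k H' := by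
        rw [slots, mem_biUnion]
        rintro ⟨g, hg, hmem⟩
        rw [mem_image] at hmem
        obtain ⟨i, _, hi⟩ := hmem
        have hii : i = i₀ := by
          have := congrArg Prod.fst hi; simpa using this
        subst hii
        have hupd : Function.update g i 0 = Function.update g₀ i 0 := by
          have := congrArg Prod.snd hi; simpa using this
        rw [hH', mem_sdiff] at hg
        exact hg.2 (mem_filter.2 ⟨hg.1, hupd⟩)
      have hlt : (slots k H').card < (slots k H).card :=
        card_lt_card (ssubset_iff_of_subset (slots_mono hsub) |>.2 ⟨_, hslotmem, hslotnot⟩)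
      have hs' : (slots k H').card ≤ s := by omega
      obtain ⟨K, hK1, hK2, hK3⟩ := ih H' (hsub.trans hH) hs'
      refine ⟨K, hK1.trans hsub, hK2, ?_⟩
      have hcard : H'.card + st.card = H.card := by
        rw [hH']
        exact card_sdiff_add_card_eq_card (filter_subset _ _)
      have hstc : st.card ≤ θ := by
        rw [hst, card_star k t H hH i₀ g₀]; exact hbad'
      calc H.card = H'.card + st.card := hcard.symm
        _ ≤ (K.card + θ * (slots k H').card) + θ := by omega
        _ ≤ K.card + θ * ((slots k H').card + 1) := by rw [Nat.mul_succ]; omega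
        _ ≤ K.card + θ * (slots k H).card := by
            have : (slots k H').card + 1 ≤ (slots k H).card := hlt
            exact Nat.add_le_add_left (Nat.mul_le_mul_left _ this) _

lemma card_slots_le (k t : ℕ) (H : Finset (Fin k → ℕ)) (hH : H ⊆ Ffun k t) :
    (slots k H).card ≤ k * t ^ (k - 1) := by
  classical
  set P : Fin k → Finset (Fin k → ℕ) :=
    fun i => Fintype.piFinset (fun j => if j = i then ({0} : Finset ℕ) else Finset.range t) with hP
  have hsub : slots k H ⊆ (Finset.univ : Finset (Fin k)).biUnion (fun i => {i} ×ˢ P i) := by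
    intro x hx
    rw [slots, mem_biUnion] at hx
    obtain ⟨g, hg, hx⟩ := hx
    rw [mem_image] at hx
    obtain ⟨i, _, rfl⟩ := hx
    rw [mem_biUnion]
    refine ⟨i, mem_univ _, ?_⟩
    rw [mem_product]
    constructor
    · simp
    · rw [hP, Fintype.mem_piFinset]
      intro j
      by_cases hj : j = i
      · subst hj; simp
      · simp only [if_neg hj]
        rw [Function.update_of_ne hj, mem_range]
        exact mem_Ffun.1 (hH hg) j
  calc (slots k H).card ≤ ((Finset.univ : Finset (Fin k)).biUnion (fun i => {i} ×ˢ P i)).card :=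
        card_le_card hsub
    _ ≤ ∑ i, ({i} ×ˢ P i).card := card_biUnion_le
    _ = ∑ i : Fin k, (P i).card := by
        apply Finset.sum_congr rfl
        intro i _
        rw [card_product, card_singleton, one_mul]
    _ ≤ ∑ _i : Fin k, t ^ (k - 1) := by
        apply Finset.sum_le_sum
        intro i _
        rw [hP, Fintype.card_piFinset]
        by_cases hk : 0 < k
        · calc ∏ j, (if j = i then ({0} : Finset ℕ) else Finset.range t).card
              = (if i = i then ({0} : Finset ℕ) else Finset.range t).card *
                ∏ j ∈ Finset.univ.erase i,
                  (if j = i then ({0} : Finset ℕ) else Finset.range t).card :=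
                (Finset.mul_prod_erase _ _ (mem_univ i)).symm
          _ = ∏ j ∈ Finset.univ.erase i, (if j = i then ({0} : Finset ℕ) else Finset.range t).card := by
                simp
          _ ≤ ∏ _j ∈ Finset.univ.erase i, t := by
                apply Finset.prod_le_prod'
                intro j hj
                rw [if_neg (Finset.ne_of_mem_erase hj)]
                simp
          _ = t ^ (k - 1) := by
                rw [Finset.prod_const, Finset.card_erase_of_mem (mem_univ i), card_univ,
                  Fintype.card_fin]
        · exact absurd i.pos hk
    _ = k * t ^ (k - 1) := by
        rw [Finset.sum_const, card_univ, Fintype.card_fin, smul_eq_mul]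



/-- part index of position `j` -/
def pidx (k : ℕ) (hk : 0 < k) (j : ℕ) : Fin k := ⟨j % k, Nat.mod_lt _ hk⟩

/-- windows of the path: `wseq hk val i` is the choice function of the window
on positions `[i, i+k)`. -/
def wseq (k : ℕ) (hk : 0 < k) (val : ℕ → ℕ) : ℕ → (Fin k → ℕ)
  | 0 => fun p => val (p : ℕ)
  | (i+1) => Function.update (wseq k hk val i) (pidx k hk i) (val (i + k))

lemma pidx_add (k : ℕ) (hk : 0 < k) (j : ℕ) : pidx k hk (j + k) = pidx k hk j := by
  simp [pidx, Nat.add_mod_right]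

lemma pidx_eq_iff {k : ℕ} (hk : 0 < k) {i j : ℕ} (hij : i ≤ j) :
    pidx k hk i = pidx k hk j ↔ k ∣ (j - i) := by
  rw [pidx, pidx, Fin.mk.injEq]
  constructor
  · intro h
    exact (Nat.modEq_iff_dvd' hij).1 h
  · intro h
    exact (Nat.modEq_iff_dvd' hij).2 h

/-- `wseq` only depends on values at positions `< i + k` -/
lemma wseq_congr (k : ℕ) (hk : 0 < k) (val val' : ℕ → ℕ) :
    ∀ i, (∀ j < i + k, val j = val' j) → wseq k hk val i = wseq k hk val' i := by
  intro i
  induction i with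
  | zero =>
    intro h
    funext p
    exact h (p : ℕ) (by omega)
  | succ i ih =>
    intro h
    show Function.update (wseq k hk val i) _ _ = Function.update (wseq k hk val' i) _ _
    rw [ih (fun j hj => h j (by omega)), h (i + k) (by omega)]

/-- coherence: the window starting at `i` reads the path values at `[i, i+k)` -/
lemma wseq_coherence (k : ℕ) (hk : 0 < k) (val : ℕ → ℕ) :
    ∀ i j, i ≤ j → j < i + k → wseq k hk val i (pidx k hk j) = val j := by
  intro i
  induction i with
  | zero =>
    intro j _ hj2
    show val ((pidx k hk j : Fin k) : ℕ) = val j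
    have : (pidx k hk j : ℕ) = j % k := rfl
    rw [this, Nat.mod_eq_of_lt (by omega)]
  | succ i ih =>
    intro j hj1 hj2
    show Function.update (wseq k hk val i) (pidx k hk i) (val (i + k)) (pidx k hk j) = val j
    by_cases hcase : pidx k hk j = pidx k hk i
    · have hd : k ∣ (j - i) := (pidx_eq_iff hk (by omega)).1 hcase.symm
      have hji : j = i + k := by
        obtain ⟨c, hc⟩ := hd
        have h1 : c ≠ 0 := by
          intro h
          subst h
          simp at hc
          omega
        have h2 : c < 2 := by
          by_contra hcon
          push_neg at hcon
          have : k * 2 ≤ k * c := Nat.mul_le_mul_left k hcon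
          omega
        have : c = 1 := by omega
        subst this
        omega
      rw [hcase, Function.update_self, hji]
    · rw [Function.update_of_ne hcase]
      refine ih j (by omega) ?_
      -- j < i + k : since j ≤ i + k and j ≠ i + k (else pidx equal)
      rcases Nat.lt_or_ge j (i + k) with h | h
      · exact h
      · exfalso
        have : j = i + k := by omega
        subst this
        exact hcase (by rw [pidx_add])

/-- every residue is attained on any window of length k -/
lemma exists_pos_in_window (k : ℕ) (hk : 0 < k) (i : ℕ) (p : Fin k) :
    ∃ s < k, pidx k hk (i + s) = p := by
  obtain ⟨q, s₀, hs₀, hi⟩ : ∃ q s₀, s₀ < k ∧ i = k * q + s₀ :=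
    ⟨i / k, i % k, Nat.mod_lt _ hk, (Nat.div_add_mod i k).symm⟩
  rcases le_or_gt s₀ (p : ℕ) with h | h
  · refine ⟨(p : ℕ) - s₀, by omega, ?_⟩
    have heq : i + ((p : ℕ) - s₀) = k * q + (p : ℕ) := by omega
    rw [heq]
    apply Fin.ext
    show (k * q + (p : ℕ)) % k = (p : ℕ)
    rw [Nat.mul_add_mod, Nat.mod_eq_of_lt p.isLt]
  · refine ⟨k + (p : ℕ) - s₀, by omega, ?_⟩
    have heq : i + (k + (p : ℕ) - s₀) = k * (q + 1) + (p : ℕ) := by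
      have : k * (q + 1) = k * q + k := by ring
      omega
    rw [heq]
    apply Fin.ext
    show (k * (q + 1) + (p : ℕ)) % k = (p : ℕ)
    rw [Nat.mul_add_mod, Nat.mod_eq_of_lt p.isLt]

/-- the number of positions below `m` in the part of `m` is `m / k` -/
lemma card_same_part (k : ℕ) (hk : 0 < k) (m : ℕ) :
    ((range m).filter (fun j => j % k = m % k)).card = m / k := by
  have : (range m).filter (fun j => j % k = m % k) =
      (range (m / k)).image (fun q => m % k + k * q) := by
    ext j
    rw [mem_filter, mem_range, mem_image]
    constructor
    · rintro ⟨hjm, hjmod⟩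
      refine ⟨j / k, ?_, ?_⟩
      · rw [mem_range]
        -- j < m, j ≡ m mod k ⇒ j / k < m / k
        have h1 := Nat.div_add_mod j k
        have h2 := Nat.div_add_mod m k
        by_contra hcon
        push_neg at hcon
        have h3 : k * (m / k) ≤ k * (j / k) := Nat.mul_le_mul_left k hcon
        omega
      · have h1 := Nat.div_add_mod j k
        omega
    · rintro ⟨q, hq, rfl⟩
      rw [mem_range] at hq
      constructor
      · have h2 := Nat.div_add_mod m k
        have : k * q + k ≤ k * (m / k) := by
          have : q + 1 ≤ m / k := hq
          nlinarith
        omega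
      · rw [Nat.add_mul_mod_self_left]
        exact Nat.mod_mod_of_dvd m dvd_rfl
  rw [this, Finset.card_image_of_injective, Finset.card_range]
  intro a b hab
  simp only at hab
  have : k * a = k * b := by omega
  exact Nat.eq_of_mul_eq_mul_left hk this



lemma greedy (k t θ n : ℕ) (hk : 0 < k) (hkn : k ≤ n) (hθ : (n - 1) / k ≤ θ)
    (K : Finset (Fin k → ℕ)) (hKF : K ⊆ Ffun k t)
    (good : ∀ g ∈ K, ∀ i, θ + 1 ≤ dg k t K i g) (hne : K.Nonempty) :
    ∃ val : ℕ → ℕ, (∀ j < n, val j < t) ∧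
      (∀ j1 j2, j1 < j2 → j2 < n → j1 % k = j2 % k → val j1 ≠ val j2) ∧
      (∀ i, i + k ≤ n → wseq k hk val i ∈ K) := by
  have main : ∀ m, k ≤ m → m ≤ n →
      ∃ val : ℕ → ℕ, (∀ j < m, val j < t) ∧
        (∀ j1 j2, j1 < j2 → j2 < m → j1 % k = j2 % k → val j1 ≠ val j2) ∧
        (∀ i, i + k ≤ m → wseq k hk val i ∈ K) := by
    intro m hm
    induction m, hm using Nat.le_induction with
    | base =>
      intro _
      obtain ⟨g₀, hg₀⟩ := hne
      refine ⟨fun j => g₀ (pidx k hk j), ?_, ?_, ?_⟩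
      · intro j _
        exact mem_Ffun.1 (hKF hg₀) _
      · intro j1 j2 h1 h2 hmod
        exfalso
        rw [Nat.mod_eq_of_lt (by omega), Nat.mod_eq_of_lt (by omega)] at hmod
        omega
      · intro i hi
        have : i = 0 := by omega
        subst this
        have : wseq k hk (fun j => g₀ (pidx k hk j)) 0 = g₀ := by
          funext p
          show g₀ (pidx k hk (p : ℕ)) = g₀ p
          congr 1
          apply Fin.ext
          show (p : ℕ) % k = (p : ℕ)
          exact Nat.mod_eq_of_lt p.isLt
        rwa [this]
    | succ m hkm ih =>
      intro hmn
      obtain ⟨val, hv1, hv2, hv3⟩ := ih (by omega)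
      have hW : wseq k hk val (m - k) ∈ K := hv3 (m - k) (by omega)
      set W := wseq k hk val (m - k) with hWdef
      set p := pidx k hk m with hpdef
      set avail := (range t).filter (fun a => Function.update W p a ∈ K) with havail
      have hav : θ + 1 ≤ avail.card := good W hW p
      set used := ((range m).filter (fun j => j % k = m % k)).image val with hused
      have husedc : used.card ≤ θ := by
        calc used.card ≤ ((range m).filter (fun j => j % k = m % k)).card := card_image_le
          _ = m / k := card_same_part k hk m
          _ ≤ (n - 1) / k := Nat.div_le_div_right (by omega)
          _ ≤ θ := hθ
      have hdiff : (avail \ used).Nonempty := by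
        rw [← card_pos]
        have := Finset.le_card_sdiff used avail
        omega
      obtain ⟨a, ha⟩ := hdiff
      rw [mem_sdiff] at ha
      have hat : a < t := by
        have := (mem_filter.1 ha.1).1
        rwa [mem_range] at this
      have haK : Function.update W p a ∈ K := (mem_filter.1 ha.1).2
      refine ⟨Function.update val m a, ?_, ?_, ?_⟩
      · intro j hj
        by_cases hjm : j = m
        · subst hjm; rw [Function.update_self]; exact hat
        · rw [Function.update_of_ne hjm]; exact hv1 j (by omega)
      · intro j1 j2 h1 h2 hmod
        by_cases hjm : j2 = m
        · subst hjm
          rw [Function.update_of_ne (by omega), Function.update_self]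
          intro hEq
          apply ha.2
          rw [hused, mem_image]
          exact ⟨j1, mem_filter.2 ⟨mem_range.2 (by omega), hmod⟩, hEq⟩
        · rw [Function.update_of_ne (by omega), Function.update_of_ne hjm]
          exact hv2 j1 j2 h1 (by omega) hmod
      · intro i hi
        rcases Nat.lt_or_ge (i + k) (m + 1) with hcase | hcase
        · have hik : i + k ≤ m := by omega
          have : wseq k hk (Function.update val m a) i = wseq k hk val i := by
            apply (wseq_congr k hk val (Function.update val m a) i _).symm
            intro j hj
            rw [Function.update_of_ne (by omega)]
          rw [this]
          exact hv3 i hik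
        · have hieq : i = (m - k) + 1 := by omega
          subst hieq
          show Function.update (wseq k hk (Function.update val m a) (m - k))
            (pidx k hk (m - k)) (Function.update val m a ((m - k) + k)) ∈ K
          have e1 : wseq k hk (Function.update val m a) (m - k) = W := by
            rw [hWdef]
            apply (wseq_congr k hk val (Function.update val m a) (m - k) _).symm
            intro j hj
            rw [Function.update_of_ne (by omega)]
          have e2 : pidx k hk (m - k) = p := by
            rw [hpdef]
            have h' : pidx k hk ((m - k) + k) = pidx k hk (m - k) := pidx_add k hk (m - k)
            rw [← h']
            congr 1
            omega
          have e3 : (m - k) + k = m := by omega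
          rw [e1, e2, e3, Function.update_self]
          exact haK
  exact main n hkn le_rfl


lemma hPath_eq (k n : ℕ) (hk : 1 ≤ k) (hn : k ≤ n) :
    hPath k (k - 1) n
      = (Finset.range (n - k + 1)).image (fun i => (Finset.range k).image (fun j => i + j)) := by
  unfold hPath pathWithEdges
  have h1 : k - (k - 1) = 1 := by omega
  have h2 : n - (k - 1) = n - k + 1 := by omega
  rw [h1, h2, Nat.div_one]
  simp [Nat.mul_one]

lemma hVerts_hPath (k n : ℕ) (hk : 1 ≤ k) (hn : k ≤ n) :
    hVerts (hPath k (k - 1) n) = Finset.range n := by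
  rw [hPath_eq k n hk hn]
  unfold hVerts
  ext x
  simp only [mem_biUnion, mem_image, mem_range, id]
  constructor
  · rintro ⟨e, ⟨i, hi, rfl⟩, hx⟩
    simp only [mem_image, mem_range] at hx
    obtain ⟨j, hj, rfl⟩ := hx
    omega
  · intro hx
    refine ⟨(Finset.range k).image (fun j => min x (n - k) + j), ⟨min x (n - k), by omega, rfl⟩, ?_⟩
    simp only [mem_image, mem_range]
    exact ⟨x - min x (n - k), by omega, by omega⟩

lemma arrows_host (k r n : ℕ) (hk : 2 ≤ k) (hr : 1 ≤ r) (hn : k ≤ n) :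
    Arrows r ((Ffun k (r * k * ((n - 1) / k) + 1)).image (toEdge k)) (hPath k (k - 1) n) := by
  intro χ
  set θ := (n - 1) / k with hθdef
  set t := r * k * θ + 1 with htdef
  have hk0 : 0 < k := by omega
  have ht0 : 0 < t := by omega
  -- pigeonhole for a popular colour
  have hfib : ∑ c : Fin r, ((Ffun k t).filter (fun g => χ (toEdge k g) = c)).card = t ^ k := by
    rw [← (card_Ffun : (Ffun k t).card = t ^ k)]
    exact (Finset.card_eq_sum_card_fiberwise (fun g _ => mem_univ (χ (toEdge k g)))).symm
  have hex : ∃ c : Fin r,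
      t ^ k ≤ r * ((Ffun k t).filter (fun g => χ (toEdge k g) = c)).card := by
    by_contra hcon
    push_neg at hcon
    have h2 : ∑ c : Fin r, r * ((Ffun k t).filter (fun g => χ (toEdge k g) = c)).card
        ≤ ∑ _c : Fin r, (t ^ k - 1) :=
      Finset.sum_le_sum (fun c _ => by have := hcon c; omega)
    rw [← Finset.mul_sum, hfib, Finset.sum_const, card_univ, Fintype.card_fin,
      smul_eq_mul] at h2
    have ht1 : 1 ≤ t ^ k := Nat.one_le_pow _ _ ht0
    have h3 : r * (t ^ k - 1) + r * 1 = r * t ^ k := by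
      rw [← Nat.mul_add]
      congr 1
      omega
    omega
  obtain ⟨c, hc⟩ := hex
  set Hc := (Ffun k t).filter (fun g => χ (toEdge k g) = c) with hHcdef
  have hHcF : Hc ⊆ Ffun k t := filter_subset _ _
  -- Hc is big
  have hHbig : θ * (k * t ^ (k - 1)) * r + t ^ (k - 1) ≤ t ^ k := by
    have hpow : t ^ k = t ^ (k - 1) * t := by
      rw [← pow_succ]
      congr 1
      omega
    rw [hpow, htdef]
    ring_nf
    omega
  have ht1 : 1 ≤ t ^ (k - 1) := Nat.one_le_pow _ _ ht0
  -- clean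
  obtain ⟨K, hK1, hK2, hK3⟩ := clean k t θ ((slots k Hc).card) Hc hHcF le_rfl
  have hKne : K.Nonempty := by
    rw [← card_pos]
    have hslots := card_slots_le k t Hc hHcF
    have h5 : θ * (slots k Hc).card ≤ θ * (k * t ^ (k - 1)) :=
      Nat.mul_le_mul_left _ hslots
    -- r * Hc.card ≥ t^k  and  Hc.card ≤ K.card + θ*(k t^{k-1})
    have h6 : t ^ k ≤ r * (K.card + θ * (k * t ^ (k - 1))) := by
      calc t ^ k ≤ r * Hc.card := hc
        _ ≤ r * (K.card + θ * (k * t ^ (k - 1))) := Nat.mul_le_mul_left _ (by omega)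
    rw [Nat.mul_add] at h6
    by_contra hcon
    push_neg at hcon
    interval_cases h : K.card
    · simp at h6
      -- t^k ≤ r * (θ * (k * t^{k-1}))
      have := hHbig
      nlinarith [h6, ht1]
  have hKF : K ⊆ Ffun k t := hK1.trans hHcF
  -- greedy path
  obtain ⟨val, hv1, hv2, hv3⟩ :=
    greedy k t θ n hk0 hn (le_of_eq hθdef.symm) K hKF hK2 hKne
  -- build the copy
  refine ⟨c, fun x => x % k + k * val x, ?_, ?_⟩
  · -- injectivity on the vertex set
    rw [hVerts_hPath k n (by omega) hn]
    intro x hx y hy hxy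
    simp only [coe_range, Set.mem_Iio] at hx hy
    have hxy' : x % k + k * val x = y % k + k * val y := hxy
    have hres : x % k = y % k := by
      have h1 : (x % k + k * val x) % k = x % k := by
        rw [Nat.add_mul_mod_self_left, Nat.mod_mod_of_dvd x dvd_rfl]
      have h2 : (y % k + k * val y) % k = y % k := by
        rw [Nat.add_mul_mod_self_left, Nat.mod_mod_of_dvd y dvd_rfl]
      rw [← h1, ← h2, hxy']
    have hval : val x = val y := by
      have : k * val x = k * val y := by omega
      exact Nat.eq_of_mul_eq_mul_left hk0 this
    rcases lt_trichotomy x y with h | h | h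
    · exact absurd hval (hv2 x y h hy hres)
    · exact h
    · exact absurd hval.symm (hv2 y x h hx hres.symm)
  · -- edges map into the colour class
    intro e he
    rw [hPath_eq k n (by omega) hn, mem_image] at he
    obtain ⟨i, hi, rfl⟩ := he
    rw [mem_range] at hi
    have hik : i + k ≤ n := by omega
    have hwin : wseq k hk0 val i ∈ K := hv3 i hik
    have hedge : ((Finset.range k).image (fun j => i + j)).image
        (fun x => x % k + k * val x) = toEdge k (wseq k hk0 val i) := by
      rw [Finset.image_image]
      ext x
      simp only [mem_image, mem_range, Function.comp, toEdge_mem]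
      constructor
      · rintro ⟨j, hj, rfl⟩
        refine ⟨pidx k hk0 (i + j), ?_⟩
        rw [wseq_coherence k hk0 val i (i + j) (by omega) (by omega)]
        rfl
      · rintro ⟨p, rfl⟩
        obtain ⟨s, hs, hps⟩ := exists_pos_in_window k hk0 i p
        refine ⟨s, hs, ?_⟩
        rw [← hps, wseq_coherence k hk0 val i (i + s) (by omega) (by omega)]
        rfl
    rw [hedge, mem_filter]
    constructor
    · exact mem_image.2 ⟨wseq k hk0 val i, hKF hwin, rfl⟩
    · exact (mem_filter.1 (hK1 hwin)).2


end AW10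

namespace AW10X
open AW10


lemma nat_bern (a d : ℕ) : ∀ k : ℕ, a ^ (k+1) + (k+1) * (a ^ k * d) ≤ (a + d) ^ (k+1) := by
  intro k
  induction k with
  | zero => simp [pow_succ]
  | succ k ih =>
    calc a ^ (k+1+1) + (k+1+1) * (a ^ (k+1) * d)
        ≤ (a ^ (k+1+1) + (k+1+1) * (a ^ (k+1) * d)) + (k+1) * (a ^ k * (d * d)) :=
          Nat.le_add_right _ _
      _ = (a ^ (k+1) + (k+1) * (a ^ k * d)) * (a + d) := by ring
      _ ≤ (a + d) ^ (k+1) * (a + d) := Nat.mul_le_mul_right _ ih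
      _ = (a + d) ^ (k+1+1) := by ring

lemma star_ineq : ∀ k : ℕ, 2 ≤ k → Nat.factorial k * (4*k+2)^k ≤ (2*k*k+2*k+3)^k := by
  intro k hk
  induction k, hk using Nat.le_induction with
  | base => norm_num [Nat.factorial]
  | succ k hk ih =>
    -- notation
    set X := 2*k*k+6*k+7 with hX
    set Q := (4*k+6)*(2*k*k+2*k+3) with hQ
    set D := 8*k*k+16*k-4 with hD
    have hD' : D = 8*k*k+16*k-4 := hD
    have hPQ : X * (4*k+2) = Q + D := by
      rw [hX, hQ, hD]
      have h4 : 4 ≤ 8*k*k+16*k := by nlinarith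
      zify [h4]
      ring
    -- key polynomial inequality : k*X*D ≥ (2k²+4k-1)*Q
    have hkey : (2*k*k+4*k-1) * Q ≤ k * X * D := by
      obtain ⟨m, rfl⟩ : ∃ m, k = m + 2 := ⟨k - 2, by omega⟩
      rw [hX, hQ, hD]
      have e : (m+2) * (2*(m+2)*(m+2)+6*(m+2)+7) * (8*(m+2)*(m+2)+16*(m+2)-4)
          = (2*(m+2)*(m+2)+4*(m+2)-1) * ((4*(m+2)+6)*(2*(m+2)*(m+2)+2*(m+2)+3))
            + (8*m^4 + 88*m^3 + 312*m^2 + 372*m + 90) := by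
        have h1 : 8*(m+2)*(m+2)+16*(m+2)-4 = 8*m*m + 48*m + 60 := by ring_nf; omega
        have h2 : 2*(m+2)*(m+2)+4*(m+2)-1 = 2*m*m + 12*m + 15 := by ring_nf; omega
        rw [h1, h2]
        ring
      rw [e]
      omega
    -- Bernoulli: (Q + D)^k ≥ Q^k + k*Q^{k-1}*D
    obtain ⟨k', rfl⟩ : ∃ k', k = k' + 1 := ⟨k - 1, by omega⟩
    have hbern : Q ^ (k'+1) + (k'+1) * (Q ^ k' * D) ≤ (Q + D) ^ (k'+1) := nat_bern Q D k'
    -- (**) : (k+2) * (4k+10) * Q^(k+1) ≤ X * (Q+D)^(k+1)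
    have hstar2 : ((k'+1)+1) * ((4*(k'+1)+6) * Q ^ (k'+1)) ≤ X * (Q + D) ^ (k'+1) := by
      have h1 : ((k'+1)+1) * ((4*(k'+1)+6) * Q ^ (k'+1))
          = ((k'+1)+1) * (4*(k'+1)+6) * (Q ^ k' * Q) := by ring
      have h2 : ((k'+1)+1) * (4*(k'+1)+6) = X + (2*(k'+1)*(k'+1)+4*(k'+1)-1) := by
        rw [hX]
        ring_nf
        omega
      calc ((k'+1)+1) * ((4*(k'+1)+6) * Q ^ (k'+1))
          = (X * Q) * Q ^ k' + ((2*(k'+1)*(k'+1)+4*(k'+1)-1) * Q) * Q ^ k' := by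
            rw [h1, h2]; ring
        _ ≤ (X * Q) * Q ^ k' + ((k'+1) * X * D) * Q ^ k' := by
            have := hkey
            exact Nat.add_le_add_left (Nat.mul_le_mul_right _ this) _
        _ = X * (Q ^ (k'+1) + (k'+1) * (Q ^ k' * D)) := by ring
        _ ≤ X * (Q + D) ^ (k'+1) := Nat.mul_le_mul_left _ hbern
    -- assemble
    set k := k' + 1
    have hfin : Nat.factorial (k+1) * (4*(k+1)+2)^(k+1) * (4*k+2)^k
        ≤ (2*(k+1)*(k+1)+2*(k+1)+3)^(k+1) * (4*k+2)^k := by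
      have hXk1 : 2*(k+1)*(k+1)+2*(k+1)+3 = X := by rw [hX]; ring
      have hZk1 : 4*(k+1)+2 = 4*k+6 := by ring
      rw [hXk1, hZk1]
      calc Nat.factorial (k+1) * (4*k+6)^(k+1) * (4*k+2)^k
          = ((k+1) * ((4*k+6) * (4*k+6)^k)) * (Nat.factorial k * (4*k+2)^k) := by
            rw [Nat.factorial_succ]
            ring
        _ ≤ ((k+1) * ((4*k+6) * (4*k+6)^k)) * (2*k*k+2*k+3)^k := Nat.mul_le_mul_left _ ih
        _ = (k+1) * ((4*k+6) * Q ^ k) := by rw [hQ, mul_pow]; ring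
        _ ≤ X * (Q + D) ^ k := hstar2
        _ = X * (X * (4*k+2)) ^ k := by rw [hPQ]
        _ = X^(k+1) * (4*k+2)^k := by rw [mul_pow]; ring
    have hpos : 0 < (4*k+2)^k := Nat.pow_pos (by omega)
    exact Nat.le_of_mul_le_mul_right hfin hpos



lemma budget (k r n : ℕ) (hk : 2 ≤ k) (hr : 2 ≤ r) (hn : k ≤ n) :
    (r * k * ((n - 1) / k) + 1) ^ k ≤ (r * (k + 1) * n / 2).choose k := by
  set θ := (n - 1) / k with hθ
  set t := r * k * θ + 1 with ht
  set N := r * (k + 1) * n / 2 with hN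
  have hkn2 : 2 * k ≤ r * (k + 1) * n := by
    have h1 : k ≤ (k + 1) * n := le_trans hn (Nat.le_mul_of_pos_left n (by omega))
    have h2 : 2 * ((k+1) * n) ≤ r * ((k+1) * n) := Nat.mul_le_mul_right _ hr
    have h3 : r * (k+1) * n = r * ((k+1) * n) := by ring
    omega
  have hNk : k ≤ N := by
    have := Nat.div_le_div_right (c := 2) hkn2
    rwa [Nat.mul_div_cancel_left k (by norm_num : 0 < 2)] at this
  rcases eq_or_lt_of_le hn with heq | hlt
  · -- n = k : t = 1
    have hθ0 : θ = 0 := by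
      rw [hθ, ← heq]
      exact Nat.div_eq_of_lt (by omega)
    have ht1 : t = 1 := by rw [ht, hθ0]; ring
    rw [ht1, one_pow]
    exact Nat.succ_le_of_lt (Nat.choose_pos hNk)
  · -- n ≥ k + 1
    have hn1 : k + 1 ≤ n := hlt
    set B := r * (n - 1) + 1 with hB
    have htB : t ≤ B := by
      have h1 : θ * k ≤ n - 1 := Nat.div_mul_le_self (n - 1) k
      have h2 : r * (θ * k) ≤ r * (n - 1) := Nat.mul_le_mul_left r h1
      have h3 : r * k * θ = r * (θ * k) := by ring
      omega
    set M := N + 1 - k with hM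
    have hA : r * (k + 1) * n ≤ 2 * N + 1 := by
      have h1 := Nat.div_add_mod (r * (k + 1) * n) 2
      have h2 : (r * (k + 1) * n) % 2 < 2 := Nat.mod_lt _ (by norm_num)
      omega
    have hMlb : r * (k + 1) * n ≤ 2 * M + (2 * k - 1) := by omega
    -- the main linear inequality
    have hid : (2*k*k+2*k+3) * B + (4*k*k-1) ≤ r * (k + 1) * n * (2*k+1) := by
      obtain ⟨m, rfl⟩ : ∃ m, k = m + 2 := ⟨k - 2, by omega⟩
      obtain ⟨ρ, rfl⟩ : ∃ ρ, r = ρ + 2 := ⟨r - 2, by omega⟩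
      obtain ⟨ν, hνeq⟩ : ∃ ν, n = m + 3 + ν := ⟨n - (m + 3), by omega⟩
      subst hνeq
      rw [hB]
      have e1 : m + 3 + ν - 1 = m + 2 + ν := by omega
      have e2 : 4*(m+2)*(m+2) - 1 = 4*m*m + 16*m + 15 := by ring_nf; omega
      rw [e1, e2]
      have e3 : (ρ+2) * ((m+2) + 1) * (m+3+ν) * (2*(m+2)+1)
          = (2*(m+2)*(m+2)+2*(m+2)+3) * ((ρ+2) * (m+2+ν) + 1) + (4*m*m + 16*m + 15)
            + (2*m*ν + ρ*(3*m*m + 13*m + m*ν + 15)) := by ring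
      omega
    have hmain : (2*k*k+2*k+3) * B ≤ (2*M) * (2*k+1) := by
      have h1 : r * (k+1) * n * (2*k+1) ≤ (2*M + (2*k-1)) * (2*k+1) :=
        Nat.mul_le_mul_right _ hMlb
      have h2 : (2*M + (2*k-1)) * (2*k+1) = (2*M)*(2*k+1) + (2*k-1)*(2*k+1) := by ring
      have h3 : (2*k-1)*(2*k+1) = 4*k*k-1 := by
        have : 1 ≤ 2*k := by omega
        zify [this, show (1:ℕ) ≤ 4*k*k by nlinarith]
        ring
      omega
    -- combine with star_ineq
    have hMB : Nat.factorial k * B ^ k ≤ M ^ k := by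
      have hc : (Nat.factorial k * B ^ k) * (2^k * (2*k+1)^k)
          ≤ M ^ k * (2^k * (2*k+1)^k) := by
        calc (Nat.factorial k * B ^ k) * (2^k * (2*k+1)^k)
            = (Nat.factorial k * (4*k+2)^k) * B^k := by
              have : (4*k+2)^k = 2^k * (2*k+1)^k := by
                rw [← mul_pow]
                congr 1
                ring
              rw [this]
              ring
          _ ≤ (2*k*k+2*k+3)^k * B^k := Nat.mul_le_mul_right _ (star_ineq k hk)
          _ = ((2*k*k+2*k+3) * B)^k := by rw [mul_pow]
          _ ≤ ((2*M) * (2*k+1))^k := Nat.pow_le_pow_left hmain k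
          _ = M ^ k * (2^k * (2*k+1)^k) := by
              rw [mul_pow, mul_pow]
              ring
      have hpos : 0 < 2^k * (2*k+1)^k :=
        Nat.mul_pos (Nat.pow_pos (by omega)) (Nat.pow_pos (by omega))
      exact Nat.le_of_mul_le_mul_right hc hpos
    have hdesc : M ^ k ≤ N.descFactorial k := by
      rw [hM]
      exact Nat.pow_sub_le_descFactorial N k
    have hfin : Nat.factorial k * t ^ k ≤ Nat.factorial k * N.choose k := by
      calc Nat.factorial k * t ^ k ≤ Nat.factorial k * B ^ k :=
            Nat.mul_le_mul_left _ (Nat.pow_le_pow_left htB k)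
        _ ≤ M ^ k := hMB
        _ ≤ N.descFactorial k := hdesc
        _ = Nat.factorial k * N.choose k := Nat.descFactorial_eq_factorial_mul_choose N k
    exact Nat.le_of_mul_le_mul_left hfin (Nat.factorial_pos k)


lemma part2 (k r n : ℕ) (hk : 2 ≤ k) :
    ((r * (k + 1) * n / 2).choose k : ℝ) ≤
      (Real.exp 1 * r * (k + 1) * n / (2 * k)) ^ k := by
  set N := r * (k + 1) * n / 2 with hN
  set a : ℝ := (r : ℝ) * ((k : ℝ) + 1) * (n : ℝ) with ha
  have hk0 : (0:ℝ) < (k:ℝ) := by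
    have : 0 < k := by omega
    exact_mod_cast this
  have hfac : (0:ℝ) < (Nat.factorial k : ℝ) := by exact_mod_cast k.factorial_pos
  have hann : (0:ℝ) ≤ a := by positivity
  -- k^k ≤ e^k * k!
  have hkk : (k:ℝ)^k ≤ Real.exp 1 ^ k * (Nat.factorial k : ℝ) := by
    have h2 : ((k:ℝ))^k / (Nat.factorial k : ℝ)
        ≤ ∑ i ∈ Finset.range (k+1), ((k:ℝ))^i / (Nat.factorial i) := by
      apply Finset.single_le_sum (f := fun i => ((k:ℝ))^i / (Nat.factorial i))
        (fun i _ => by positivity) (Finset.self_mem_range_succ k)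
    have h := Real.sum_le_exp_of_nonneg (x := (k:ℝ)) (by positivity) (k+1)
    have hsum := h2.trans h
    have hexp : Real.exp ((k:ℝ)) = Real.exp 1 ^ k := by
      rw [← Real.exp_nat_mul]
      norm_num
    rw [hexp, div_le_iff₀ hfac] at hsum
    linarith
  have hchoose : ((N.choose k : ℕ) : ℝ) * (Nat.factorial k : ℝ) ≤ (N:ℝ)^k := by
    have h1 : Nat.factorial k * N.choose k ≤ N ^ k := by
      rw [← Nat.descFactorial_eq_factorial_mul_choose]
      exact Nat.descFactorial_le_pow N k
    have h2 : (N.choose k : ℝ) * (Nat.factorial k : ℝ) = ((Nat.factorial k * N.choose k : ℕ) : ℝ) := by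
      push_cast
      ring
    rw [h2]
    exact_mod_cast h1
  have hNa : (N : ℝ) ≤ a / 2 := by
    have h1 : ((r * (k + 1) * n / 2 : ℕ) : ℝ) ≤ ((r * (k+1) * n : ℕ) : ℝ) / 2 :=
      Nat.cast_div_le
    have h2 : ((r * (k+1) * n : ℕ) : ℝ) = a := by
      rw [ha]
      push_cast
      ring
    rw [hN]
    rw [h2] at h1
    exact h1
  have h3 : (N:ℝ)^k ≤ (a/2)^k :=
    pow_le_pow_left₀ (by positivity) hNa k
  have hfinal : (1:ℝ)/(Nat.factorial k : ℝ) ≤ Real.exp 1 ^ k / (k:ℝ)^k := by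
    rw [div_le_div_iff₀ hfac (by positivity)]
    nlinarith [hkk]
  have hbase : Real.exp 1 * (r:ℝ) * ((k:ℝ)+1) * (n:ℝ) / (2*(k:ℝ))
      = Real.exp 1 * a / (2 * (k:ℝ)) := by
    rw [ha]; ring
  calc ((N.choose k : ℕ) : ℝ)
      ≤ (a/2)^k / (Nat.factorial k : ℝ) := by
        rw [le_div_iff₀ hfac]
        exact hchoose.trans h3
    _ = (a/2)^k * ((1:ℝ) / (Nat.factorial k : ℝ)) := by ring
    _ ≤ (a/2)^k * (Real.exp 1 ^ k / (k:ℝ)^k) := by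
        apply mul_le_mul_of_nonneg_left hfinal (by positivity)
    _ = ((a/2) * (Real.exp 1 / (k:ℝ))) ^ k := by
        rw [mul_pow (a/2) (Real.exp 1 / (k:ℝ)) k, div_pow (Real.exp 1) ((k:ℝ)) k]
    _ = (Real.exp 1 * a / (2 * (k:ℝ))) ^ k := by
        congr 1
        field_simp
    _ = (Real.exp 1 * (r:ℝ) * ((k:ℝ)+1) * (n:ℝ) / (2*(k:ℝ))) ^ k := by rw [hbase]


end AW10X

theorem stmt10 (k r n : ℕ) (hk : 2 ≤ k) (hr : 2 ≤ r) (hn : k ≤ n) :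
    sizeRamsey k r (hPath k (k - 1) n) ≤ (r * (k + 1) * n / 2).choose k ∧
      ((r * (k + 1) * n / 2).choose k : ℝ) ≤
        (Real.exp 1 * r * (k + 1) * n / (2 * k)) ^ k := by
  constructor
  · set t := r * k * ((n - 1) / k) + 1 with ht
    have hG : IsUniform k ((AW10.Ffun k t).image (AW10.toEdge k)) := by
      intro e he
      rw [Finset.mem_image] at he
      obtain ⟨g, _, rfl⟩ := he
      exact AW10.toEdge_card g
    have harr := AW10.arrows_host k r n hk (by omega) hn
    have hmem : ((AW10.Ffun k t).image (AW10.toEdge k)).card ∈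
        {m | ∃ G : Finset (Finset ℕ),
          IsUniform k G ∧ Arrows r G (hPath k (k - 1) n) ∧ G.card = m} :=
      ⟨_, hG, harr, rfl⟩
    have h1 : sizeRamsey k r (hPath k (k - 1) n)
        ≤ ((AW10.Ffun k t).image (AW10.toEdge k)).card := Nat.sInf_le hmem
    have hcard : ((AW10.Ffun k t).image (AW10.toEdge k)).card = t ^ k := by
      rw [Finset.card_image_of_injective _ AW10.toEdge_inj, AW10.card_Ffun]
    rw [hcard] at h1
    exact h1.trans (AW10X.budget k r n hk hr hn)
  · exact AW10X.part2 k r n hk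
end

section
/- Let r, k ≥ 2 and 1 ≤ ℓ ≤ k/2, and let n ≥ k satisfy (k-ℓ) | (n-ℓ). Then R̂_r(P_n^{(k,ℓ)}) ≤ R̂_r(P_{(n-ℓ)/(k-ℓ)+1}), where P_{(n-ℓ)/(k-ℓ)+1} is the graph path on (n-ℓ)/(k-ℓ)+1 vertices. -/
open Finset

lemma pathEdges2 (m : ℕ) :
    pathWithEdges 2 1 m = (range m).image (fun i => ({i, i+1} : Finset ℕ)) := by
  unfold pathWithEdges
  apply image_congr
  intro i _
  ext x
  simp only [mem_image, mem_range, mem_insert, mem_singleton]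
  constructor
  · rintro ⟨j, hj, rfl⟩; omega
  · rintro (rfl | rfl)
    · exact ⟨0, by omega, by omega⟩
    · exact ⟨1, by omega, by omega⟩

lemma hPath2_eq (p : ℕ) :
    hPath 2 1 p = (range (p-1)).image (fun i => ({i, i+1} : Finset ℕ)) := by
  have h : (p - 1) / (2 - 1) = p - 1 := by norm_num
  rw [hPath, h, pathEdges2]

lemma mono_step {g : ℕ → ℕ} {m : ℕ} (h : ∀ i, i < m → g i < g (i+1)) :
    ∀ a b, b ≤ m → a < b → g a < g b := by
  intro a b hb hab
  induction b with
  | zero => omega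
  | succ n ih =>
    rcases Nat.lt_or_ge a n with h' | h'
    · exact lt_trans (ih (by omega) h') (h n (by omega))
    · have : a = n := by omega
      subst this; exact h a (by omega)

/-- increasing monochromatic path with `m` edges ending at `v`, inside `range N` -/
def IncPath {r : ℕ} (χ : Finset ℕ → Fin r) (c : Fin r) (N m v : ℕ) : Prop :=
  ∃ g : ℕ → ℕ, g m = v ∧ (∀ i, i ≤ m → g i < N) ∧ (∀ i, i < m → g i < g (i+1)) ∧
    (∀ i, i < m → χ {g i, g (i+1)} = c)

lemma hVerts_path2_subset (m : ℕ) : hVerts (pathWithEdges 2 1 m) ⊆ range (m+1) := by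
  rw [pathEdges2]
  intro x hx
  simp only [hVerts, mem_biUnion, id, mem_image, mem_range] at hx ⊢
  obtain ⟨e, ⟨i, hi, rfl⟩, hx⟩ := hx
  simp only [mem_insert, mem_singleton] at hx
  omega

lemma mem_hVerts_path2 {m : ℕ} (hm : 1 ≤ m) {i : ℕ} (hi : i ≤ m) :
    i ∈ hVerts (pathWithEdges 2 1 m) := by
  rw [pathEdges2]
  simp only [hVerts, mem_biUnion, id, mem_image, mem_range]
  rcases Nat.lt_or_ge i m with h | h
  · exact ⟨{i, i+1}, ⟨i, h, rfl⟩, by simp⟩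
  · have hieq : i = m := by omega
    subst hieq
    exact ⟨{i-1, i}, ⟨i-1, by omega, by rw [Nat.sub_add_cancel hm]⟩, by simp⟩

lemma exists_arrows_path (r p : ℕ) (hp : 2 ≤ p) :
    ∃ G : Finset (Finset ℕ), IsUniform 2 G ∧ Arrows r G (hPath 2 1 p) := by
  classical
  set N := (p-1)^r + 1 with hN
  refine ⟨(range N).powersetCard 2, ?_, ?_⟩
  · intro e he
    exact (mem_powersetCard.mp he).2
  intro χ
  by_cases hex : ∃ c v, v < N ∧ IncPath χ c N (p-1) v
  · obtain ⟨c, v, hv, g, hgv, hgN, hmono, hcol⟩ := hex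
    refine ⟨c, g, ?_, ?_⟩
    · intro x hx y hy hxy
      have heq : hPath 2 1 p = pathWithEdges 2 1 (p-1) := by
        have h : (p - 1) / (2 - 1) = p - 1 := by norm_num
        rw [hPath, h]
      have hx' : x ∈ range (p-1+1) := hVerts_path2_subset _ (by rw [← heq]; exact hx)
      have hy' : y ∈ range (p-1+1) := hVerts_path2_subset _ (by rw [← heq]; exact hy)
      simp only [mem_range] at hx' hy'
      by_contra hne
      rcases Nat.lt_or_ge x y with h | h
      · exact absurd hxy (Nat.ne_of_lt (mono_step hmono x y (by omega) h))
      · have h' : y < x := by omega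
        exact absurd hxy.symm (Nat.ne_of_lt (mono_step hmono y x (by omega) (by omega)))
    · intro e he
      rw [hPath2_eq] at he
      obtain ⟨i, hi, rfl⟩ := mem_image.mp he
      simp only [mem_range] at hi
      have himg : ({i, i+1} : Finset ℕ).image g = {g i, g (i+1)} := by
        simp [image_insert, image_singleton]
      rw [himg, mem_filter]
      refine ⟨mem_powersetCard.mpr ⟨?_, ?_⟩, hcol i hi⟩
      · intro x hx
        simp only [mem_insert, mem_singleton] at hx
        rcases hx with rfl | rfl
        · exact mem_range.mpr (hgN i (by omega))
        · exact mem_range.mpr (hgN (i+1) (by omega))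
      · rw [card_insert_of_notMem (by simp [Nat.ne_of_lt (hmono i hi)]), card_singleton]
  · exfalso
    push_neg at hex
    set f : Fin r → ℕ → ℕ :=
      fun c v => Nat.findGreatest (fun m => IncPath χ c N m v) (p-2) with hf
    have hP0 : ∀ (c : Fin r) (v : ℕ), v < N → IncPath χ c N 0 v := by
      intro c v hv
      exact ⟨fun _ => v, rfl, fun i hi => by simpa using hv, by omega, by omega⟩
    have hfle : ∀ c v, f c v ≤ p - 2 := by
      intro c v
      rw [hf]
      exact Nat.findGreatest_le _
    have hfspec : ∀ (c : Fin r) (v : ℕ), v < N → IncPath χ c N (f c v) v := by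
      intro c v hv
      rw [hf]
      exact Nat.findGreatest_spec (P := fun m => IncPath χ c N m v) (Nat.zero_le _)
        (hP0 c v hv)
    have hfge : ∀ (c : Fin r) (v m : ℕ), m ≤ p - 2 → IncPath χ c N m v → m ≤ f c v := by
      intro c v m hm hP
      rw [hf]
      exact Nat.le_findGreatest hm hP
    have key : ∀ u v, u < v → v < N → f (χ {u, v}) u < f (χ {u, v}) v := by
      intro u v huv hvN
      set c := χ {u, v} with hc
      obtain ⟨g, hg, hgN, hmono, hcol⟩ := hfspec c u (by omega)
      have hext : IncPath χ c N (f c u + 1) v := by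
        refine ⟨fun i => if i ≤ f c u then g i else v, by simp, ?_, ?_, ?_⟩
        · intro i hi
          by_cases h : i ≤ f c u
          · simp only [if_pos h]; exact hgN i h
          · simp only [if_neg h]; exact hvN
        · intro i hi
          by_cases h : i < f c u
          · simp only [if_pos (by omega : i ≤ f c u), if_pos (by omega : i + 1 ≤ f c u)]
            exact hmono i h
          · dsimp only
            rw [if_pos (by omega : i ≤ f c u), if_neg (by omega : ¬ i + 1 ≤ f c u),
              show i = f c u by omega, hg]
            exact huv
        · intro i hi
          by_cases h : i < f c u
          · simp only [if_pos (by omega : i ≤ f c u), if_pos (by omega : i + 1 ≤ f c u)]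
            exact hcol i h
          · dsimp only
            rw [if_pos (by omega : i ≤ f c u), if_neg (by omega : ¬ i + 1 ≤ f c u),
              show i = f c u by omega, hg]
      have hlt : f c u + 1 ≤ p - 2 := by
        by_contra h
        have h1 := hfle c u
        have h2 : f c u + 1 = p - 1 := by omega
        exact hex c v hvN (h2 ▸ hext)
      have := hfge c v _ hlt hext
      omega
    have hinj : Set.InjOn (fun v => fun c => f c v) ↑(range N) := by
      intro u hu v hv huv
      simp only [coe_range, Set.mem_Iio] at hu hv
      by_contra hne
      rcases Nat.lt_or_ge u v with h | h
      · have h1 := key u v h hv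
        have h2 : f (χ {u, v}) u = f (χ {u, v}) v := congrFun huv _
        omega
      · have h' : v < u := by omega
        have h1 := key v u h' hu
        have h2 : f (χ {v, u}) u = f (χ {v, u}) v := congrFun huv _
        omega
    have hcard : N ≤ (p-1)^r := by
      have hinj' : Set.InjOn (fun v => fun c : Fin r => (⟨f c v, by
          have := hfle c v; omega⟩ : Fin (p-1))) ↑(range N) := by
        intro u hu v hv huv
        apply hinj hu hv
        funext c
        exact congrArg Fin.val (congrFun huv c)
      have := Finset.card_le_card_of_injOn _ (fun v _ => Finset.mem_univ _) hinj'
      simpa [Fintype.card_fun] using this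
    omega

lemma divmod_helper (d i j : ℕ) (hd : 0 < d) (hj : j < d) :
    (i * d + j) / d = i ∧ (i * d + j) % d = j := by
  rw [mul_comm i d]
  constructor
  · rw [Nat.mul_add_div hd, Nat.div_eq_of_lt hj, add_zero]
  · rw [Nat.mul_add_mod, Nat.mod_eq_of_lt hj]

def vblock (l v : ℕ) : Finset ℕ := (range l).image fun t => 2 * (l * v + t)

def mblock (k l : ℕ) (e : Finset ℕ) : Finset ℕ :=
  (range (k - 2*l)).image fun t => 2 * ((k - 2*l) * Encodable.encode e + t) + 1

def blowupE (k l : ℕ) (e : Finset ℕ) : Finset ℕ := e.biUnion (vblock l) ∪ mblock k l e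

lemma card_vblock (l v : ℕ) : (vblock l v).card = l := by
  rw [vblock, card_image_of_injective, card_range]
  intro a b h
  change 2 * (l * v + a) = 2 * (l * v + b) at h
  omega

lemma card_mblock (k l : ℕ) (e : Finset ℕ) : (mblock k l e).card = k - 2*l := by
  rw [mblock, card_image_of_injective, card_range]
  intro a b h
  change 2 * ((k - 2*l) * Encodable.encode e + a) + 1 =
    2 * ((k - 2*l) * Encodable.encode e + b) + 1 at h
  omega

lemma vblock_disj {l v w : ℕ} (h : v ≠ w) : Disjoint (vblock l v) (vblock l w) := by
  rw [Finset.disjoint_left]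
  intro x hx hy
  simp only [vblock, mem_image, mem_range] at hx hy
  obtain ⟨t, ht, rfl⟩ := hx
  obtain ⟨s, hs, hst⟩ := hy
  have h1 : l * w + s = l * v + t := by omega
  have h2 : s = (w * l + s) % l := ((divmod_helper l w s (by omega) hs).2).symm
  have h3 : w = (w * l + s) / l := ((divmod_helper l w s (by omega) hs).1).symm
  have h4 : v = (v * l + t) / l := ((divmod_helper l v t (by omega) ht).1).symm
  apply h
  rw [h4, h3, mul_comm v l, mul_comm w l, h1]

lemma card_blowupE (k l : ℕ) (hl2 : 2*l ≤ k) {e : Finset ℕ} (he : e.card = 2) :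
    (blowupE k l e).card = k := by
  obtain ⟨a, b, hab, rfl⟩ := Finset.card_eq_two.mp he
  rw [blowupE, biUnion_insert, singleton_biUnion]
  have hd1 : Disjoint (vblock l a) (vblock l b) := vblock_disj hab
  have hd2 : Disjoint (vblock l a ∪ vblock l b) (mblock k l {a, b}) := by
    rw [Finset.disjoint_left]
    intro x hx hy
    simp only [mem_union, vblock, mblock, mem_image, mem_range] at hx hy
    obtain ⟨t, ht, hst⟩ := hy
    rcases hx with ⟨s, hs, h⟩ | ⟨s, hs, h⟩ <;> omega
  rw [card_union_of_disjoint hd2, card_union_of_disjoint hd1,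
    card_vblock, card_vblock, card_mblock]
  omega

lemma range_decomp (k l : ℕ) (hl2 : 2*l ≤ k) :
    range k = (range l ∪ (range (k-2*l)).image (·+l)) ∪ (range l).image (·+(k-l)) := by
  ext j
  simp only [mem_union, mem_image, mem_range]
  constructor
  · intro hj
    by_cases h1 : j < l
    · exact Or.inl (Or.inl h1)
    · by_cases h2 : j < k - l
      · exact Or.inl (Or.inr ⟨j - l, by omega, by omega⟩)
      · exact Or.inr ⟨j - (k-l), by omega, by omega⟩
  · rintro ((h | ⟨t, ht, rfl⟩) | ⟨t, ht, rfl⟩) <;> omega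


lemma hVerts_subset_pwe (k l m : ℕ) (hl : l ≤ k) :
    hVerts (pathWithEdges k l m) ⊆ range (m * (k-l) + l) := by
  intro x hx
  simp only [hVerts, pathWithEdges, mem_biUnion, id, mem_image, mem_range] at hx ⊢
  obtain ⟨e, ⟨i, hi, rfl⟩, hx⟩ := hx
  simp only [mem_image, mem_range] at hx
  obtain ⟨j, hj, rfl⟩ := hx
  have : i * (k - l) ≤ (m-1) * (k-l) := Nat.mul_le_mul_right _ (by omega)
  have h2 : (m-1) * (k-l) + (k-l) = m * (k-l) := by
    have : m - 1 + 1 = m := by omega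
    calc (m-1) * (k-l) + (k-l) = (m-1+1) * (k-l) := by ring
    _ = m * (k-l) := by rw [this]
  omega

lemma arrows_blowup (k l r m : ℕ) (hl1 : 1 ≤ l) (hl2 : 2*l ≤ k) (hm : 1 ≤ m)
    (G : Finset (Finset ℕ)) (hG : Arrows r G (hPath 2 1 (m+1))) :
    Arrows r (G.image (blowupE k l)) (pathWithEdges k l m) := by
  classical
  intro χ'
  obtain ⟨c, f, hfinj, hfedge⟩ := hG (fun e => χ' (blowupE k l e))
  have heq : hPath 2 1 (m+1) = pathWithEdges 2 1 m := by
    have h : (m + 1 - 1) / (2 - 1) = m := by norm_num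
    rw [hPath, h]
  rw [heq] at hfinj hfedge
  have hkl : 0 < k - l := by omega
  have finj : ∀ a b, a ≤ m → b ≤ m → f a = f b → a = b := by
    intro a b ha hb h
    exact hfinj (by exact_mod_cast mem_hVerts_path2 hm ha)
      (by exact_mod_cast mem_hVerts_path2 hm hb) h
  have hedge : ∀ i, i < m → ({f i, f (i+1)} : Finset ℕ) ∈ G ∧
      χ' (blowupE k l {f i, f (i+1)}) = c := by
    intro i hi
    have h1 : ({i, i+1} : Finset ℕ) ∈ pathWithEdges 2 1 m := by
      rw [pathEdges2]
      exact mem_image.mpr ⟨i, mem_range.mpr hi, rfl⟩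
    have h2 := hfedge _ h1
    have himg : ({i, i+1} : Finset ℕ).image f = {f i, f (i+1)} := by
      simp [image_insert, image_singleton]
    rw [himg, mem_filter] at h2
    exact h2
  -- the embedding
  set F : ℕ → ℕ := fun x =>
    if x % (k-l) < l then 2 * (l * f (x/(k-l)) + x % (k-l))
    else 2 * ((k-2*l) * Encodable.encode ({f (x/(k-l)), f (x/(k-l)+1)} : Finset ℕ)
      + (x % (k-l) - l)) + 1 with hF
  -- edge image computation
  have himg : ∀ i, i < m →
      ((range k).image fun j => i*(k-l)+j).image F = blowupE k l {f i, f (i+1)} := by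
    intro i hi
    rw [image_image, range_decomp k l hl2, image_union, image_union,
      image_image, image_image]
    have e1 : (range l).image (F ∘ fun j => i*(k-l)+j) = vblock l (f i) := by
      rw [vblock]
      apply image_congr
      intro j hj
      simp only [Finset.mem_coe, mem_range] at hj
      obtain ⟨hdiv, hmod⟩ := divmod_helper (k-l) i j hkl (by omega)
      show F (i*(k-l)+j) = 2 * (l * f i + j)
      rw [hF]
      dsimp only
      rw [hmod, hdiv, if_pos hj]
    have e2 : (range (k-2*l)).image ((F ∘ fun j => i*(k-l)+j) ∘ (·+l)) =
        mblock k l {f i, f (i+1)} := by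
      rw [mblock]
      apply image_congr
      intro t ht
      simp only [Finset.mem_coe, mem_range] at ht
      obtain ⟨hdiv, hmod⟩ := divmod_helper (k-l) i (t+l) hkl (by omega)
      show F (i*(k-l)+(t+l)) =
        2 * ((k-2*l) * Encodable.encode ({f i, f (i+1)} : Finset ℕ) + t) + 1
      rw [hF]
      dsimp only
      rw [hmod, hdiv, if_neg (show ¬ t + l < l by omega), Nat.add_sub_cancel]
    have e3 : (range l).image ((F ∘ fun j => i*(k-l)+j) ∘ (·+(k-l))) =
        vblock l (f (i+1)) := by
      rw [vblock]
      apply image_congr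
      intro t ht
      simp only [Finset.mem_coe, mem_range] at ht
      have hre : i*(k-l) + (t + (k-l)) = (i+1)*(k-l) + t := by ring
      obtain ⟨hdiv, hmod⟩ := divmod_helper (k-l) (i+1) t hkl (by omega)
      show F (i*(k-l)+(t+(k-l))) = 2 * (l * f (i+1) + t)
      rw [hre, hF]
      dsimp only
      rw [hmod, hdiv, if_pos (show t < l from ht)]
    rw [e1, e2, e3, blowupE, biUnion_insert, singleton_biUnion]
    ext x
    simp only [mem_union]
    tauto
  refine ⟨c, F, ?_, ?_⟩
  · -- injectivity
    intro x hx y hy hxy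
    have hx' : x < m * (k-l) + l := by
      have := hVerts_subset_pwe k l m (by omega) (by exact_mod_cast hx)
      simpa using this
    have hy' : y < m * (k-l) + l := by
      have := hVerts_subset_pwe k l m (by omega) (by exact_mod_cast hy)
      simpa using this
    have hcmx : (k-l) * (x / (k-l)) = (x / (k-l)) * (k-l) := mul_comm _ _
    have hcmy : (k-l) * (y / (k-l)) = (y / (k-l)) * (k-l) := mul_comm _ _
    have hcmm : (k-l) * m = m * (k-l) := mul_comm _ _
    have hxd : x / (k-l) ≤ m := by
      rw [Nat.div_le_iff_le_mul_add_pred hkl]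
      omega
    have hyd : y / (k-l) ≤ m := by
      rw [Nat.div_le_iff_le_mul_add_pred hkl]
      omega
    have hxm := Nat.mod_lt x (y := k-l) hkl
    have hym := Nat.mod_lt y (y := k-l) hkl
    have hxdm := Nat.div_add_mod x (k-l)
    have hydm := Nat.div_add_mod y (k-l)
    rw [hF] at hxy
    dsimp only at hxy
    by_cases h1 : x % (k-l) < l <;> by_cases h2 : y % (k-l) < l
    · rw [if_pos h1, if_pos h2] at hxy
      have hAB : l * f (x/(k-l)) + x % (k-l) = l * f (y/(k-l)) + y % (k-l) :=
        (fun a b (h : 2*a = 2*b) => by omega) _ _ hxy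
      have q1 := divmod_helper l (f (x/(k-l))) (x % (k-l)) (by omega) h1
      have q2 := divmod_helper l (f (y/(k-l))) (y % (k-l)) (by omega) h2
      have hfe : f (x/(k-l)) = f (y/(k-l)) := by
        rw [← q1.1, ← q2.1, mul_comm (f (x/(k-l))) l, mul_comm (f (y/(k-l))) l, hAB]
      have hme : x % (k-l) = y % (k-l) := by
        rw [← q1.2, ← q2.2, mul_comm (f (x/(k-l))) l, mul_comm (f (y/(k-l))) l, hAB]
      have hde := finj _ _ hxd hyd hfe
      rw [← hxdm, ← hydm, hde, hme]
    · rw [if_pos h1, if_neg h2] at hxy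
      exact absurd hxy ((fun a b => by omega : ∀ a b : ℕ, 2*a ≠ 2*b+1) _ _)
    · rw [if_neg h1, if_pos h2] at hxy
      exact absurd hxy.symm ((fun a b => by omega : ∀ a b : ℕ, 2*a ≠ 2*b+1) _ _)
    · rw [if_neg h1, if_neg h2] at hxy
      have hs : 0 < k - 2*l := by omega
      have hAB : (k-2*l) * Encodable.encode ({f (x/(k-l)), f (x/(k-l)+1)} : Finset ℕ)
          + (x % (k-l) - l)
          = (k-2*l) * Encodable.encode ({f (y/(k-l)), f (y/(k-l)+1)} : Finset ℕ)
          + (y % (k-l) - l) :=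
        (fun a b (h : 2*a+1 = 2*b+1) => by omega) _ _ hxy
      have q1 := divmod_helper (k-2*l)
        (Encodable.encode ({f (x/(k-l)), f (x/(k-l)+1)} : Finset ℕ)) (x % (k-l) - l) hs (by omega)
      have q2 := divmod_helper (k-2*l)
        (Encodable.encode ({f (y/(k-l)), f (y/(k-l)+1)} : Finset ℕ)) (y % (k-l) - l) hs (by omega)
      have hee : Encodable.encode ({f (x/(k-l)), f (x/(k-l)+1)} : Finset ℕ) =
          Encodable.encode ({f (y/(k-l)), f (y/(k-l)+1)} : Finset ℕ) := by
        rw [← q1.1, ← q2.1,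
          mul_comm (Encodable.encode ({f (x/(k-l)), f (x/(k-l)+1)} : Finset ℕ)) (k-2*l),
          mul_comm (Encodable.encode ({f (y/(k-l)), f (y/(k-l)+1)} : Finset ℕ)) (k-2*l), hAB]
      have hme' : x % (k-l) - l = y % (k-l) - l := by
        rw [← q1.2, ← q2.2,
          mul_comm (Encodable.encode ({f (x/(k-l)), f (x/(k-l)+1)} : Finset ℕ)) (k-2*l),
          mul_comm (Encodable.encode ({f (y/(k-l)), f (y/(k-l)+1)} : Finset ℕ)) (k-2*l), hAB]
      have hme : x % (k-l) = y % (k-l) := by omega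
      have hsete : ({f (x/(k-l)), f (x/(k-l)+1)} : Finset ℕ) =
          {f (y/(k-l)), f (y/(k-l)+1)} := Encodable.encode_injective hee
      have hxlt : x / (k-l) < m := by
        by_contra hcon
        have hxq : x / (k-l) = m := by omega
        rw [hxq] at hxdm
        omega
      have hylt : y / (k-l) < m := by
        by_contra hcon
        have hyq : y / (k-l) = m := by omega
        rw [hyq] at hydm
        omega
      have m1 : f (x/(k-l)) ∈ ({f (y/(k-l)), f (y/(k-l)+1)} : Finset ℕ) := by
        rw [← hsete]; simp
      have m2 : f (x/(k-l)+1) ∈ ({f (y/(k-l)), f (y/(k-l)+1)} : Finset ℕ) := by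
        rw [← hsete]; simp
      simp only [mem_insert, mem_singleton] at m1 m2
      have d1 : x/(k-l) = y/(k-l) ∨ x/(k-l) = y/(k-l)+1 := by
        rcases m1 with h | h
        · exact Or.inl (finj _ _ (by omega) (by omega) h)
        · exact Or.inr (finj _ _ (by omega) (by omega) h)
      have d2 : x/(k-l)+1 = y/(k-l) ∨ x/(k-l)+1 = y/(k-l)+1 := by
        rcases m2 with h | h
        · exact Or.inl (finj _ _ (by omega) (by omega) h)
        · exact Or.inr (finj _ _ (by omega) (by omega) h)
      have hde : x/(k-l) = y/(k-l) := by omega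
      rw [← hxdm, ← hydm, hde, hme]
  · -- edges
    intro e he
    obtain ⟨i, hi, rfl⟩ := mem_image.mp he
    simp only [mem_range] at hi
    rw [himg i hi, mem_filter]
    exact ⟨mem_image.mpr ⟨_, (hedge i hi).1, rfl⟩, (hedge i hi).2⟩

theorem stmt11 (k r l n : ℕ) (hk : 2 ≤ k) (hr : 2 ≤ r) (hl1 : 1 ≤ l) (hl2 : 2 * l ≤ k)
    (hn : k ≤ n) (hdvd : (k - l) ∣ (n - l)) :
    sizeRamsey k r (hPath k l n) ≤ sizeRamsey 2 r (hPath 2 1 ((n - l) / (k - l) + 1)) := by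
  have hkl : 0 < k - l := by omega
  set m := (n - l) / (k - l) with hm
  have hm1 : 1 ≤ m := by
    rw [hm, Nat.one_le_div_iff hkl]
    omega
  obtain ⟨G0, hG0u, hG0a⟩ := exists_arrows_path r (m+1) (by omega)
  have hne : {s | ∃ G : Finset (Finset ℕ), IsUniform 2 G ∧
      Arrows r G (hPath 2 1 (m+1)) ∧ G.card = s}.Nonempty :=
    ⟨G0.card, G0, hG0u, hG0a, rfl⟩
  obtain ⟨G, hGu, hGa, hGc⟩ := Nat.sInf_mem hne
  have step : sizeRamsey k r (hPath k l n) ≤ (G.image (blowupE k l)).card := by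
    apply Nat.sInf_le
    refine ⟨G.image (blowupE k l), ?_, ?_, rfl⟩
    · intro e he
      obtain ⟨e', he', rfl⟩ := mem_image.mp he
      exact card_blowupE k l hl2 (hGu e' he')
    · have hp : hPath k l n = pathWithEdges k l m := by
        simp only [hPath, ← hm]
      rw [hp]
      exact arrows_blowup k l r m hl1 (by omega) hm1 G hGa
  have h2 : sizeRamsey 2 r (hPath 2 1 (m + 1)) = G.card := by
    simp only [sizeRamsey]
    exact hGc.symm
  rw [h2]
  exact le_trans step (card_image_le)
end

section
/- Let r, k ≥ 2, 1 ≤ ℓ ≤ k-1, and let n ≥ k satisfy (k-ℓ) | (n-ℓ). If d ≥ 1 divides each of n, k and ℓ, then R̂_r(P_n^{(k,ℓ)}) ≤ R̂_r(P_{n/d}^{(k/d, ℓ/d)}). -/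
open Finset

section Aux

lemma hyperRamsey (r : ℕ) (hr : 0 < r) (k : ℕ) : ∀ n : ℕ, ∃ N : ℕ,
    ∀ (χ : Finset ℕ → Fin r) (A : Finset ℕ), N ≤ A.card →
    ∃ S ⊆ A, n ≤ S.card ∧ ∃ c : Fin r, ∀ e ⊆ S, e.card = k → χ e = c := by
  induction k with
  | zero =>
    intro n
    refine ⟨n, fun χ A hA => ?_⟩
    obtain ⟨S, hS, hcard⟩ := Finset.exists_subset_card_eq hA
    exact ⟨S, hS, hcard.ge, χ ∅, fun e _ hce => by
      rw [Finset.card_eq_zero.mp hce]⟩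
  | succ k IH =>
    have pre : ∀ t : ℕ, ∃ N : ℕ, ∀ (χ : Finset ℕ → Fin r) (A : Finset ℕ), N ≤ A.card →
        ∃ S ⊆ A, S.card = t ∧ ∃ col : ℕ → Fin r, ∀ e ⊆ S, e.card = k + 1 →
          ∀ x ∈ e, (∀ y ∈ e, x ≤ y) → χ e = col x := by
      intro t
      induction t with
      | zero =>
        refine ⟨0, fun χ A _ => ⟨∅, by simp, by simp, fun _ => χ ∅, ?_⟩⟩
        intro e he hce
        simp only [Finset.subset_empty] at he
        subst he; simp at hce
      | succ t IHt =>
        obtain ⟨Nt, hNt⟩ := IHt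
        obtain ⟨NI, hNI⟩ := IH Nt
        refine ⟨NI + 1, fun χ A hA => ?_⟩
        have hAne : A.Nonempty := Finset.card_pos.mp (by omega)
        set x := A.min' hAne with hxdef
        have hxA : x ∈ A := A.min'_mem hAne
        have hcardE : NI ≤ (A.erase x).card := by
          rw [Finset.card_erase_of_mem hxA]; omega
        obtain ⟨B, hBsub, hBcard, cx, hcx⟩ :=
          hNI (fun e => χ (insert x e)) (A.erase x) hcardE
        obtain ⟨S, hSsub, hScard, col, hcol⟩ := hNt χ B hBcard
        have hxB : x ∉ B := fun h => (Finset.mem_erase.mp (hBsub h)).1 rfl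
        have hxS : x ∉ S := fun h => hxB (hSsub h)
        have hxlt : ∀ y ∈ S, x < y := by
          intro y hy
          have hyA : y ∈ A.erase x := hBsub (hSsub hy)
          have := A.min'_le y (Finset.mem_erase.mp hyA).2
          have hne := (Finset.mem_erase.mp hyA).1
          omega
        refine ⟨insert x S, ?_, ?_, fun y => if y = x then cx else col y, ?_⟩
        · intro y hy
          rcases Finset.mem_insert.mp hy with h | h
          · exact h ▸ hxA
          · exact (Finset.mem_erase.mp (hBsub (hSsub h))).2
        · rw [Finset.card_insert_of_notMem hxS, hScard]
        · intro e he hce z hz hzmin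
          by_cases hxe : x ∈ e
          · have hzx : z = x := by
              have h1 : z ≤ x := hzmin x hxe
              rcases Finset.mem_insert.mp (he hz) with h | h
              · exact h
              · exact absurd (hxlt z h) (by omega)
            have herase : e.erase x ⊆ S := by
              intro y hy
              have := Finset.mem_erase.mp hy
              rcases Finset.mem_insert.mp (he this.2) with h | h
              · exact absurd h this.1
              · exact h
            have hec : (e.erase x).card = k := by
              rw [Finset.card_erase_of_mem hxe, hce]
              omega
            have := hcx (e.erase x) (herase.trans hSsub) hec
            rw [Finset.insert_erase hxe] at this
            rw [hzx, this]; simp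
          · have heS : e ⊆ S := by
              intro y hy
              rcases Finset.mem_insert.mp (he hy) with h | h
              · exact absurd (h ▸ hy) hxe
              · exact h
            have hzne : z ≠ x := fun h => hxe (h ▸ hz)
            rw [hcol e heS hce z hz hzmin]
            simp [hzne]
    intro n
    obtain ⟨N, hN⟩ := pre (r * n)
    refine ⟨N, fun χ A hA => ?_⟩
    obtain ⟨S, hSsub, hScard, col, hcol⟩ := hN χ A hA
    have huniv : (Finset.univ : Finset (Fin r)).Nonempty := by
      simp [Finset.univ_nonempty_iff, Fin.pos_iff_nonempty.mp hr]
    obtain ⟨c, _, hc⟩ := Finset.exists_le_card_fiber_of_mul_le_card_of_maps_to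
      (f := col) (t := Finset.univ) (fun a _ => Finset.mem_univ _) huniv
      (by rw [Finset.card_univ, Fintype.card_fin, hScard])
    refine ⟨S.filter (fun y => col y = c), (Finset.filter_subset _ _).trans hSsub, hc, c, ?_⟩
    intro e he hce
    have hene : e.Nonempty := Finset.card_pos.mp (by omega)
    have hmin : e.min' hene ∈ e := e.min'_mem hene
    have := hcol e (he.trans (Finset.filter_subset _ _)) hce (e.min' hene) hmin
      (fun y hy => e.min'_le y hy)
    rw [this]
    exact (Finset.mem_filter.mp (he hmin)).2

/-- blow-up of an edge -/
def blow (d : ℕ) (e : Finset ℕ) : Finset ℕ :=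
  e.biUnion fun v => (Finset.range d).image fun t => v * d + t

lemma mul_add_div_eq {d v t : ℕ} (hd : 0 < d) (ht : t < d) : (v * d + t) / d = v := by
  rw [add_comm, Nat.add_mul_div_right _ _ hd, Nat.div_eq_of_lt ht, zero_add]

lemma mul_add_mod_eq {d v t : ℕ} (ht : t < d) : (v * d + t) % d = t := by
  rw [add_comm, Nat.add_mul_mod_self_right, Nat.mod_eq_of_lt ht]

lemma mem_blow {d : ℕ} (hd : 0 < d) {e : Finset ℕ} {x : ℕ} :
    x ∈ blow d e ↔ x / d ∈ e := by
  simp only [blow, mem_biUnion, mem_image, mem_range]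
  constructor
  · rintro ⟨v, hv, t, ht, rfl⟩
    rwa [mul_add_div_eq hd ht]
  · intro h
    exact ⟨x / d, h, x % d, Nat.mod_lt _ hd, by rw [Nat.div_add_mod']⟩

lemma blow_injective {d : ℕ} (hd : 0 < d) : Function.Injective (blow d) := by
  intro e₁ e₂ h
  ext v
  have h1 : v * d ∈ blow d e₁ ↔ v * d ∈ blow d e₂ := by rw [h]
  rwa [mem_blow hd, mem_blow hd, Nat.mul_div_cancel _ hd] at h1

lemma card_blow {d : ℕ} (hd : 0 < d) (e : Finset ℕ) : (blow d e).card = e.card * d := by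
  rw [blow, Finset.card_biUnion]
  · have : ∀ v : ℕ, ((Finset.range d).image fun t => v * d + t).card = d := by
      intro v
      rw [Finset.card_image_of_injective _ (add_right_injective _), Finset.card_range]
    simp only [this, Finset.sum_const, smul_eq_mul]
  · intro a _ b _ hab
    simp only [Finset.disjoint_left, mem_image, mem_range]
    rintro x ⟨t, ht, rfl⟩ ⟨s, hs, hx⟩
    apply hab
    have h1 := mul_add_div_eq hd ht (v := a)
    have h2 := mul_add_div_eq hd hs (v := b)
    rw [hx] at h2
    omega

end Aux

theorem stmt12 (k r l n d : ℕ) (hk : 2 ≤ k) (hr : 2 ≤ r) (hl1 : 1 ≤ l) (hl2 : l ≤ k - 1)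
    (hn : k ≤ n) (hdvd : (k - l) ∣ (n - l)) (hd : 1 ≤ d)
    (hdn : d ∣ n) (hdk : d ∣ k) (hdl : d ∣ l) :
    sizeRamsey k r (hPath k l n) ≤ sizeRamsey (k / d) r (hPath (k / d) (l / d) (n / d)) := by
  have hd0 : 0 < d := hd
  set k' := k / d with hk'def
  set l' := l / d with hl'def
  set n' := n / d with hn'def
  have hkk : d * k' = k := Nat.mul_div_cancel' hdk
  have hll : d * l' = l := Nat.mul_div_cancel' hdl
  have hnn : d * n' = n := Nat.mul_div_cancel' hdn
  have hlk : l < k := by omega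
  have hl'k' : l' < k' := by
    have : d * l' < d * k' := by omega
    exact lt_of_mul_lt_mul_left this (Nat.zero_le d)
  have hkl : k - l = d * (k' - l') := by rw [Nat.mul_sub, hkk, hll]
  have hln : l ≤ n := by omega
  have hnl : n - l = d * (n' - l') := by rw [Nat.mul_sub, hnn, hll]
  have hm0 : (n - l) / (k - l) = (n' - l') / (k' - l') := by
    rw [hkl, hnl, Nat.mul_div_mul_left _ _ hd0]
  set m := (n' - l') / (k' - l') with hmdef
  have hdvd' : (k' - l') ∣ (n' - l') := by
    obtain ⟨s, hs⟩ := hdvd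
    refine ⟨s, Nat.eq_of_mul_eq_mul_left hd0 ?_⟩
    rw [← hnl, hs, hkl]; ring
  have hml : m * (k' - l') = n' - l' := Nat.div_mul_cancel hdvd'
  have hk'l' : 0 < k' - l' := by omega
  have hl'n' : l' ≤ n' := Nat.div_le_div_right hln
  have hn'l' : k' - l' ≤ n' - l' := by
    have : d * (k' - l') ≤ d * (n' - l') := by rw [← hkl, ← hnl]; omega
    exact le_of_mul_le_mul_left this hd0
  have hm1 : 1 ≤ m := (Nat.one_le_div_iff hk'l').mpr hn'l'
  have hn'eq : n' = l' + m * (k' - l') := by omega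
  -- small path facts
  have hsmall : hPath k' l' n' = pathWithEdges k' l' m := rfl
  have hbig : hPath k l n = pathWithEdges k l m := by
    rw [hPath, hm0]
  have hmem_small : ∀ e, e ∈ hPath k' l' n' ↔
      ∃ i < m, ((Finset.range k').image fun j => i * (k' - l') + j) = e := by
    intro e
    rw [hsmall, pathWithEdges]
    simp [mem_image, mem_range]
  have hmem_big : ∀ e, e ∈ hPath k l n ↔
      ∃ i < m, ((Finset.range k).image fun j => i * (k - l) + j) = e := by
    intro e
    rw [hbig, pathWithEdges]
    simp [mem_image, mem_range]
  have hverts_small : ∀ u ∈ hVerts (hPath k' l' n'), u < n' := by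
    intro u hu
    rw [hVerts, mem_biUnion] at hu
    obtain ⟨e, he, hue⟩ := hu
    rw [hmem_small] at he
    obtain ⟨i, hi, rfl⟩ := he
    simp only [mem_image, mem_range, id] at hue
    obtain ⟨j, hj, rfl⟩ := hue
    have h1 : i * (k' - l') ≤ (m - 1) * (k' - l') :=
      Nat.mul_le_mul_right _ (by omega)
    have h2 : (m - 1) * (k' - l') + (k' - l') = m * (k' - l') := by
      have : m - 1 + 1 = m := by omega
      rw [← Nat.succ_mul]
      rw [Nat.succ_eq_add_one, this]
    omega
  -- quotient of big-path vertices are small-path vertices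
  have keydiv : ∀ i j : ℕ, (i * (k - l) + j) / d = i * (k' - l') + j / d := by
    intro i j
    have h1 : i * (k - l) + j = j + i * (k' - l') * d := by rw [hkl]; ring
    rw [h1, Nat.add_mul_div_right _ _ hd0, add_comm]
  have keymod : ∀ i j : ℕ, (i * (k - l) + j) % d = j % d := by
    intro i j
    have h1 : i * (k - l) + j = j + i * (k' - l') * d := by rw [hkl]; ring
    rw [h1, Nat.add_mul_mod_self_right]
  have hquot : ∀ u ∈ hVerts (hPath k l n), u / d ∈ hVerts (hPath k' l' n') := by
    intro u hu
    rw [hVerts, mem_biUnion] at hu ⊢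
    obtain ⟨e, he, hue⟩ := hu
    rw [hmem_big] at he
    obtain ⟨i, hi, rfl⟩ := he
    simp only [mem_image, mem_range, id] at hue
    obtain ⟨j, hj, rfl⟩ := hue
    refine ⟨(Finset.range k').image fun j => i * (k' - l') + j,
      (hmem_small _).mpr ⟨i, hi, rfl⟩, ?_⟩
    simp only [mem_image, mem_range, id]
    refine ⟨j / d, ?_, (keydiv i j).symm⟩
    rw [Nat.div_lt_iff_lt_mul hd0]
    have hkd : k = k' * d := by rw [← hkk, mul_comm]
    omega
  -- Part 1: the small Ramsey set is nonempty (complete graph via hypergraph Ramsey)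
  have hr0 : 0 < r := by omega
  obtain ⟨N, hN⟩ := hyperRamsey r hr0 k' n'
  set Gc : Finset (Finset ℕ) := Finset.powersetCard k' (Finset.range N) with hGcdef
  have hGcuni : IsUniform k' Gc := by
    intro e he
    exact (Finset.mem_powersetCard.mp he).2
  have hcard_small_edge : ∀ i : ℕ,
      ((Finset.range k').image fun j => i * (k' - l') + j).card = k' := by
    intro i
    rw [Finset.card_image_of_injective _ (fun a b hab => by omega), Finset.card_range]
  have hedge_sub : ∀ i < m, ((Finset.range k').image fun j => i * (k' - l') + j) ⊆
      Finset.range n' := by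
    intro i hi u hu
    rw [mem_range]
    apply hverts_small
    rw [hVerts, mem_biUnion]
    exact ⟨_, (hmem_small _).mpr ⟨i, hi, rfl⟩, hu⟩
  have hGcarr : Arrows r Gc (hPath k' l' n') := by
    intro χ
    obtain ⟨S, hSsub, hScard, c, hc⟩ := hN χ (Finset.range N) (by rw [Finset.card_range])
    refine ⟨c, fun j => if h : j < n' then (S.orderEmbOfCardLe hScard) ⟨j, h⟩ else 0, ?_, ?_⟩
    · intro u hu v hv huv
      have hun : u < n' := hverts_small u hu
      have hvn : v < n' := hverts_small v hv
      dsimp only at huv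
      rw [dif_pos hun, dif_pos hvn] at huv
      have := (S.orderEmbOfCardLe hScard).injective huv
      exact congrArg Fin.val this
    · intro e he
      obtain ⟨i, hi, rfl⟩ := (hmem_small e).mp he
      set E := (Finset.range k').image fun j => i * (k' - l') + j with hEdef
      have hEsub : E ⊆ Finset.range n' := hedge_sub i hi
      set f : ℕ → ℕ := fun j => if h : j < n' then (S.orderEmbOfCardLe hScard) ⟨j, h⟩ else 0
        with hfdef
      have himS : E.image f ⊆ S := by
        intro x hx
        rw [mem_image] at hx
        obtain ⟨u, hu, rfl⟩ := hx
        have hun : u < n' := mem_range.mp (hEsub hu)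
        rw [hfdef]; dsimp only
        rw [dif_pos hun]
        exact S.orderEmbOfCardLe_mem hScard _
      have hinjE : Set.InjOn f ↑E := by
        intro u hu v hv huv
        have hun : u < n' := mem_range.mp (hEsub hu)
        have hvn : v < n' := mem_range.mp (hEsub hv)
        rw [hfdef] at huv; dsimp only at huv
        rw [dif_pos hun, dif_pos hvn] at huv
        have := (S.orderEmbOfCardLe hScard).injective huv
        exact congrArg Fin.val this
      have hcardim : (E.image f).card = k' := by
        rw [Finset.card_image_of_injOn hinjE, hEdef, hcard_small_edge]
      rw [Finset.mem_filter]
      refine ⟨Finset.mem_powersetCard.mpr ⟨himS.trans hSsub, hcardim⟩, ?_⟩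
      exact hc _ himS hcardim
  have hnonempty : {m | ∃ G : Finset (Finset ℕ), IsUniform k' G ∧ Arrows r G (hPath k' l' n')
      ∧ G.card = m}.Nonempty := ⟨Gc.card, Gc, hGcuni, hGcarr, rfl⟩
  -- Part 2: extract a minimizer G'
  obtain ⟨G', hGu, hGa, hGcard⟩ := Nat.sInf_mem hnonempty
  -- Part 3: blow up G'
  set G : Finset (Finset ℕ) := G'.image (blow d) with hGdef
  have hGuni : IsUniform k G := by
    intro e he
    rw [hGdef, mem_image] at he
    obtain ⟨e', he', rfl⟩ := he
    rw [card_blow hd0, hGu e' he', ← hkk, mul_comm]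
  have hGcard2 : G.card = G'.card := Finset.card_image_of_injective _ (blow_injective hd0)
  have hGarr : Arrows r G (hPath k l n) := by
    intro χ
    obtain ⟨c, f, hf, hedge⟩ := hGa fun e => χ (blow d e)
    set F : ℕ → ℕ := fun u => f (u / d) * d + u % d with hFdef
    refine ⟨c, F, ?_, ?_⟩
    · intro u hu v hv huv
      rw [hFdef] at huv; dsimp only at huv
      have hmu : (f (u / d) * d + u % d) % d = u % d := mul_add_mod_eq (Nat.mod_lt _ hd0)
      have hmv : (f (v / d) * d + v % d) % d = v % d := mul_add_mod_eq (Nat.mod_lt _ hd0)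
      have hmod : u % d = v % d := by rw [← hmu, ← hmv, huv]
      have hfd : f (u / d) = f (v / d) := by
        rw [hmod] at huv
        exact Nat.eq_of_mul_eq_mul_right hd0 (Nat.add_right_cancel huv)
      have hdiv : u / d = v / d := hf (hquot u hu) (hquot v hv) hfd
      have h2 := Nat.div_add_mod u d
      have h3 := Nat.div_add_mod v d
      rw [hdiv, hmod] at h2
      omega
    · intro e he
      obtain ⟨i, hi, rfl⟩ := (hmem_big e).mp he
      set E' := (Finset.range k').image fun j => i * (k' - l') + j with hE'def
      have hE'mem : E' ∈ hPath k' l' n' := (hmem_small _).mpr ⟨i, hi, rfl⟩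
      have himg : ((Finset.range k).image fun j => i * (k - l) + j).image F
          = blow d (E'.image f) := by
        ext x
        simp only [Finset.image_image, mem_image, mem_range, Function.comp,
          mem_blow hd0, hE'def]
        constructor
        · rintro ⟨j, hj, rfl⟩
          rw [hFdef]; dsimp only
          rw [mul_add_div_eq hd0 (Nat.mod_lt _ hd0)]
          refine ⟨j / d, ?_, ?_⟩
          · rw [Nat.div_lt_iff_lt_mul hd0]
            have hkd : k = k' * d := by rw [← hkk, mul_comm]
            omega
          · rw [keydiv]
        · rintro ⟨j', hj', hfx⟩
          refine ⟨j' * d + x % d, ?_, ?_⟩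
          · have h1 : (j' + 1) * d ≤ k' * d := Nat.mul_le_mul_right _ (by omega)
            rw [add_mul, one_mul] at h1
            have hkd : k = k' * d := by rw [← hkk, mul_comm]
            have h2 := Nat.mod_lt x hd0
            omega
          · rw [hFdef]; dsimp only
            rw [keydiv, keymod, mul_add_div_eq hd0 (Nat.mod_lt _ hd0),
              mul_add_mod_eq (Nat.mod_lt _ hd0), hfx, Nat.div_add_mod']
      rw [himg, Finset.mem_filter]
      have h4 := hedge E' hE'mem
      rw [Finset.mem_filter] at h4
      exact ⟨by rw [hGdef]; exact Finset.mem_image_of_mem _ h4.1, h4.2⟩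
  calc sizeRamsey k r (hPath k l n) ≤ G.card :=
        Nat.sInf_le ⟨G, hGuni, hGarr, rfl⟩
    _ = G'.card := hGcard2
    _ = sizeRamsey k' r (hPath k' l' n') := hGcard
end

section
/- Let r ≥ 2, k ≥ 2, 1 ≤ ℓ ≤ k-1 and let m be an integer with 1 ≤ m < k/(k-ℓ). Then R̂_r(P_{ℓ+(m+1)(k-ℓ)}^{(k,ℓ)}) ≤ R̂_r(P_{ℓ-1+(m+1)(k-ℓ)}^{(k-1,ℓ-1)}). -/
open Finset

/-- Infinite hypergraph Ramsey theorem. -/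
lemma ramseyInf : ∀ (q : ℕ) {r : ℕ} (χ : Finset ℕ → Fin r) (S : Set ℕ), S.Infinite →
    ∃ T, T ⊆ S ∧ T.Infinite ∧ ∃ c, ∀ t : Finset ℕ, ↑t ⊆ T → t.card = q → χ t = c := by
  intro q
  induction q with
  | zero =>
    intro r χ S hS
    exact ⟨S, subset_rfl, hS, χ ∅, fun t _ ht => by rw [Finset.card_eq_zero.mp ht]⟩
  | succ q IH =>
    intro r χ S hS
    have step : ∀ W : Set ℕ, W.Infinite → ∃ p : ℕ × Fin r × Set ℕ, p.1 ∈ W ∧ p.2.2 ⊆ W ∧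
        p.2.2.Infinite ∧ (∀ x ∈ p.2.2, p.1 < x) ∧
        (∀ t : Finset ℕ, ↑t ⊆ p.2.2 → t.card = q → χ (insert p.1 t) = p.2.1) := by
      intro W hW
      obtain ⟨a, ha⟩ := hW.nonempty
      have h1 : (W \ {x | x ≤ a}).Infinite := hW.diff (Set.finite_le_nat a)
      obtain ⟨T, hT1, hT2, c, hc⟩ := IH (fun t => χ (insert a t)) _ h1
      refine ⟨⟨a, c, T⟩, ha, hT1.trans Set.diff_subset, hT2, ?_, hc⟩
      intro x hx
      have := hT1 hx
      simp only [Set.mem_diff, Set.mem_setOf_eq] at this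
      omega
    obtain ⟨F, hF⟩ : ∃ F : {W : Set ℕ // W.Infinite} → ℕ × Fin r × {W : Set ℕ // W.Infinite},
        ∀ W, (F W).1 ∈ W.1 ∧ (F W).2.2.1 ⊆ W.1 ∧ (∀ x ∈ (F W).2.2.1, (F W).1 < x) ∧
          (∀ t : Finset ℕ, ↑t ⊆ (F W).2.2.1 → t.card = q →
            χ (insert (F W).1 t) = (F W).2.1) := by
      choose F h1 h2 h3 h4 h5 using step
      exact ⟨fun W => ((F W.1 W.2).1, (F W.1 W.2).2.1, ⟨(F W.1 W.2).2.2, h3 W.1 W.2⟩),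
        fun W => ⟨h1 W.1 W.2, h2 W.1 W.2, h4 W.1 W.2, h5 W.1 W.2⟩⟩
    let seq : ℕ → {W : Set ℕ // W.Infinite} := fun n => Nat.rec ⟨S, hS⟩ (fun _ p => (F p).2.2) n
    let a : ℕ → ℕ := fun n => (F (seq n)).1
    let col : ℕ → Fin r := fun n => (F (seq n)).2.1
    have hmem : ∀ n, a n ∈ (seq n).1 := fun n => (hF (seq n)).1
    have hsub : ∀ n, (seq (n+1)).1 ⊆ (seq n).1 := fun n => (hF (seq n)).2.1
    have hlt : ∀ n, ∀ x ∈ (seq (n+1)).1, a n < x := fun n => (hF (seq n)).2.2.1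
    have hcol : ∀ n, ∀ t : Finset ℕ, ↑t ⊆ (seq (n+1)).1 → t.card = q →
        χ (insert (a n) t) = col n := fun n => (hF (seq n)).2.2.2
    have hchain : ∀ i j, i ≤ j → (seq j).1 ⊆ (seq i).1 := by
      intro i j hij
      induction j, hij using Nat.le_induction with
      | base => exact subset_rfl
      | succ j hij ih => exact (hsub j).trans ih
    have hS0 : ∀ n, (seq n).1 ⊆ S := fun n => hchain 0 n (Nat.zero_le n)
    have hamono : ∀ i j, i < j → a i < a j := fun i j hij =>
      hlt i (a j) (hchain (i+1) j hij (hmem j))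
    have hainj : Function.Injective a := by
      intro i j h
      rcases lt_trichotomy i j with h' | h' | h'
      · exact absurd h (hamono i j h').ne
      · exact h'
      · exact absurd h.symm (hamono j i h').ne
    obtain ⟨c0, hc0⟩ := Finite.exists_infinite_fiber col
    have hI : (col ⁻¹' {c0}).Infinite := Set.infinite_coe_iff.mp hc0
    refine ⟨a '' (col ⁻¹' {c0}), ?_, hI.image hainj.injOn, c0, ?_⟩
    · rintro _ ⟨n, _, rfl⟩
      exact hS0 n (hmem n)
    · intro t ht hcard
      have htne : t.Nonempty := card_pos.mp (by omega)
      set x0 := t.min' htne with hx0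
      have hx0t : x0 ∈ t := t.min'_mem htne
      obtain ⟨i, hi, hai⟩ := ht (Finset.mem_coe.mpr hx0t)
      have hci : col i = c0 := hi
      have herase : ↑(t.erase x0) ⊆ (seq (i+1)).1 := by
        intro y hy
        have hy' : y ∈ t.erase x0 := Finset.mem_coe.mp hy
        have hyt : y ∈ t := Finset.mem_of_mem_erase hy'
        have hyne : y ≠ x0 := Finset.ne_of_mem_erase hy'
        obtain ⟨j, hj, haj⟩ := ht (Finset.mem_coe.mpr hyt)
        have hij : i < j := by
          rcases lt_trichotomy i j with h' | h' | h'
          · exact h'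
          · exfalso
            apply hyne
            rw [← haj, ← h', hai]
          · exfalso
            have h1 : a j < a i := hamono j i h'
            have h2 : x0 ≤ y := t.min'_le y hyt
            rw [← hai, ← haj] at h2
            omega
        have := hchain (i+1) j hij (hmem j)
        rwa [haj] at this
      have hcq : (t.erase x0).card = q := by
        rw [Finset.card_erase_of_mem hx0t, hcard]
        omega
      have := hcol i (t.erase x0) herase hcq
      calc χ t = χ (insert x0 (t.erase x0)) := by rw [Finset.insert_erase hx0t]
        _ = χ (insert (a i) (t.erase x0)) := by rw [hai]
        _ = col i := this
        _ = c0 := hci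

/-- Existence of a Ramsey graph (finite, via compactness). -/
lemma exists_arrows_s13 (q r : ℕ) (H : Finset (Finset ℕ)) (hH : ∀ e ∈ H, e.card = q) :
    ∃ G : Finset (Finset ℕ), IsUniform q G ∧ Arrows r G H := by
  by_contra hcon
  push_neg at hcon
  have hbad : ∀ N : ℕ, ∃ χ : Finset ℕ → Fin r,
      ∀ c, ¬ IsCopy H (((range N).powersetCard q).filter (fun e => χ e = c)) := by
    intro N
    have hu : IsUniform q ((range N).powersetCard q) :=
      fun e he => (Finset.mem_powersetCard.mp he).2
    have := hcon _ hu
    unfold Arrows at this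
    push_neg at this
    exact this
  choose χN hχN using hbad
  have : Nonempty (Fin r) := ⟨χN 0 ∅⟩
  let U : Ultrafilter ℕ := Filter.hyperfilter ℕ
  have hlim : ∀ s : Finset ℕ, ∃ c : Fin r, {N | χN N s = c} ∈ U := by
    intro s
    by_contra h
    push_neg at h
    have h2 : ∀ c : Fin r, {N | χN N s = c}ᶜ ∈ U := fun c =>
      Ultrafilter.compl_mem_iff_notMem.mpr (h c)
    have h3 : (⋂ c : Fin r, {N | χN N s = c}ᶜ) ∈ U := Filter.iInter_mem.mpr h2
    have h4 : (⋂ c : Fin r, {N | χN N s = c}ᶜ) = ∅ := by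
      ext N
      simp
    rw [h4] at h3
    exact Filter.empty_notMem (U : Filter ℕ) h3
  choose χ hχ using hlim
  obtain ⟨T, _, hTinf, c, hc⟩ := ramseyInf q χ Set.univ Set.infinite_univ
  obtain ⟨t, htT, htc⟩ := hTinf.exists_subset_card_eq (hVerts H).card
  have hcards : Fintype.card ↥(hVerts H : Finset ℕ) = Fintype.card ↥(t : Finset ℕ) := by
    simp [htc]
  let e : ↥(hVerts H : Finset ℕ) ≃ ↥(t : Finset ℕ) := Fintype.equivOfCardEq hcards
  let g : ℕ → ℕ := fun x => if h : x ∈ hVerts H then (e ⟨x, h⟩ : ℕ) else 0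
  have hgmem : ∀ x (h : x ∈ hVerts H), g x ∈ t := by
    intro x h
    simp only [g, dif_pos h]
    exact (e ⟨x, h⟩).2
  have hginj : Set.InjOn g ↑(hVerts H) := by
    intro x hx y hy hxy
    have hx' : x ∈ hVerts H := hx
    have hy' : y ∈ hVerts H := hy
    simp only [g, dif_pos hx', dif_pos hy'] at hxy
    have := e.injective (Subtype.ext hxy)
    exact congrArg Subtype.val this
  have hedge : ∀ e' ∈ H, (e'.image g) ⊆ t ∧ χ (e'.image g) = c := by
    intro e' he'
    have hsub : e' ⊆ hVerts H := fun x hx => Finset.mem_biUnion.mpr ⟨e', he', hx⟩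
    have h1 : e'.image g ⊆ t := by
      intro y hy
      obtain ⟨x, hx, rfl⟩ := Finset.mem_image.mp hy
      exact hgmem x (hsub hx)
    refine ⟨h1, hc _ ?_ ?_⟩
    · exact fun y hy => htT (h1 (Finset.mem_coe.mp hy))
    · rw [Finset.card_image_of_injOn (hginj.mono (Finset.coe_subset.mpr hsub))]
      exact hH e' he'
  set M := t.sup id + 1 with hM
  have htM : ∀ x ∈ t, x < M := fun x hx => Nat.lt_succ_of_le (Finset.le_sup (f := id) hx)
  set B := H.image (fun e' => e'.image g) with hB
  have hA : ({N | M ≤ N} ∩ ⋂ b ∈ B, {N | χN N b = χ b}) ∈ U := by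
    apply Filter.inter_mem
    · apply Filter.hyperfilter_le_cofinite
      rw [Filter.mem_cofinite]
      apply Set.Finite.subset (Set.finite_le_nat M)
      intro x hx
      simp only [Set.mem_compl_iff, Set.mem_setOf_eq, not_le] at hx
      exact Set.mem_setOf_eq ▸ hx.le
    · exact (Filter.biInter_finset_mem B).mpr (fun b _ => hχ b)
  obtain ⟨N, hN⟩ := Ultrafilter.nonempty_of_mem hA
  obtain ⟨hNM, hNb⟩ := hN
  have hNM' : M ≤ N := hNM
  apply hχN N c
  refine ⟨g, hginj, ?_⟩
  intro e' he'
  obtain ⟨h1, h2⟩ := hedge e' he'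
  rw [Finset.mem_filter]
  constructor
  · rw [Finset.mem_powersetCard]
    refine ⟨fun x hx => ?_, ?_⟩
    · exact Finset.mem_range.mpr (lt_of_lt_of_le (htM x (h1 hx)) hNM')
    · have hsub2 : e' ⊆ hVerts H := fun x hx => Finset.mem_biUnion.mpr ⟨e', he', hx⟩
      rw [Finset.card_image_of_injOn (hginj.mono (Finset.coe_subset.mpr hsub2))]
      exact hH e' he'
  · have hbB : e'.image g ∈ B := Finset.mem_image_of_mem _ he'
    have := Set.mem_iInter₂.mp hNb (e'.image g) hbB
    simpa [h2] using this

/-- The key image identity for extending `f` by a new vertex `v` at position `k-1`. -/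
lemma image_aux (k cc v : ℕ) (f : ℕ → ℕ) (hk : 2 ≤ k) (hc : cc ≤ k - 1) :
    ((range k).image (fun j => cc + j)).image
        (fun x => if x = k-1 then v else if x < k-1 then f x else f (x-1))
      = insert v (((range (k-1)).image (fun j => cc + j)).image f) := by
  rw [Finset.image_image, Finset.image_image]
  ext y
  simp only [Finset.mem_image, Finset.mem_insert, Finset.mem_range, Function.comp]
  constructor
  · rintro ⟨j, hj, rfl⟩
    by_cases h1 : cc + j = k - 1
    · rw [if_pos h1]
      exact Or.inl rfl
    · rw [if_neg h1]
      by_cases h2 : cc + j < k - 1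
      · rw [if_pos h2]
        exact Or.inr ⟨j, by omega, rfl⟩
      · rw [if_neg h2]
        refine Or.inr ⟨j - 1, by omega, ?_⟩
        congr 1
        omega
  · rintro (rfl | ⟨j, hj, rfl⟩)
    · exact ⟨k - 1 - cc, by omega, by rw [if_pos (by omega)]⟩
    · by_cases h2 : cc + j < k - 1
      · exact ⟨j, by omega, by rw [if_neg (by omega), if_pos h2]⟩
      · refine ⟨j + 1, by omega, ?_⟩
        rw [if_neg (by omega), if_neg (by omega)]
        congr 1

theorem stmt13 (k r l m : ℕ) (hk : 2 ≤ k) (hr : 2 ≤ r) (hl1 : 1 ≤ l) (hl2 : l ≤ k - 1)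
    (hm1 : 1 ≤ m) (hm2 : m * (k - l) < k) :
    sizeRamsey k r (hPath k l (l + (m + 1) * (k - l))) ≤
      sizeRamsey (k - 1) r (hPath (k - 1) (l - 1) (l - 1 + (m + 1) * (k - l))) := by
  have hdpos : 0 < k - l := by omega
  have hkl : (k - 1) - (l - 1) = k - l := by omega
  -- the paths as pathWithEdges
  have hPeq : hPath k l (l + (m + 1) * (k - l)) = pathWithEdges k l (m + 1) := by
    unfold hPath
    rw [Nat.add_sub_cancel_left, Nat.mul_div_cancel _ hdpos]
  have hP'eq : hPath (k - 1) (l - 1) (l - 1 + (m + 1) * (k - l))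
      = pathWithEdges (k - 1) (l - 1) (m + 1) := by
    unfold hPath
    rw [hkl, Nat.add_sub_cancel_left, Nat.mul_div_cancel _ hdpos]
  have hP'edges : pathWithEdges (k - 1) (l - 1) (m + 1)
      = (range (m + 1)).image (fun i => (range (k - 1)).image (fun j => i * (k - l) + j)) := by
    unfold pathWithEdges
    rw [hkl]
  -- P' is (k-1)-uniform
  have hP'unif : ∀ e ∈ pathWithEdges (k - 1) (l - 1) (m + 1), e.card = k - 1 := by
    intro e he
    rw [hP'edges] at he
    obtain ⟨i, _, rfl⟩ := Finset.mem_image.mp he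
    rw [Finset.card_image_of_injective _ (add_right_injective _), Finset.card_range]
  -- RHS set is nonempty
  obtain ⟨G₀, hG₀u, hG₀a⟩ := exists_arrows_s13 (k - 1) r (pathWithEdges (k - 1) (l - 1) (m + 1)) hP'unif
  have hne : {n | ∃ G' : Finset (Finset ℕ), IsUniform (k-1) G' ∧
      Arrows r G' (hPath (k-1) (l-1) (l - 1 + (m + 1) * (k - l))) ∧ G'.card = n}.Nonempty :=
    ⟨G₀.card, G₀, hG₀u, by rw [hP'eq]; exact hG₀a, rfl⟩
  unfold sizeRamsey
  have hmin := Nat.sInf_mem hne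
  obtain ⟨G', hu', ha', hcard'⟩ := hmin
  rw [hP'eq] at ha'
  -- the new vertex
  set v : ℕ := (hVerts G').sup id + 1 with hv
  have hvbig : ∀ x ∈ hVerts G', x < v := fun x hx =>
    Nat.lt_succ_of_le (Finset.le_sup (f := id) hx)
  have hvnot : ∀ e ∈ G', v ∉ e := by
    intro e he hvin
    exact absurd (hvbig v (Finset.mem_biUnion.mpr ⟨e, he, hvin⟩)) (lt_irrefl v)
  apply Nat.sInf_le
  refine ⟨G'.image (fun e => insert v e), ?_, ?_, ?_⟩
  · -- uniform
    intro e' he'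
    obtain ⟨e, he, rfl⟩ := Finset.mem_image.mp he'
    rw [Finset.card_insert_of_notMem (hvnot e he), hu' e he]
    omega
  · -- Arrows
    rw [hPeq]
    intro χ
    obtain ⟨c, f, hfinj, hfmem⟩ := ha' (fun e => χ (insert v e))
    have hik : ∀ i, i < m + 1 → i * (k - l) ≤ k - 1 := by
      intro i hi
      calc i * (k - l) ≤ m * (k - l) := Nat.mul_le_mul_right _ (by omega)
        _ ≤ k - 1 := by omega
    -- membership of an edge of P' in the filtered G', and consequences
    have hE'mem : ∀ i, i < m + 1 →
        ((range (k-1)).image (fun j => i * (k - l) + j)).image f ∈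
          G'.filter (fun e => χ (insert v e) = c) := by
      intro i hi
      apply hfmem
      rw [hP'edges]
      exact Finset.mem_image_of_mem _ (Finset.mem_range.mpr hi)
    have hfval : ∀ i, i < m + 1 → ∀ z ∈ (range (k-1)).image (fun j => i * (k - l) + j),
        f z ∈ hVerts G' := by
      intro i hi z hz
      have h1 := (Finset.mem_filter.mp (hE'mem i hi)).1
      exact Finset.mem_biUnion.mpr ⟨_, h1, Finset.mem_image_of_mem f hz⟩
    refine ⟨c, fun x => if x = k-1 then v else if x < k-1 then f x else f (x-1), ?_, ?_⟩
    · -- InjOn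
      have hσmem : ∀ x i, i < m + 1 → x ∈ (range k).image (fun j => i * (k - l) + j) →
          x ≠ k - 1 →
          (if x < k - 1 then x else x - 1) ∈ (range (k-1)).image (fun j => i * (k - l) + j) := by
        intro x i hi hx hne
        obtain ⟨j, hj, rfl⟩ := Finset.mem_image.mp hx
        rw [Finset.mem_range] at hj
        have hik' := hik i hi
        by_cases h2 : i * (k - l) + j < k - 1
        · rw [if_pos h2]
          exact Finset.mem_image.mpr ⟨j, Finset.mem_range.mpr (by omega), rfl⟩
        · rw [if_neg h2]
          exact Finset.mem_image.mpr ⟨j - 1, Finset.mem_range.mpr (by omega), by omega⟩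
      have hvert : ∀ x, x ∈ hVerts (pathWithEdges k l (m + 1)) →
          ∃ i, i < m + 1 ∧ x ∈ (range k).image (fun j => i * (k - l) + j) := by
        intro x hx
        obtain ⟨E, hE, hxE⟩ := Finset.mem_biUnion.mp hx
        unfold pathWithEdges at hE
        obtain ⟨i, hi, rfl⟩ := Finset.mem_image.mp hE
        exact ⟨i, Finset.mem_range.mp hi, hxE⟩
      have hvP' : ∀ x, x ∈ hVerts (pathWithEdges k l (m + 1)) → x ≠ k - 1 →
          (if x < k - 1 then x else x - 1) ∈ ↑(hVerts (pathWithEdges (k-1) (l-1) (m + 1))) ∧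
          f (if x < k - 1 then x else x - 1) ∈ hVerts G' := by
        intro x hx hne
        obtain ⟨i, hi, hxi⟩ := hvert x hx
        have hm' := hσmem x i hi hxi hne
        refine ⟨?_, hfval i hi _ hm'⟩
        rw [hP'edges]
        exact Finset.mem_coe.mpr (Finset.mem_biUnion.mpr
          ⟨_, Finset.mem_image_of_mem _ (Finset.mem_range.mpr hi), hm'⟩)
      intro x hx y hy hxy0
      have hxy : (if x = k-1 then v else if x < k-1 then f x else f (x-1))
          = (if y = k-1 then v else if y < k-1 then f y else f (y-1)) := hxy0
      by_cases hxk : x = k - 1 <;> by_cases hyk : y = k - 1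
      · rw [hxk, hyk]
      · exfalso
        rw [if_pos hxk, if_neg hyk] at hxy
        have h2 := (hvP' y (Finset.mem_coe.mp hy) hyk).2
        by_cases h3 : y < k - 1
        · rw [if_pos h3] at hxy h2
          exact absurd (hvbig _ h2) (by omega)
        · rw [if_neg h3] at hxy h2
          exact absurd (hvbig _ h2) (by omega)
      · exfalso
        rw [if_neg hxk, if_pos hyk] at hxy
        have h2 := (hvP' x (Finset.mem_coe.mp hx) hxk).2
        by_cases h3 : x < k - 1
        · rw [if_pos h3] at hxy h2
          exact absurd (hvbig _ h2) (by omega)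
        · rw [if_neg h3] at hxy h2
          exact absurd (hvbig _ h2) (by omega)
      · rw [if_neg hxk, if_neg hyk, ← apply_ite f, ← apply_ite f] at hxy
        have h1 := (hvP' x (Finset.mem_coe.mp hx) hxk).1
        have h2 := (hvP' y (Finset.mem_coe.mp hy) hyk).1
        have h3 : (if x < k - 1 then x else x - 1) = (if y < k - 1 then y else y - 1) :=
          hfinj h1 h2 hxy
        split_ifs at h3 <;> omega
    · -- edges map into the filtered graph
      intro E hE
      unfold pathWithEdges at hE
      obtain ⟨i, hi, rfl⟩ := Finset.mem_image.mp hE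
      rw [Finset.mem_range] at hi
      rw [image_aux k (i * (k - l)) v f hk (hik i hi)]
      have h1 := Finset.mem_filter.mp (hE'mem i hi)
      rw [Finset.mem_filter]
      exact ⟨Finset.mem_image_of_mem _ h1.1, h1.2⟩
  · -- cardinality
    rw [Finset.card_image_of_injOn]
    · exact hcard'
    · intro e he f' hf' h
      have h' : insert v e = insert v f' := h
      have h2 : Finset.erase (insert v e) v = Finset.erase (insert v f') v := by rw [h']
      rwa [Finset.erase_insert (hvnot e (Finset.mem_coe.mp he)),
        Finset.erase_insert (hvnot f' (Finset.mem_coe.mp hf'))] at h2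
end
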